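/- arXiv:1912.00168 — 5 statements merged into one kernel-verified Lean document; each statement's English description precedes it below -/
import Mathlib

section
/- Under the flocking dynamics, at any time t ≥ 0 with V(t) > 0, the function V is differentiable at t and its derivative satisfies −(K/σ^{2β})·k·V(t) + B(t) ≤ V'(t) ≤ −(K·k/(σ² + 2·X(t)²)^β)·V(t) + B(t), where B(t) = Σ_{1≤j<i≤k} (f0(‖x_i(t) − x_j(t)‖²) − f1(‖x_i(t) − x_j(t)‖²))·⟨x_i(t) − x_j(t), v_i(t) − v_j(t)⟩. -/
open scoped RealInnerProductSpace


lemma aux_sym {k : ℕ} {E : Type*} [NormedAddCommGroup E] [InnerProductSpace ℝ E]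
    (c : Fin k → Fin k → ℝ) (hc : ∀ i j, c i j = c j i) (w u : Fin k → E) :
    ∑ i : Fin k, ∑ j : Fin k, c i j * ⟪w i, u j - u i⟫ =
      -(1/2) * ∑ i : Fin k, ∑ j : Fin k, c i j * ⟪w i - w j, u i - u j⟫ := by
  have h1 : ∑ i : Fin k, ∑ j : Fin k, c i j * ⟪w i, u j - u i⟫
      = ∑ i : Fin k, ∑ j : Fin k, c i j * ⟪w j, u i - u j⟫ := by
    rw [Finset.sum_comm]
    refine Finset.sum_congr rfl fun i _ => Finset.sum_congr rfl fun j _ => ?_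
    rw [hc]
  have h2 : ∀ i j : Fin k, c i j * ⟪w i, u j - u i⟫ + c i j * ⟪w j, u i - u j⟫
      = -(c i j * ⟪w i - w j, u i - u j⟫) := by
    intro i j
    simp only [inner_sub_left, inner_sub_right]
    ring
  have h3 : (∑ i : Fin k, ∑ j : Fin k, c i j * ⟪w i, u j - u i⟫)
      + ∑ i : Fin k, ∑ j : Fin k, c i j * ⟪w j, u i - u j⟫
      = -∑ i : Fin k, ∑ j : Fin k, c i j * ⟪w i - w j, u i - u j⟫ := by
    rw [← Finset.sum_neg_distrib, ← Finset.sum_add_distrib]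
    refine Finset.sum_congr rfl fun i _ => ?_
    rw [← Finset.sum_neg_distrib, ← Finset.sum_add_distrib]
    exact Finset.sum_congr rfl fun j _ => h2 i j
  rw [h1] at h3 ⊢
  linarith

lemma aux_offdiag {k : ℕ} (F : Fin k → Fin k → ℝ) (hsym : ∀ i j, F i j = F j i)
    (hdiag : ∀ i, F i i = 0) :
    ∑ i : Fin k, ∑ j : Fin k, F i j
      = 2 * ∑ i : Fin k, ∑ j ∈ Finset.univ.filter (fun j => j < i), F i j := by
  have key : ∀ i j : Fin k, F i j =
      (if j < i then F i j else 0) + (if i < j then F i j else 0) := by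
    intro i j
    rcases lt_trichotomy i j with h|h|h
    · simp [h, not_lt_of_gt h]
    · subst h; simp [hdiag]
    · simp [h, not_lt_of_gt h]
  have hswap : ∑ i : Fin k, ∑ j : Fin k, (if i < j then F i j else 0)
      = ∑ i : Fin k, ∑ j : Fin k, (if j < i then F i j else 0) := by
    rw [Finset.sum_comm]
    refine Finset.sum_congr rfl fun i _ => Finset.sum_congr rfl fun j _ => ?_
    by_cases h : j < i <;> simp [h, hsym]
  calc ∑ i : Fin k, ∑ j : Fin k, F i j
      = ∑ i : Fin k, ∑ j : Fin k,
        ((if j < i then F i j else 0) + (if i < j then F i j else 0)) :=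
        Finset.sum_congr rfl fun i _ => Finset.sum_congr rfl fun j _ => key i j
    _ = (∑ i : Fin k, ∑ j : Fin k, if j < i then F i j else 0)
        + ∑ i : Fin k, ∑ j : Fin k, if i < j then F i j else 0 := by
        simp [Finset.sum_add_distrib]
    _ = 2 * ∑ i : Fin k, ∑ j : Fin k, if j < i then F i j else 0 := by rw [hswap]; ring
    _ = _ := by
        congr 1
        exact Finset.sum_congr rfl fun i _ => (Finset.sum_filter _ _).symm

lemma aux_norm_id {k : ℕ} {E : Type*} [NormedAddCommGroup E] [InnerProductSpace ℝ E]
    (w : Fin k → E) (h0 : ∑ i : Fin k, w i = 0) :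
    ∑ i : Fin k, ∑ j : Fin k, ‖w i - w j‖^2 = 2 * k * ∑ i : Fin k, ‖w i‖^2 := by
  have hinner : ∑ i : Fin k, ∑ j : Fin k, ⟪w i, w j⟫ = 0 := by
    have : ∑ i : Fin k, ∑ j : Fin k, ⟪w i, w j⟫ = ⟪∑ i : Fin k, w i, ∑ j : Fin k, w j⟫ := by
      rw [sum_inner]
      exact Finset.sum_congr rfl fun i _ => (inner_sum _ _ _).symm
    rw [this, h0, inner_zero_left]
  calc ∑ i : Fin k, ∑ j : Fin k, ‖w i - w j‖^2
      = ∑ i : Fin k, ((k:ℝ) * ‖w i‖^2 - 2 * (∑ j : Fin k, ⟪w i, w j⟫)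
          + ∑ j : Fin k, ‖w j‖^2) := by
        refine Finset.sum_congr rfl fun i _ => ?_
        rw [Finset.sum_congr rfl fun j _ => norm_sub_sq_real (w i) (w j)]
        simp [Finset.sum_add_distrib, Finset.sum_sub_distrib, Finset.sum_const,
          Finset.card_univ, Finset.mul_sum]
    _ = (∑ i : Fin k, (k:ℝ) * ‖w i‖^2) - 2 * (∑ i : Fin k, ∑ j : Fin k, ⟪w i, w j⟫)
        + ∑ i : Fin k, ∑ j : Fin k, ‖w j‖^2 := by
        rw [Finset.sum_add_distrib, Finset.sum_sub_distrib, Finset.mul_sum]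
    _ = 2 * k * ∑ i : Fin k, ‖w i‖^2 := by
        rw [hinner]
        have h4 : ∑ _i : Fin k, ∑ j : Fin k, ‖w j‖^2 = (k:ℝ) * ∑ j : Fin k, ‖w j‖^2 := by
          simp [Finset.sum_const, Finset.card_univ]
        rw [h4, ← Finset.mul_sum]
        ring

lemma aux_pairbound {E : Type*} [NormedAddCommGroup E] (p q m : E) (s : ℝ)
    (hs : ‖p - m‖^2 + ‖q - m‖^2 ≤ s) : ‖p - q‖^2 ≤ 2*s := by
  have htri : ‖p - q‖ ≤ ‖p - m‖ + ‖q - m‖ := by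
    have he : p - q = (p - m) - (q - m) := by abel
    rw [he]; exact norm_sub_le _ _
  have h1 : ‖p - q‖^2 ≤ (‖p - m‖ + ‖q - m‖)^2 :=
    pow_le_pow_left₀ (norm_nonneg _) htri 2
  nlinarith [sq_nonneg (‖p - m‖ - ‖q - m‖)]

set_option maxHeartbeats 1600000 in
theorem stmt_5
    {n k : ℕ} (hn : 1 ≤ n) (hk : 2 ≤ k)
    (K σ β d0 d1 : ℝ) (θ : ℕ)
    (hK : 0 < K) (hσ : 0 < σ) (hβ0 : 0 < β) (hβ : β ≤ 1 / 2)
    (hd0 : 0 < d0) (hd01 : d0 < d1) (hθ2 : 2 ≤ θ) (hθeven : Even θ)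
    (x v : Fin k → ℝ → EuclideanSpace ℝ (Fin n))
    (f0 f1 : ℝ → ℝ)
    (hf0 : ∀ r, f0 r = ((r - d0) ^ θ)⁻¹)
    (hf1 : ∀ r, f1 r = ((r - d1) ^ θ)⁻¹)
    (a : Fin k → Fin k → ℝ → ℝ)
    (ha : ∀ i j t, a i j t = K / (σ ^ 2 + ‖x i t - x j t‖ ^ 2) ^ β)
    (Λ : ℝ → ℝ)
    (hΛ : ∀ t, Λ t = Real.sqrt ((1 / (k : ℝ)) *
      ∑ i : Fin k, ∑ j ∈ Finset.univ.filter (fun j => j < i), ‖v i t - v j t‖ ^ 2))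
    (hx : ∀ i, ∀ t : ℝ, 0 ≤ t → HasDerivAt (x i) (v i t) t)
    (hv : ∀ i, ∀ t : ℝ, 0 ≤ t → HasDerivAt (v i)
      ((∑ j : Fin k, a i j t • (v j t - v i t)) +
        Λ t • (∑ j ∈ Finset.univ.filter (fun j => j ≠ i),
          f0 (‖x i t - x j t‖ ^ 2) • (x i t - x j t)) +
        Λ t • (∑ j ∈ Finset.univ.filter (fun j => j ≠ i),
          f1 (‖x i t - x j t‖ ^ 2) • (x j t - x i t))) t)
    (hinit : ∀ i j : Fin k, i ≠ j →
      d0 < ‖x i 0 - x j 0‖ ^ 2 ∧ ‖x i 0 - x j 0‖ ^ 2 < d1)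
    (vbar : ℝ → EuclideanSpace ℝ (Fin n))
    (hvbar : ∀ t, vbar t = (k : ℝ)⁻¹ • ∑ i : Fin k, v i t)
    (V : ℝ → ℝ)
    (hV : ∀ t, V t = Real.sqrt (∑ i : Fin k, ‖v i t - vbar t‖ ^ 2))
    (xbar : ℝ → EuclideanSpace ℝ (Fin n))
    (hxbar : ∀ t, xbar t = (k : ℝ)⁻¹ • ∑ i : Fin k, x i t)
    (X : ℝ → ℝ)
    (hX : ∀ t, X t = Real.sqrt (∑ i : Fin k, ‖x i t - xbar t‖ ^ 2))
    (B : ℝ → ℝ)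
    (hB : ∀ t, B t = ∑ i : Fin k, ∑ j ∈ Finset.univ.filter (fun j => j < i),
      (f0 (‖x i t - x j t‖ ^ 2) - f1 (‖x i t - x j t‖ ^ 2)) *
        ⟪x i t - x j t, v i t - v j t⟫)
    :
    ∀ t : ℝ, 0 ≤ t → 0 < V t →
      ∃ D : ℝ, HasDerivAt V D t ∧
        -(K / σ ^ (2 * β)) * (k : ℝ) * V t + B t ≤ D ∧
        D ≤ -(K * (k : ℝ) / (σ ^ 2 + 2 * X t ^ 2) ^ β) * V t + B t := by
  intro t ht hVpos
  have hk0 : (0:ℝ) < k := by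
    have : (0:ℕ) < k := by omega
    exact_mod_cast this
  set A : Fin k → EuclideanSpace ℝ (Fin n) := fun i =>
    (∑ j : Fin k, a i j t • (v j t - v i t)) +
      Λ t • (∑ j ∈ Finset.univ.filter (fun j => j ≠ i),
        f0 (‖x i t - x j t‖ ^ 2) • (x i t - x j t)) +
      Λ t • (∑ j ∈ Finset.univ.filter (fun j => j ≠ i),
        f1 (‖x i t - x j t‖ ^ 2) • (x j t - x i t)) with hAdef
  have hAi : ∀ i, A i =
    (∑ j : Fin k, a i j t • (v j t - v i t)) +
      Λ t • (∑ j ∈ Finset.univ.filter (fun j => j ≠ i),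
        f0 (‖x i t - x j t‖ ^ 2) • (x i t - x j t)) +
      Λ t • (∑ j ∈ Finset.univ.filter (fun j => j ≠ i),
        f1 (‖x i t - x j t‖ ^ 2) • (x j t - x i t)) := fun i => rfl
  have hvA : ∀ i, HasDerivAt (v i) (A i) t := fun i => hv i t ht
  set Ab : EuclideanSpace ℝ (Fin n) := (k:ℝ)⁻¹ • ∑ i : Fin k, A i with hAb
  have hvbar' : HasDerivAt vbar Ab t := by
    have h := (HasDerivAt.fun_sum (u := Finset.univ) (fun i _ => hvA i)).const_smul ((k:ℝ)⁻¹)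
    have he : vbar = fun s => (k:ℝ)⁻¹ • ∑ i : Fin k, v i s := funext hvbar
    rw [he]; exact h
  -- deviation vectors
  have hw0 : ∑ i : Fin k, (v i t - vbar t) = 0 := by
    rw [Finset.sum_sub_distrib, Finset.sum_const, Finset.card_univ, Fintype.card_fin,
      hvbar t, ← Nat.cast_smul_eq_nsmul ℝ, smul_smul,
      mul_inv_cancel₀ (ne_of_gt hk0), one_smul, sub_self]
  set W : ℝ → ℝ := fun s => ∑ i : Fin k, ‖v i s - vbar s‖^2 with hWdef
  set S : ℝ := ∑ i : Fin k, ⟪v i t - vbar t, A i⟫ with hSdef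
  have hWD : HasDerivAt W (2 * S) t := by
    have h1 : HasDerivAt W (∑ i : Fin k,
        (⟪v i t - vbar t, A i - Ab⟫ + ⟪A i - Ab, v i t - vbar t⟫)) t := by
      apply HasDerivAt.fun_sum
      intro i _
      have hdiff : HasDerivAt (fun s => v i s - vbar s) (A i - Ab) t := (hvA i).sub hvbar'
      have h2 := HasDerivAt.inner ℝ hdiff hdiff
      simpa only [real_inner_self_eq_norm_sq] using h2
    convert h1 using 1
    have hz : ∑ i : Fin k, ⟪v i t - vbar t, Ab⟫ = 0 := by
      rw [← sum_inner, hw0, inner_zero_left]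
    have hterm : ∀ i : Fin k,
        ⟪v i t - vbar t, A i - Ab⟫ + ⟪A i - Ab, v i t - vbar t⟫
          = 2 * ⟪v i t - vbar t, A i⟫ - 2 * ⟪v i t - vbar t, Ab⟫ := by
      intro i
      have e1 : ⟪A i - Ab, v i t - vbar t⟫ = ⟪v i t - vbar t, A i - Ab⟫ := real_inner_comm _ _
      rw [e1, inner_sub_right]
      ring
    rw [Finset.sum_congr rfl fun i _ => hterm i, Finset.sum_sub_distrib,
      ← Finset.mul_sum, ← Finset.mul_sum, hz]
    ring
  have hVW : V t = Real.sqrt (W t) := hV t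
  have hWpos : 0 < W t := Real.sqrt_pos.mp (hVW ▸ hVpos)
  have hVD : HasDerivAt V (1/(2*Real.sqrt (W t)) * (2*S)) t := by
    have h := (Real.hasDerivAt_sqrt (ne_of_gt hWpos)).comp t hWD
    have he : V = fun s => Real.sqrt (W s) := funext hV
    rw [he]; exact h
  -- expand S
  have hterm2 : ∀ i : Fin k, ⟪v i t - vbar t, A i⟫ =
      (∑ j : Fin k, a i j t * ⟪v i t - vbar t, v j t - v i t⟫)
      + Λ t * ∑ j : Fin k,
          (f1 (‖x i t - x j t‖^2) - f0 (‖x i t - x j t‖^2)) * ⟪v i t - vbar t, x j t - x i t⟫ := by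
    intro i
    rw [hAi i, inner_add_right, inner_add_right, real_inner_smul_right, real_inner_smul_right,
      inner_sum, inner_sum, inner_sum]
    rw [Finset.sum_congr rfl fun j _ => real_inner_smul_right (v i t - vbar t) (v j t - v i t) (a i j t)]
    have e1 : ∑ j ∈ Finset.univ.filter (fun j => j ≠ i),
        ⟪v i t - vbar t, f0 (‖x i t - x j t‖^2) • (x i t - x j t)⟫
        = ∑ j : Fin k, f0 (‖x i t - x j t‖^2) * ⟪v i t - vbar t, x i t - x j t⟫ := by
      rw [Finset.sum_congr rfl fun j _ => real_inner_smul_right (v i t - vbar t) (x i t - x j t) (f0 (‖x i t - x j t‖^2))]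
      apply Finset.sum_filter_of_ne
      intro j _ hne
      rcases eq_or_ne j i with rfl|h
      · exfalso; apply hne; simp
      · exact h
    have e2 : ∑ j ∈ Finset.univ.filter (fun j => j ≠ i),
        ⟪v i t - vbar t, f1 (‖x i t - x j t‖^2) • (x j t - x i t)⟫
        = ∑ j : Fin k, f1 (‖x i t - x j t‖^2) * ⟪v i t - vbar t, x j t - x i t⟫ := by
      rw [Finset.sum_congr rfl fun j _ => real_inner_smul_right (v i t - vbar t) (x j t - x i t) (f1 (‖x i t - x j t‖^2))]
      apply Finset.sum_filter_of_ne
      intro j _ hne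
      rcases eq_or_ne j i with rfl|h
      · exfalso; apply hne; simp
      · exact h
    rw [e1, e2]
    have hcomb : (∑ j : Fin k, f0 (‖x i t - x j t‖^2) * ⟪v i t - vbar t, x i t - x j t⟫)
        + ∑ j : Fin k, f1 (‖x i t - x j t‖^2) * ⟪v i t - vbar t, x j t - x i t⟫
        = ∑ j : Fin k, (f1 (‖x i t - x j t‖^2) - f0 (‖x i t - x j t‖^2)) * ⟪v i t - vbar t, x j t - x i t⟫ := by
      rw [← Finset.sum_add_distrib]
      refine Finset.sum_congr rfl fun j _ => ?_
      simp only [inner_sub_right]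
      ring
    rw [add_assoc, ← mul_add, hcomb]
  set T : ℝ := ∑ i : Fin k, ∑ j : Fin k, a i j t * ⟪v i t - vbar t, v j t - v i t⟫ with hTdef
  set P : ℝ := ∑ i : Fin k, ∑ j : Fin k,
      (f1 (‖x i t - x j t‖^2) - f0 (‖x i t - x j t‖^2)) * ⟪v i t - vbar t, x j t - x i t⟫ with hPdef
  have hS2 : S = T + Λ t * P := by
    rw [hSdef, Finset.sum_congr rfl fun i _ => hterm2 i, Finset.sum_add_distrib, ← Finset.mul_sum]
  set Q : ℝ := ∑ i : Fin k, ∑ j : Fin k, a i j t * ‖v i t - v j t‖^2 with hQdef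
  have hsymA : ∀ i j : Fin k, a i j t = a j i t := by
    intro i j; rw [ha, ha, norm_sub_rev]
  have hT' : T = -(1/2) * Q := by
    rw [hTdef, aux_sym (fun i j => a i j t) hsymA (fun i => v i t - vbar t) (fun j => v j t), hQdef]
    congr 1
    refine Finset.sum_congr rfl fun i _ => Finset.sum_congr rfl fun j _ => ?_
    rw [sub_sub_sub_cancel_right, real_inner_self_eq_norm_sq]
  -- P = B t
  have hP' : P = B t := by
    have hcsym : ∀ i j : Fin k, (f1 (‖x i t - x j t‖^2) - f0 (‖x i t - x j t‖^2))
        = (f1 (‖x j t - x i t‖^2) - f0 (‖x j t - x i t‖^2)) := by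
      intro i j; rw [norm_sub_rev]
    have h1 := aux_sym (fun i j => f1 (‖x i t - x j t‖^2) - f0 (‖x i t - x j t‖^2)) hcsym
      (fun i => v i t - vbar t) (fun j => x j t)
    have hFsym : ∀ i j : Fin k, (f0 (‖x i t - x j t‖^2) - f1 (‖x i t - x j t‖^2)) *
        ⟪x i t - x j t, v i t - v j t⟫ = (f0 (‖x j t - x i t‖^2) - f1 (‖x j t - x i t‖^2)) *
        ⟪x j t - x i t, v j t - v i t⟫ := by
      intro i j
      rw [norm_sub_rev, show x j t - x i t = -(x i t - x j t) from (neg_sub _ _).symm,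
        show v j t - v i t = -(v i t - v j t) from (neg_sub _ _).symm, inner_neg_neg]
    have hFdiag : ∀ i : Fin k, (f0 (‖x i t - x i t‖^2) - f1 (‖x i t - x i t‖^2)) *
        ⟪x i t - x i t, v i t - v i t⟫ = 0 := by
      intro i; simp
    have h2 := aux_offdiag (fun i j => (f0 (‖x i t - x j t‖^2) - f1 (‖x i t - x j t‖^2)) *
        ⟪x i t - x j t, v i t - v j t⟫) (fun i j => hFsym i j) hFdiag
    have h3 : ∑ i : Fin k, ∑ j : Fin k,
        (f1 (‖x i t - x j t‖^2) - f0 (‖x i t - x j t‖^2)) *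
          ⟪(v i t - vbar t) - (v j t - vbar t), x i t - x j t⟫
        = -∑ i : Fin k, ∑ j : Fin k, (f0 (‖x i t - x j t‖^2) - f1 (‖x i t - x j t‖^2)) *
          ⟪x i t - x j t, v i t - v j t⟫ := by
      rw [← Finset.sum_neg_distrib]
      refine Finset.sum_congr rfl fun i _ => ?_
      rw [← Finset.sum_neg_distrib]
      refine Finset.sum_congr rfl fun j _ => ?_
      rw [sub_sub_sub_cancel_right, real_inner_comm]
      ring
    rw [hPdef, h1, h3, h2, hB t]
    ring
  -- Λ t = V t
  have hQ'eq : ∑ i : Fin k, ∑ j : Fin k, ‖v i t - v j t‖^2 = 2 * k * W t := by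
    have h3 := aux_norm_id (fun i => v i t - vbar t) hw0
    have h4 : ∑ i : Fin k, ∑ j : Fin k, ‖v i t - v j t‖^2
        = ∑ i : Fin k, ∑ j : Fin k, ‖(v i t - vbar t) - (v j t - vbar t)‖^2 := by
      refine Finset.sum_congr rfl fun i _ => Finset.sum_congr rfl fun j _ => ?_
      rw [sub_sub_sub_cancel_right]
    rw [h4, h3]
  have hLam : Λ t = V t := by
    rw [hΛ t, hV t]
    congr 1
    have h2 := aux_offdiag (fun i j => ‖v i t - v j t‖^2)
      (fun i j => by show ‖v i t - v j t‖^2 = ‖v j t - v i t‖^2; rw [norm_sub_rev])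
      (fun i => by show ‖v i t - v i t‖^2 = 0; simp)
    have h5 : (2:ℝ) * ∑ i : Fin k, ∑ j ∈ Finset.univ.filter (fun j => j < i), ‖v i t - v j t‖^2
        = 2 * k * W t := by rw [← h2, hQ'eq]
    have hk' : (k:ℝ) ≠ 0 := ne_of_gt hk0
    have hWt : W t = ∑ i : Fin k, ‖v i t - vbar t‖^2 := rfl
    rw [← hWt]
    field_simp
    linarith
  clear_value A Ab W S T P Q
  -- bounds on a
  have hXsq : X t ^ 2 = ∑ i : Fin k, ‖x i t - xbar t‖^2 := by
    rw [hX t, Real.sq_sqrt (Finset.sum_nonneg fun i _ => sq_nonneg _)]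
  have hbound : ∀ i j : Fin k, ‖x i t - x j t‖^2 ≤ 2 * X t ^ 2 := by
    intro i j
    rcases eq_or_ne i j with rfl|hij
    · simp only [sub_self, norm_zero]
      nlinarith [sq_nonneg (X t)]
    · have hi : ‖x i t - xbar t‖^2 + ‖x j t - xbar t‖^2 ≤ ∑ l : Fin k, ‖x l t - xbar t‖^2 := by
        have hsub := Finset.sum_le_sum_of_subset_of_nonneg
          (Finset.subset_univ ({i, j} : Finset (Fin k)))
          (fun l _ _ => sq_nonneg ‖x l t - xbar t‖)
        rwa [Finset.sum_pair hij] at hsub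
      rw [hXsq]
      exact aux_pairbound _ _ _ _ hi
  have hden1 : (0:ℝ) < (σ^2)^β := Real.rpow_pos_of_pos (by positivity) β
  have hden2 : (0:ℝ) < (σ^2 + 2 * X t ^ 2)^β :=
    Real.rpow_pos_of_pos (by nlinarith [sq_nonneg (X t)]) β
  have ha_hi : ∀ i j : Fin k, a i j t ≤ K / (σ^2)^β := by
    intro i j
    rw [ha]
    have hd : (0:ℝ) < (σ^2 + ‖x i t - x j t‖^2)^β :=
      Real.rpow_pos_of_pos (by nlinarith [sq_nonneg ‖x i t - x j t‖]) β
    have m1 : (σ^2)^β ≤ (σ^2 + ‖x i t - x j t‖^2)^β :=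
      Real.rpow_le_rpow (by positivity) (by nlinarith [sq_nonneg ‖x i t - x j t‖]) hβ0.le
    rw [div_le_div_iff₀ hd hden1]
    nlinarith
  have ha_lo : ∀ i j : Fin k, K / (σ^2 + 2 * X t ^ 2)^β ≤ a i j t := by
    intro i j
    rw [ha]
    have hd : (0:ℝ) < (σ^2 + ‖x i t - x j t‖^2)^β :=
      Real.rpow_pos_of_pos (by nlinarith [sq_nonneg ‖x i t - x j t‖]) β
    have m2 : (σ^2 + ‖x i t - x j t‖^2)^β ≤ (σ^2 + 2 * X t ^ 2)^β :=
      Real.rpow_le_rpow (by nlinarith [sq_nonneg ‖x i t - x j t‖]) (by nlinarith [hbound i j]) hβ0.le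
    rw [div_le_div_iff₀ hden2 hd]
    nlinarith
  have hQ_hi : Q ≤ K / (σ^2)^β * (2 * k * W t) := by
    rw [← hQ'eq, hQdef, Finset.mul_sum]
    refine Finset.sum_le_sum fun i _ => ?_
    rw [Finset.mul_sum]
    exact Finset.sum_le_sum fun j _ =>
      mul_le_mul_of_nonneg_right (ha_hi i j) (sq_nonneg _)
  have hQ_lo : K / (σ^2 + 2 * X t ^ 2)^β * (2 * k * W t) ≤ Q := by
    rw [← hQ'eq, hQdef, Finset.mul_sum]
    refine Finset.sum_le_sum fun i _ => ?_
    rw [Finset.mul_sum]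
    exact Finset.sum_le_sum fun j _ =>
      mul_le_mul_of_nonneg_right (ha_lo i j) (sq_nonneg _)
  -- final assembly
  have hS_eq : S = -(1/2) * Q + V t * B t := by rw [hS2, hT', hP', hLam]
  have hWV : W t = V t ^ 2 := by rw [hVW, Real.sq_sqrt hWpos.le]
  have hD : 1/(2*Real.sqrt (W t)) * (2*S) = S / V t := by
    rw [← hVW]
    field_simp
  have hsig : σ ^ (2*β) = ((σ:ℝ)^2)^β := by
    have hc := Real.rpow_natCast σ 2
    rw [← hc, ← Real.rpow_mul hσ.le]
    norm_num
  refine ⟨_, hVD, ?_, ?_⟩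
  · rw [hD, hsig, le_div_iff₀ hVpos, hS_eq]
    rw [hWV] at hQ_hi
    nlinarith [hQ_hi, hVpos]
  · have hc : K * (k:ℝ) / (σ^2 + 2 * X t ^ 2)^β = K / (σ^2 + 2 * X t ^ 2)^β * k := by
      ring
    rw [hD, div_le_iff₀ hVpos, hS_eq, hc]
    rw [hWV] at hQ_lo
    nlinarith [hQ_lo, hVpos]
end

section
/- Fix δ with 0 < δ < d1 − d0 and define the energy E(t) = V(t) + (1/2)·Σ_{1≤j<i≤k} ∫_{‖x_i(t) − x_j(t)‖²}^{d1 − δ} (f0(r) − f1(r)) dr. Under the flocking dynamics, at any time t ≥ 0 at which V(t) > 0 and d0 < ‖x_i(t) − x_j(t)‖² < d1 for all i ≠ j, the function E is differentiable at t and E'(t) ≤ −(K·k/(σ² + 2·X(t)²)^β)·V(t) ≤ 0. -/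
open scoped RealInnerProductSpace

section auxx
variable {E : Type*} [NormedAddCommGroup E] [InnerProductSpace ℝ E]

lemma aux_symmetrize {k : ℕ} (h : Fin k → Fin k → ℝ) :
    ∑ i, ∑ j, h i j = (1/2) * ∑ i, ∑ j, (h i j + h j i) := by
  have h1 : ∑ i : Fin k, ∑ j : Fin k, h j i = ∑ i : Fin k, ∑ j : Fin k, h i j :=
    Finset.sum_comm
  simp only [Finset.sum_add_distrib, h1]
  ring

lemma aux_pairs {k : ℕ} (h : Fin k → Fin k → ℝ) (hsymm : ∀ i j, h i j = h j i)
    (hdiag : ∀ i, h i i = 0) :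
    ∑ i, ∑ j, h i j =
      2 * ∑ i, ∑ j ∈ Finset.univ.filter (fun j => j < i), h i j := by
  have hsplit : ∀ i : Fin k, ∑ j, h i j =
      (∑ j ∈ Finset.univ.filter (fun j => j < i), h i j) +
      ∑ j ∈ Finset.univ.filter (fun j => i < j), h i j := by
    intro i
    rw [← Finset.sum_filter_add_sum_filter_not Finset.univ (fun j => j < i)]
    congr 1
    have : Finset.univ.filter (fun j : Fin k => ¬ j < i) =
        insert i (Finset.univ.filter (fun j => i < j)) := by
      ext j
      simp only [Finset.mem_filter, Finset.mem_univ, true_and, Finset.mem_insert, not_lt]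
      constructor
      · intro hij
        rcases eq_or_lt_of_le hij with h' | h'
        · exact Or.inl h'.symm
        · exact Or.inr h'
      · rintro (rfl | h')
        · exact le_refl _
        · exact le_of_lt h'
    rw [this, Finset.sum_insert (by simp), hdiag, zero_add]
  have hswap : ∑ i : Fin k, ∑ j ∈ Finset.univ.filter (fun j => i < j), h i j =
      ∑ i : Fin k, ∑ j ∈ Finset.univ.filter (fun j => j < i), h i j := by
    rw [Finset.sum_comm' (s' := fun j => Finset.univ.filter (fun i => i < j))
      (t' := Finset.univ) (by intro i j; simp)]
    exact Finset.sum_congr rfl fun i _ => Finset.sum_congr rfl fun j _ => hsymm j i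
  calc ∑ i, ∑ j, h i j
      = (∑ i : Fin k, ∑ j ∈ Finset.univ.filter (fun j => j < i), h i j) +
        ∑ i : Fin k, ∑ j ∈ Finset.univ.filter (fun j => i < j), h i j := by
        rw [← Finset.sum_add_distrib]; exact Finset.sum_congr rfl fun i _ => hsplit i
    _ = 2 * ∑ i : Fin k, ∑ j ∈ Finset.univ.filter (fun j => j < i), h i j := by
        rw [hswap]; ring

lemma aux_antisym {k : ℕ} (c : Fin k → Fin k → ℝ) (y : Fin k → E)
    (hc : ∀ i j, c i j = c j i) :
    ∑ i, ∑ j, c i j • (y j - y i) = (0 : E) := by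
  have hswap : ∑ i : Fin k, ∑ j : Fin k, c i j • (y j - y i) =
      ∑ i : Fin k, ∑ j : Fin k, c j i • (y i - y j) := Finset.sum_comm
  have h2 : (∑ i : Fin k, ∑ j : Fin k, c i j • (y j - y i)) +
      (∑ i : Fin k, ∑ j : Fin k, c i j • (y j - y i)) = 0 := by
    nth_rewrite 2 [hswap]
    rw [← Finset.sum_add_distrib]
    apply Finset.sum_eq_zero; intro i _
    rw [← Finset.sum_add_distrib]
    apply Finset.sum_eq_zero; intro j _
    rw [hc j i]
    module
  have h3 : (∑ i : Fin k, ∑ j : Fin k, c i j • (y j - y i)) =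
      (2:ℝ)⁻¹ • ((∑ i : Fin k, ∑ j : Fin k, c i j • (y j - y i)) +
        (∑ i : Fin k, ∑ j : Fin k, c i j • (y j - y i))) := by module
  rw [h3, h2, smul_zero]

lemma aux_inner1 (p q : E) : ⟪p, q - p⟫ + ⟪q, p - q⟫ = -‖p - q‖^2 := by
  have h := real_inner_self_eq_norm_sq (p - q)
  simp only [inner_sub_left, inner_sub_right] at h ⊢
  rw [real_inner_comm q p] at h ⊢
  linarith

lemma aux_inner2 (p q c d : E) : ⟪p, c - d⟫ + ⟪q, d - c⟫ = ⟪p - q, c - d⟫ := by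
  simp only [inner_sub_left, inner_sub_right]; ring

lemma aux_variance {k : ℕ} (u : Fin k → E) (hu : ∑ i, u i = 0) :
    ∑ i, ∑ j, ‖u i - u j‖^2 = 2 * k * ∑ i, ‖u i‖^2 := by
  have h : ∀ i j : Fin k, ‖u i - u j‖^2 = ‖u i‖^2 - 2 * ⟪u i, u j⟫ + ‖u j‖^2 :=
    fun i j => norm_sub_sq_real _ _
  calc ∑ i, ∑ j, ‖u i - u j‖^2
      = ∑ i, ∑ j, (‖u i‖^2 - 2 * ⟪u i, u j⟫ + ‖u j‖^2) :=
        Finset.sum_congr rfl fun i _ => Finset.sum_congr rfl fun j _ => h i j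
    _ = 2 * k * ∑ i, ‖u i‖^2 := by
        have hinner : ∑ i : Fin k, ∑ j : Fin k, ⟪u i, u j⟫ = 0 := by
          simp only [← inner_sum, ← sum_inner, hu, inner_zero_left]
        simp only [Finset.sum_add_distrib, Finset.sum_sub_distrib, Finset.sum_const,
          Finset.card_univ, Fintype.card_fin, ← Finset.mul_sum, hinner, nsmul_eq_mul]
        ring

lemma aux_sq_bound (p q : E) : ‖p - q‖^2 ≤ 2*‖p‖^2 + 2*‖q‖^2 := by
  have h := norm_sub_le p q
  have h2 : ‖p - q‖^2 ≤ (‖p‖ + ‖q‖)^2 := by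
    apply pow_le_pow_left₀ (norm_nonneg _) h
  nlinarith [sq_nonneg (‖p‖ - ‖q‖)]

end auxx

set_option maxHeartbeats 1000000 in
theorem stmt_6
    {n k : ℕ} (hn : 1 ≤ n) (hk : 2 ≤ k)
    (K σ β d0 d1 : ℝ) (θ : ℕ)
    (hK : 0 < K) (hσ : 0 < σ) (hβ0 : 0 < β) (hβ : β ≤ 1 / 2)
    (hd0 : 0 < d0) (hd01 : d0 < d1) (hθ2 : 2 ≤ θ) (hθeven : Even θ)
    (x v : Fin k → ℝ → EuclideanSpace ℝ (Fin n))
    (f0 f1 : ℝ → ℝ)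
    (hf0 : ∀ r, f0 r = ((r - d0) ^ θ)⁻¹)
    (hf1 : ∀ r, f1 r = ((r - d1) ^ θ)⁻¹)
    (a : Fin k → Fin k → ℝ → ℝ)
    (ha : ∀ i j t, a i j t = K / (σ ^ 2 + ‖x i t - x j t‖ ^ 2) ^ β)
    (Λ : ℝ → ℝ)
    (hΛ : ∀ t, Λ t = Real.sqrt ((1 / (k : ℝ)) *
      ∑ i : Fin k, ∑ j ∈ Finset.univ.filter (fun j => j < i), ‖v i t - v j t‖ ^ 2))
    (hx : ∀ i, ∀ t : ℝ, 0 ≤ t → HasDerivAt (x i) (v i t) t)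
    (hv : ∀ i, ∀ t : ℝ, 0 ≤ t → HasDerivAt (v i)
      ((∑ j : Fin k, a i j t • (v j t - v i t)) +
        Λ t • (∑ j ∈ Finset.univ.filter (fun j => j ≠ i),
          f0 (‖x i t - x j t‖ ^ 2) • (x i t - x j t)) +
        Λ t • (∑ j ∈ Finset.univ.filter (fun j => j ≠ i),
          f1 (‖x i t - x j t‖ ^ 2) • (x j t - x i t))) t)
    (hinit : ∀ i j : Fin k, i ≠ j →
      d0 < ‖x i 0 - x j 0‖ ^ 2 ∧ ‖x i 0 - x j 0‖ ^ 2 < d1)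
    (vbar : ℝ → EuclideanSpace ℝ (Fin n))
    (hvbar : ∀ t, vbar t = (k : ℝ)⁻¹ • ∑ i : Fin k, v i t)
    (V : ℝ → ℝ)
    (hV : ∀ t, V t = Real.sqrt (∑ i : Fin k, ‖v i t - vbar t‖ ^ 2))
    (xbar : ℝ → EuclideanSpace ℝ (Fin n))
    (hxbar : ∀ t, xbar t = (k : ℝ)⁻¹ • ∑ i : Fin k, x i t)
    (X : ℝ → ℝ)
    (hX : ∀ t, X t = Real.sqrt (∑ i : Fin k, ‖x i t - xbar t‖ ^ 2))
    (δ : ℝ) (hδ : 0 < δ) (hδ' : δ < d1 - d0)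
    (En : ℝ → ℝ)
    (hEn : ∀ t, En t = V t + (1 / 2) *
      ∑ i : Fin k, ∑ j ∈ Finset.univ.filter (fun j => j < i),
        ∫ r in (‖x i t - x j t‖ ^ 2)..(d1 - δ), (f0 r - f1 r))
    :
    ∀ t : ℝ, 0 ≤ t → 0 < V t →
      (∀ i j : Fin k, i ≠ j →
        d0 < ‖x i t - x j t‖ ^ 2 ∧ ‖x i t - x j t‖ ^ 2 < d1) →
      ∃ D : ℝ, HasDerivAt En D t ∧
        D ≤ -(K * (k : ℝ) / (σ ^ 2 + 2 * X t ^ 2) ^ β) * V t ∧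
        -(K * (k : ℝ) / (σ ^ 2 + 2 * X t ^ 2) ^ β) * V t ≤ 0 := by
  intro t ht hVpos hsep
  have hk0 : (0:ℝ) < k := by exact_mod_cast Nat.lt_of_lt_of_le (by norm_num) hk
  -- derivatives of the squared distances
  have hxd : ∀ i j : Fin k, HasDerivAt (fun s => x i s - x j s) (v i t - v j t) t :=
    fun i j => (hx i t ht).sub (hx j t ht)
  have hgd : ∀ i j : Fin k, HasDerivAt (fun s => ‖x i s - x j s‖^2)
      (2 * ⟪x i t - x j t, v i t - v j t⟫) t := by
    intro i j
    have h := (hxd i j).inner (𝕜 := ℝ) (hxd i j)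
    simp only [real_inner_self_eq_norm_sq] at h
    refine h.congr_deriv ?_
    rw [real_inner_comm]; ring
  -- velocity derivatives
  obtain ⟨W, hW⟩ : ∃ W : Fin k → EuclideanSpace ℝ (Fin n), W = fun i =>
      (∑ j : Fin k, a i j t • (v j t - v i t)) +
        Λ t • (∑ j ∈ Finset.univ.filter (fun j => j ≠ i),
          f0 (‖x i t - x j t‖ ^ 2) • (x i t - x j t)) +
        Λ t • (∑ j ∈ Finset.univ.filter (fun j => j ≠ i),
          f1 (‖x i t - x j t‖ ^ 2) • (x j t - x i t)) := ⟨_, rfl⟩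
  have hvd : ∀ i : Fin k, HasDerivAt (v i) (W i) t := by
    intro i; rw [hW]; exact hv i t ht
  have hvbard : HasDerivAt vbar ((k:ℝ)⁻¹ • ∑ i : Fin k, W i) t := by
    rw [show vbar = fun s => (k : ℝ)⁻¹ • ∑ i : Fin k, v i s from funext hvbar]
    exact (HasDerivAt.fun_sum fun i _ => hvd i).const_smul ((k : ℝ)⁻¹)
  -- derivative of Q = ∑ ‖v i - vbar‖²
  obtain ⟨Q', hQ'⟩ : ∃ q : ℝ, q = ∑ i : Fin k,
      (⟪v i t - vbar t, W i - (k:ℝ)⁻¹ • ∑ m : Fin k, W m⟫ +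
       ⟪W i - (k:ℝ)⁻¹ • ∑ m : Fin k, W m, v i t - vbar t⟫) := ⟨_, rfl⟩
  have hQd : HasDerivAt (fun s => ∑ i : Fin k, ‖v i s - vbar s‖^2) Q' t := by
    rw [hQ']
    apply HasDerivAt.fun_sum
    intro i _
    have h := ((hvd i).sub hvbard).inner (𝕜 := ℝ) ((hvd i).sub hvbard)
    simp only [real_inner_self_eq_norm_sq] at h
    exact h
  have hQpos : 0 < ∑ i : Fin k, ‖v i t - vbar t‖^2 := by
    have h := hVpos; rw [hV t] at h; exact Real.sqrt_pos.mp h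
  have hVd : HasDerivAt V
      (1/(2 * Real.sqrt (∑ i : Fin k, ‖v i t - vbar t‖^2)) * Q') t := by
    rw [show V = fun s => Real.sqrt (∑ i : Fin k, ‖v i s - vbar s‖ ^ 2) from funext hV]
    exact (Real.hasDerivAt_sqrt (ne_of_gt hQpos)).comp t hQd
  -- integral part derivatives
  have hFc : ContinuousOn (fun r => f0 r - f1 r) (Set.Ioo d0 d1) := by
    rw [show f0 = fun r => ((r - d0) ^ θ)⁻¹ from funext hf0,
        show f1 = fun r => ((r - d1) ^ θ)⁻¹ from funext hf1]
    apply ContinuousOn.sub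
    · exact ContinuousOn.inv₀
        (((continuous_id.sub continuous_const).pow θ).continuousOn)
        (fun r hr => pow_ne_zero _ (sub_ne_zero.mpr (ne_of_gt hr.1)))
    · exact ContinuousOn.inv₀
        (((continuous_id.sub continuous_const).pow θ).continuousOn)
        (fun r hr => pow_ne_zero _ (sub_ne_zero.mpr (ne_of_lt hr.2)))
  have hbmem : d1 - δ ∈ Set.Ioo d0 d1 := ⟨by linarith, by linarith⟩
  have hintd : ∀ i j : Fin k, i ≠ j → HasDerivAt
      (fun s => ∫ r in (‖x i s - x j s‖^2)..(d1-δ), (f0 r - f1 r))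
      (-(f0 (‖x i t - x j t‖^2) - f1 (‖x i t - x j t‖^2)) *
        (2 * ⟪x i t - x j t, v i t - v j t⟫)) t := by
    intro i j hij
    have hmem : ‖x i t - x j t‖^2 ∈ Set.Ioo d0 d1 := ⟨(hsep i j hij).1, (hsep i j hij).2⟩
    have hsub : Set.uIcc (‖x i t - x j t‖^2) (d1-δ) ⊆ Set.Ioo d0 d1 := by
      intro r hr; rw [Set.mem_uIcc] at hr
      obtain ⟨hm1, hm2⟩ := hmem
      obtain ⟨hb1, hb2⟩ := hbmem
      rcases hr with ⟨h1, h2⟩ | ⟨h1, h2⟩ <;> exact ⟨by linarith, by linarith⟩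
    have hInt : IntervalIntegrable (fun r => f0 r - f1 r) MeasureTheory.volume
        (‖x i t - x j t‖^2) (d1-δ) := (hFc.mono hsub).intervalIntegrable
    have houter : HasDerivAt (fun u => ∫ r in u..(d1-δ), (f0 r - f1 r))
        (-(f0 (‖x i t - x j t‖^2) - f1 (‖x i t - x j t‖^2))) (‖x i t - x j t‖^2) :=
      intervalIntegral.integral_hasDerivAt_left hInt
        (hFc.stronglyMeasurableAtFilter isOpen_Ioo _ hmem)
        (hFc.continuousAt (isOpen_Ioo.mem_nhds hmem))
    exact houter.comp t (hgd i j)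
  -- total derivative of the energy
  obtain ⟨D, hD⟩ : ∃ D : ℝ, D =
      1/(2 * Real.sqrt (∑ i : Fin k, ‖v i t - vbar t‖^2)) * Q' +
      (1/2) * (∑ i : Fin k, ∑ j ∈ Finset.univ.filter (fun j => j < i),
        (-(f0 (‖x i t - x j t‖^2) - f1 (‖x i t - x j t‖^2)) *
          (2 * ⟪x i t - x j t, v i t - v j t⟫))) := ⟨_, rfl⟩
  have hEnd : HasDerivAt En D t := by
    rw [show En = fun t => V t + (1 / 2) *
      ∑ i : Fin k, ∑ j ∈ Finset.univ.filter (fun j => j < i),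
        ∫ r in (‖x i t - x j t‖ ^ 2)..(d1 - δ), (f0 r - f1 r) from funext hEn, hD]
    exact hVd.add (HasDerivAt.const_mul _ (HasDerivAt.fun_sum fun i _ =>
      HasDerivAt.fun_sum fun j hj =>
        hintd i j (Ne.symm (ne_of_lt (Finset.mem_filter.mp hj).2))))
  -- abbreviations and symmetry facts
  have hgsymm : ∀ i j : Fin k, ‖x i t - x j t‖ = ‖x j t - x i t‖ :=
    fun i j => norm_sub_rev _ _
  have hasymm : ∀ i j : Fin k, a i j t = a j i t := by
    intro i j; rw [ha, ha, hgsymm]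
  obtain ⟨AA, hAA⟩ : ∃ A : ℝ, A = ∑ i : Fin k, ∑ j : Fin k,
      a i j t * ‖v i t - v j t‖^2 := ⟨_, rfl⟩
  obtain ⟨S0, hS0⟩ : ∃ S : ℝ, S = ∑ i : Fin k, ∑ j : Fin k,
      f0 (‖x i t - x j t‖^2) * ⟪v i t - v j t, x i t - x j t⟫ := ⟨_, rfl⟩
  obtain ⟨S1, hS1⟩ : ∃ S : ℝ, S = ∑ i : Fin k, ∑ j : Fin k,
      f1 (‖x i t - x j t‖^2) * ⟪v i t - v j t, x i t - x j t⟫ := ⟨_, rfl⟩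
  -- sum of deviations is zero
  have h_u0 : ∑ i : Fin k, (v i t - vbar t) = 0 := by
    have h1 : ∑ i : Fin k, (v i t - vbar t) = (∑ i : Fin k, v i t) - (k:ℕ) • vbar t := by
      rw [Finset.sum_sub_distrib, Finset.sum_const, Finset.card_univ, Fintype.card_fin]
    rw [h1, hvbar t, ← Nat.cast_smul_eq_nsmul ℝ, smul_smul,
      mul_inv_cancel₀ (ne_of_gt hk0), one_smul, sub_self]
  -- removing diagonal filters
  have hfil0 : ∀ i : Fin k, ∑ j ∈ Finset.univ.filter (fun j => j ≠ i),
      f0 (‖x i t - x j t‖^2) • (x i t - x j t) =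
      ∑ j : Fin k, f0 (‖x i t - x j t‖^2) • (x i t - x j t) := by
    intro i
    apply Finset.sum_filter_of_ne
    intro j _ hne
    intro hji; apply hne; rw [hji]; simp
  have hfil1 : ∀ i : Fin k, ∑ j ∈ Finset.univ.filter (fun j => j ≠ i),
      f1 (‖x i t - x j t‖^2) • (x j t - x i t) =
      ∑ j : Fin k, f1 (‖x i t - x j t‖^2) • (x j t - x i t) := by
    intro i
    apply Finset.sum_filter_of_ne
    intro j _ hne
    intro hji; apply hne; rw [hji]; simp
  -- total momentum-type sums vanish
  have p1 : ∑ i : Fin k, ∑ j : Fin k, a i j t • (v j t - v i t) = 0 :=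
    aux_antisym (fun i j => a i j t) (fun m => v m t) hasymm
  have p2 : ∑ i : Fin k, ∑ j : Fin k,
      f0 (‖x i t - x j t‖^2) • (x i t - x j t) = 0 := by
    have h := aux_antisym (fun i j => f0 (‖x i t - x j t‖^2)) (fun m => -(x m t))
      (by intro i j
          show f0 (‖x i t - x j t‖^2) = f0 (‖x j t - x i t‖^2)
          rw [hgsymm i j])
    have h2 : ∀ i j : Fin k, f0 (‖x i t - x j t‖^2) • (x i t - x j t) =
        f0 (‖x i t - x j t‖^2) • (-(x j t) - -(x i t)) := by
      intro i j; rw [neg_sub_neg]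
    rw [Finset.sum_congr rfl fun i _ => Finset.sum_congr rfl fun j _ => h2 i j]
    exact h
  have p3 : ∑ i : Fin k, ∑ j : Fin k,
      f1 (‖x i t - x j t‖^2) • (x j t - x i t) = 0 := by
    have h := aux_antisym (fun i j => f1 (‖x i t - x j t‖^2)) (fun m => x m t)
      (by intro i j
          show f1 (‖x i t - x j t‖^2) = f1 (‖x j t - x i t‖^2)
          rw [hgsymm i j])
    exact h
  have h_W0 : ∑ i : Fin k, W i = 0 := by
    simp only [hW]
    rw [Finset.sum_add_distrib, Finset.sum_add_distrib, p1]
    rw [← Finset.smul_sum, ← Finset.smul_sum]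
    rw [Finset.sum_congr rfl (fun i _ => hfil0 i), Finset.sum_congr rfl (fun i _ => hfil1 i)]
    rw [p2, p3]
    simp
  -- expansion of ⟪v i, W i⟫
  have hterm : ∀ i : Fin k, ⟪v i t, W i⟫ =
      (∑ j : Fin k, a i j t * ⟪v i t, v j t - v i t⟫) +
      Λ t * (∑ j : Fin k, f0 (‖x i t - x j t‖^2) * ⟪v i t, x i t - x j t⟫) +
      Λ t * (∑ j : Fin k, f1 (‖x i t - x j t‖^2) * ⟪v i t, x j t - x i t⟫) := by
    intro i
    simp only [hW]
    rw [inner_add_right, inner_add_right, real_inner_smul_right, real_inner_smul_right,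
      hfil0 i, hfil1 i, inner_sum, inner_sum, inner_sum]
    simp only [real_inner_smul_right]
  -- symmetrization identities
  have hTA : ∑ i : Fin k, ∑ j : Fin k, a i j t * ⟪v i t, v j t - v i t⟫
      = -(1/2) * AA := by
    rw [aux_symmetrize]
    have h : ∀ i j : Fin k, (a i j t * ⟪v i t, v j t - v i t⟫ +
        a j i t * ⟪v j t, v i t - v j t⟫) = -(a i j t * ‖v i t - v j t‖^2) := by
      intro i j
      rw [← hasymm i j, ← mul_add, aux_inner1]
      ring
    rw [Finset.sum_congr rfl fun i _ => Finset.sum_congr rfl fun j _ => h i j]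
    simp only [Finset.sum_neg_distrib]
    rw [hAA]; ring
  have hTB : ∑ i : Fin k, ∑ j : Fin k,
      f0 (‖x i t - x j t‖^2) * ⟪v i t, x i t - x j t⟫ = (1/2) * S0 := by
    rw [aux_symmetrize]
    have h : ∀ i j : Fin k, (f0 (‖x i t - x j t‖^2) * ⟪v i t, x i t - x j t⟫ +
        f0 (‖x j t - x i t‖^2) * ⟪v j t, x j t - x i t⟫) =
        f0 (‖x i t - x j t‖^2) * ⟪v i t - v j t, x i t - x j t⟫ := by
      intro i j
      rw [← hgsymm i j, ← mul_add, aux_inner2]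
    rw [Finset.sum_congr rfl fun i _ => Finset.sum_congr rfl fun j _ => h i j]
    rw [hS0]
  have hTC : ∑ i : Fin k, ∑ j : Fin k,
      f1 (‖x i t - x j t‖^2) * ⟪v i t, x j t - x i t⟫ = -((1/2) * S1) := by
    rw [aux_symmetrize]
    have h : ∀ i j : Fin k, (f1 (‖x i t - x j t‖^2) * ⟪v i t, x j t - x i t⟫ +
        f1 (‖x j t - x i t‖^2) * ⟪v j t, x i t - x j t⟫) =
        -(f1 (‖x i t - x j t‖^2) * ⟪v i t - v j t, x i t - x j t⟫) := by
      intro i j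
      rw [← hgsymm i j, ← mul_add, aux_inner2]
      rw [← neg_sub (x i t) (x j t), inner_neg_right]
      ring
    rw [Finset.sum_congr rfl fun i _ => Finset.sum_congr rfl fun j _ => h i j]
    simp only [Finset.sum_neg_distrib]
    rw [hS1]; ring
  have h_vW : ∑ i : Fin k, ⟪v i t, W i⟫ =
      -(1/2) * AA + Λ t * ((1/2) * (S0 - S1)) := by
    rw [Finset.sum_congr rfl fun i _ => hterm i]
    rw [Finset.sum_add_distrib, Finset.sum_add_distrib,
      ← Finset.mul_sum, ← Finset.mul_sum, hTA, hTB, hTC]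
    ring
  -- value of Q'
  have h_Qval : Q' = -AA + Λ t * (S0 - S1) := by
    rw [hQ']
    have step1 : ∀ i : Fin k,
        (⟪v i t - vbar t, W i - (k:ℝ)⁻¹ • ∑ m : Fin k, W m⟫ +
         ⟪W i - (k:ℝ)⁻¹ • ∑ m : Fin k, W m, v i t - vbar t⟫) =
        2 * ⟪v i t - vbar t, W i - (k:ℝ)⁻¹ • ∑ m : Fin k, W m⟫ := by
      intro i
      rw [real_inner_comm (W i - (k:ℝ)⁻¹ • ∑ m : Fin k, W m)]
      ring
    rw [Finset.sum_congr rfl fun i _ => step1 i, ← Finset.mul_sum]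
    have step2 : ∑ i : Fin k, ⟪v i t - vbar t, W i - (k:ℝ)⁻¹ • ∑ m : Fin k, W m⟫ =
        ∑ i : Fin k, ⟪v i t - vbar t, W i⟫ := by
      simp only [inner_sub_right]
      rw [Finset.sum_sub_distrib, ← sum_inner, h_u0, inner_zero_left, sub_zero]
    have step3 : ∑ i : Fin k, ⟪v i t - vbar t, W i⟫ =
        ∑ i : Fin k, ⟪v i t, W i⟫ := by
      simp only [inner_sub_left]
      rw [Finset.sum_sub_distrib, ← inner_sum, h_W0, inner_zero_right, sub_zero]
    rw [step2, step3, h_vW]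
    ring
  -- Λ t equals V t
  have hvar : ∑ i : Fin k, ∑ j : Fin k, ‖v i t - v j t‖^2 =
      2 * k * ∑ i : Fin k, ‖v i t - vbar t‖^2 := by
    have hc : ∀ i j : Fin k, ‖v i t - v j t‖^2 =
        ‖(v i t - vbar t) - (v j t - vbar t)‖^2 := by
      intro i j; rw [sub_sub_sub_cancel_right]
    rw [Finset.sum_congr rfl fun i _ => Finset.sum_congr rfl fun j _ => hc i j]
    exact aux_variance (fun i => v i t - vbar t) h_u0
  have h_Lam : Λ t = Real.sqrt (∑ i : Fin k, ‖v i t - vbar t‖^2) := by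
    rw [hΛ t]
    congr 1
    have hpairs := aux_pairs (fun i j => ‖v i t - v j t‖^2)
      (fun i j => by
        show ‖v i t - v j t‖^2 = ‖v j t - v i t‖^2
        rw [norm_sub_rev]) (fun i => by simp)
    have h2 : 2 * ∑ i : Fin k, ∑ j ∈ Finset.univ.filter (fun j => j < i),
        ‖v i t - v j t‖^2 = 2 * (k * ∑ i : Fin k, ‖v i t - vbar t‖^2) := by
      rw [← hpairs, hvar]; ring
    have h3 : ∑ i : Fin k, ∑ j ∈ Finset.univ.filter (fun j => j < i),
        ‖v i t - v j t‖^2 = k * ∑ i : Fin k, ‖v i t - vbar t‖^2 := by linarith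
    rw [h3]
    field_simp
  -- value of the integral part of D
  have h_Dint : ∑ i : Fin k, ∑ j ∈ Finset.univ.filter (fun j => j < i),
      (-(f0 (‖x i t - x j t‖^2) - f1 (‖x i t - x j t‖^2)) *
        (2 * ⟪x i t - x j t, v i t - v j t⟫)) = -(S0 - S1) := by
    have hpair2 := aux_pairs (fun i j =>
        (f0 (‖x i t - x j t‖^2) - f1 (‖x i t - x j t‖^2)) *
          (2 * ⟪x i t - x j t, v i t - v j t⟫))
      (by
        intro i j
        show (f0 (‖x i t - x j t‖^2) - f1 (‖x i t - x j t‖^2)) *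
            (2 * ⟪x i t - x j t, v i t - v j t⟫) =
          (f0 (‖x j t - x i t‖^2) - f1 (‖x j t - x i t‖^2)) *
            (2 * ⟪x j t - x i t, v j t - v i t⟫)
        rw [hgsymm i j, ← neg_sub (x i t) (x j t), ← neg_sub (v i t) (v j t),
          inner_neg_neg])
      (by intro i; simp)
    have hfull : ∑ i : Fin k, ∑ j : Fin k,
        (f0 (‖x i t - x j t‖^2) - f1 (‖x i t - x j t‖^2)) *
          (2 * ⟪x i t - x j t, v i t - v j t⟫) = 2 * (S0 - S1) := by
      have hc : ∀ i j : Fin k,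
          (f0 (‖x i t - x j t‖^2) - f1 (‖x i t - x j t‖^2)) *
            (2 * ⟪x i t - x j t, v i t - v j t⟫) =
          2 * (f0 (‖x i t - x j t‖^2) * ⟪v i t - v j t, x i t - x j t⟫ -
               f1 (‖x i t - x j t‖^2) * ⟪v i t - v j t, x i t - x j t⟫) := by
        intro i j
        rw [real_inner_comm (x i t - x j t)]
        ring
      rw [Finset.sum_congr rfl fun i _ => Finset.sum_congr rfl fun j _ => hc i j]
      simp only [mul_sub, Finset.sum_sub_distrib, ← Finset.mul_sum]
      try rw [hS0, hS1]
      try ring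
    have hhalf : ∑ i : Fin k, ∑ j ∈ Finset.univ.filter (fun j => j < i),
        (f0 (‖x i t - x j t‖^2) - f1 (‖x i t - x j t‖^2)) *
          (2 * ⟪x i t - x j t, v i t - v j t⟫) = S0 - S1 := by
      have := hpair2
      rw [hfull] at this
      linarith
    calc ∑ i : Fin k, ∑ j ∈ Finset.univ.filter (fun j => j < i),
        (-(f0 (‖x i t - x j t‖^2) - f1 (‖x i t - x j t‖^2)) *
          (2 * ⟪x i t - x j t, v i t - v j t⟫))
        = -∑ i : Fin k, ∑ j ∈ Finset.univ.filter (fun j => j < i),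
          (f0 (‖x i t - x j t‖^2) - f1 (‖x i t - x j t‖^2)) *
            (2 * ⟪x i t - x j t, v i t - v j t⟫) := by
          simp only [neg_mul, Finset.sum_neg_distrib]
      _ = -(S0 - S1) := by rw [hhalf]
  -- the clean value of D
  have hsq : Real.sqrt (∑ i : Fin k, ‖v i t - vbar t‖^2) > 0 :=
    Real.sqrt_pos.mpr hQpos
  have h_Dval : D = -AA / (2 * Real.sqrt (∑ i : Fin k, ‖v i t - vbar t‖^2)) := by
    rw [hD, h_Dint, h_Qval, h_Lam]
    field_simp
    ring
  -- bounds
  have hXsq : X t ^ 2 = ∑ i : Fin k, ‖x i t - xbar t‖^2 := by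
    rw [hX t]; exact Real.sq_sqrt (by positivity)
  have h2X : ∀ i j : Fin k, ‖x i t - x j t‖^2 ≤ 2 * X t ^ 2 := by
    intro i j
    rcases eq_or_ne i j with rfl | hij
    · simp only [sub_self, norm_zero]
      nlinarith [sq_nonneg (X t)]
    · have hb := aux_sq_bound (x i t - xbar t) (x j t - xbar t)
      rw [sub_sub_sub_cancel_right] at hb
      have hsum : ‖x i t - xbar t‖^2 + ‖x j t - xbar t‖^2 ≤
          ∑ m : Fin k, ‖x m t - xbar t‖^2 := by
        have hs := Finset.sum_le_sum_of_subset_of_nonneg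
          (Finset.subset_univ ({i, j} : Finset (Fin k)))
          (fun m _ _ => by positivity : ∀ m ∈ Finset.univ,
            m ∉ ({i, j} : Finset (Fin k)) → 0 ≤ ‖x m t - xbar t‖^2)
        rw [Finset.sum_pair hij] at hs
        exact hs
      rw [hXsq]; linarith
  have hCpos : 0 < σ^2 + 2 * X t ^ 2 := by nlinarith [sq_nonneg (X t), pow_pos hσ 2]
  have hCβpos : 0 < (σ^2 + 2 * X t ^ 2) ^ β := Real.rpow_pos_of_pos hCpos β
  have halpha : ∀ i j : Fin k, K / (σ^2 + 2 * X t ^ 2) ^ β ≤ a i j t := by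
    intro i j
    rw [ha]
    have h1 : 0 < σ^2 + ‖x i t - x j t‖^2 := by positivity
    have hrp : (σ^2 + ‖x i t - x j t‖^2) ^ β ≤ (σ^2 + 2 * X t ^ 2) ^ β :=
      Real.rpow_le_rpow h1.le (by linarith [h2X i j]) hβ0.le
    have h2 : 0 < (σ^2 + ‖x i t - x j t‖^2) ^ β := Real.rpow_pos_of_pos h1 β
    exact div_le_div_of_nonneg_left hK.le h2 hrp
  have hAAge : (K / (σ^2 + 2 * X t ^ 2) ^ β) *
      (2 * k * ∑ i : Fin k, ‖v i t - vbar t‖^2) ≤ AA := by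
    rw [hAA, ← hvar, Finset.mul_sum]
    apply Finset.sum_le_sum
    intro i _
    rw [Finset.mul_sum]
    apply Finset.sum_le_sum
    intro j _
    exact mul_le_mul_of_nonneg_right (halpha i j) (by positivity)
  refine ⟨D, hEnd, ?_, ?_⟩
  · rw [h_Dval, hV t]
    have hc2 : Real.sqrt (∑ i : Fin k, ‖v i t - vbar t‖^2) ^ 2 =
        ∑ i : Fin k, ‖v i t - vbar t‖^2 := Real.sq_sqrt hQpos.le
    rw [div_le_iff₀ (by positivity)]
    rw [← hc2] at hAAge
    have e : -(K * (k:ℝ) / (σ ^ 2 + 2 * X t ^ 2) ^ β) *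
        Real.sqrt (∑ i : Fin k, ‖v i t - vbar t‖^2) *
        (2 * Real.sqrt (∑ i : Fin k, ‖v i t - vbar t‖^2)) =
        -(K / (σ ^ 2 + 2 * X t ^ 2) ^ β *
          (2 * (k:ℝ) * Real.sqrt (∑ i : Fin k, ‖v i t - vbar t‖^2) ^ 2)) := by
      ring
    linarith [hAAge, e]
  · rw [hV t, neg_mul, neg_nonpos]
    exact mul_nonneg (div_nonneg (by positivity) hCβpos.le) (Real.sqrt_nonneg _)
end

section
/- Fix δ with 0 < δ < d1 − d0 and define the energy E(t) = V(t) + (1/2)·Σ_{1≤j<i≤k} ∫_{‖x_i(t) − x_j(t)‖²}^{d1 − δ} (f0(r) − f1(r)) dr. If for every s ∈ [0, t] one has V(s) > 0 and d0 < ‖x_i(s) − x_j(s)‖² < d1 for all i ≠ j, then E(t) ≤ E(0); that is, E is nonincreasing along the solution of the flocking dynamics. -/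
open scoped RealInnerProductSpace

lemma pairSum {k : ℕ} (φ : Fin k → Fin k → ℝ) (hd : ∀ i, φ i i = 0) :
    ∑ i : Fin k, ∑ j : Fin k, φ i j
      = ∑ i : Fin k, ∑ j ∈ Finset.univ.filter (fun j => j < i), (φ i j + φ j i) := by
  have h1 : ∀ i : Fin k, (∑ j : Fin k, φ i j)
      = (∑ j ∈ Finset.univ.filter (fun j => j < i), φ i j)
        + ∑ j ∈ Finset.univ.filter (fun j => i < j), φ i j := by
    intro i
    rw [← Finset.sum_filter_add_sum_filter_not Finset.univ (fun j => j < i) (φ i)]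
    congr 1
    have : Finset.univ.filter (fun j => ¬ j < i) = insert i (Finset.univ.filter (fun j => i < j)) := by
      ext j
      simp [not_lt, le_iff_lt_or_eq, or_comm, eq_comm]
    rw [this, Finset.sum_insert (by simp), hd, zero_add]
  have h2 : (∑ i : Fin k, ∑ j ∈ Finset.univ.filter (fun j => i < j), φ i j)
      = ∑ i : Fin k, ∑ j ∈ Finset.univ.filter (fun j => j < i), φ j i := by
    exact Finset.sum_comm' (by simp)
  calc ∑ i : Fin k, ∑ j : Fin k, φ i j = ∑ i : Fin k, ((∑ j ∈ Finset.univ.filter (fun j => j < i), φ i j) + ∑ j ∈ Finset.univ.filter (fun j => i < j), φ i j) := Finset.sum_congr rfl fun i _ => h1 i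
    _ = _ := by
      rw [Finset.sum_add_distrib, h2, ← Finset.sum_add_distrib]
      exact Finset.sum_congr rfl fun i _ => Finset.sum_add_distrib.symm

lemma sumPairNormSq {F : Type*} [NormedAddCommGroup F] [InnerProductSpace ℝ F] {k : ℕ}
    (u : Fin k → F) (hu : ∑ i, u i = 0) :
    ∑ i : Fin k, ∑ j ∈ Finset.univ.filter (fun j => j < i), ‖u i - u j‖^2
      = k * ∑ i : Fin k, ‖u i‖^2 := by
  have hps := pairSum (fun i j => ‖u i - u j‖^2) (by simp)
  have h2 : ∑ i : Fin k, ∑ j ∈ Finset.univ.filter (fun j => j < i),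
      ((fun i j => ‖u i - u j‖^2) i j + (fun i j => ‖u i - u j‖^2) j i)
      = 2 * ∑ i : Fin k, ∑ j ∈ Finset.univ.filter (fun j => j < i), ‖u i - u j‖^2 := by
    simp only [norm_sub_rev (u _) (u _)]
    rw [Finset.mul_sum]
    refine Finset.sum_congr rfl fun i _ => ?_
    rw [Finset.mul_sum]
    refine Finset.sum_congr rfl fun j _ => ?_
    ring
  have key : ∑ i : Fin k, ∑ j : Fin k, ‖u i - u j‖^2 = 2 * (k * ∑ i : Fin k, ‖u i‖^2) := by
    have hexp : ∀ i j : Fin k, ‖u i - u j‖^2 = ‖u i‖^2 - 2*⟪u i, u j⟫ + ‖u j‖^2 :=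
      fun i j => norm_sub_sq_real _ _
    simp only [hexp, Finset.sum_add_distrib, Finset.sum_sub_distrib, ← Finset.mul_sum,
      ← inner_sum, hu, inner_zero_right, mul_zero, Finset.sum_const, Finset.card_univ,
      Fintype.card_fin, nsmul_eq_mul, sub_zero]
    ring
  rw [hps, h2] at key
  linarith

lemma hContOn (d0 d1 : ℝ) (θ : ℕ) :
    ContinuousOn (fun r => ((r - d0)^θ)⁻¹ - ((r - d1)^θ)⁻¹) (Set.Ioo d0 d1) := by
  apply ContinuousOn.sub
  · exact (((continuous_sub_right d0).pow θ).continuousOn).inv₀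
      fun r hr => pow_ne_zero _ (sub_ne_zero.2 (ne_of_gt hr.1))
  · exact (((continuous_sub_right d1).pow θ).continuousOn).inv₀
      fun r hr => pow_ne_zero _ (sub_ne_zero.2 (ne_of_lt hr.2))

lemma intDeriv {d0 d1 c : ℝ} {h : ℝ → ℝ} (hcont : ContinuousOn h (Set.Ioo d0 d1))
    (hc : c ∈ Set.Ioo d0 d1) {g : ℝ → ℝ} {g' : ℝ} {s : ℝ} (hg : HasDerivAt g g' s)
    (hgs : g s ∈ Set.Ioo d0 d1) :
    HasDerivAt (fun u => ∫ r in (g u)..c, h r) (-(h (g s) * g')) s := by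
  have hint : IntervalIntegrable h MeasureTheory.volume c (g s) := by
    apply ContinuousOn.intervalIntegrable
    exact hcont.mono (Set.OrdConnected.uIcc_subset Set.ordConnected_Ioo hc hgs)
  have hmeas : StronglyMeasurableAtFilter h (nhds (g s)) :=
    ⟨Set.Ioo d0 d1, Ioo_mem_nhds hgs.1 hgs.2,
      hcont.aestronglyMeasurable measurableSet_Ioo⟩
  have hca : ContinuousAt h (g s) := hcont.continuousAt (Ioo_mem_nhds hgs.1 hgs.2)
  have hF : HasDerivAt (fun u => ∫ r in c..u, h r) (h (g s)) (g s) :=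
    intervalIntegral.integral_hasDerivAt_right hint hmeas hca
  have hcomp := (hF.comp s hg).neg
  have heq : (fun u => ∫ r in (g u)..c, h r)
      = fun u => -((fun w => ∫ r in c..w, h r) (g u)) := by
    funext u
    exact intervalIntegral.integral_symm c (g u)
  rw [heq]
  exact hcomp

lemma T1lem {F : Type*} [NormedAddCommGroup F] [InnerProductSpace ℝ F] {k : ℕ}
    (Q : Fin k → F) (Qb : F) (aa : Fin k → Fin k → ℝ) (hsym : ∀ i j, aa i j = aa j i) :
    ∑ i : Fin k, ⟪Q i - Qb, ∑ j : Fin k, aa i j • (Q j - Q i)⟫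
      = -∑ i : Fin k, ∑ j ∈ Finset.univ.filter (fun j => j < i), aa i j * ‖Q i - Q j‖^2 := by
  have hin : ∀ i, ⟪Q i - Qb, ∑ j : Fin k, aa i j • (Q j - Q i)⟫
      = ∑ j : Fin k, aa i j * ⟪Q i - Qb, Q j - Q i⟫ := by
    intro i
    rw [inner_sum]
    exact Finset.sum_congr rfl fun j _ => real_inner_smul_right _ _ _
  rw [Finset.sum_congr rfl fun i _ => hin i,
    pairSum (fun i j => aa i j * ⟪Q i - Qb, Q j - Q i⟫) (by simp), ← Finset.sum_neg_distrib]
  refine Finset.sum_congr rfl fun i _ => ?_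
  rw [← Finset.sum_neg_distrib]
  refine Finset.sum_congr rfl fun j _ => ?_
  rw [hsym j i]
  have hnm := norm_sub_sq_real (Q i) (Q j)
  simp only [inner_sub_left, inner_sub_right, real_inner_comm (Q j) (Q i),
    real_inner_comm (Qb) (Q i), real_inner_comm (Qb) (Q j),
    real_inner_self_eq_norm_sq] at *
  linear_combination (aa i j) * hnm

lemma T2lem {F : Type*} [NormedAddCommGroup F] [InnerProductSpace ℝ F] {k : ℕ}
    (Q P : Fin k → F) (Qb : F) (b : Fin k → Fin k → ℝ) (hsym : ∀ i j, b i j = b j i) :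
    ∑ i : Fin k, ⟪Q i - Qb, ∑ j ∈ Finset.univ.filter (fun j => j ≠ i), b i j • (P i - P j)⟫
      = ∑ i : Fin k, ∑ j ∈ Finset.univ.filter (fun j => j < i),
          b i j * ⟪Q i - Q j, P i - P j⟫ := by
  have hfull : ∀ i, (∑ j ∈ Finset.univ.filter (fun j => j ≠ i), b i j • (P i - P j))
      = ∑ j : Fin k, b i j • (P i - P j) := by
    intro i
    rw [Finset.filter_ne', Finset.sum_erase]
    simp
  have hin : ∀ i, ⟪Q i - Qb, ∑ j : Fin k, b i j • (P i - P j)⟫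
      = ∑ j : Fin k, b i j * ⟪Q i - Qb, P i - P j⟫ := by
    intro i
    rw [inner_sum]
    exact Finset.sum_congr rfl fun j _ => real_inner_smul_right _ _ _
  simp only [hfull]
  rw [Finset.sum_congr rfl fun i _ => hin i,
    pairSum (fun i j => b i j * ⟪Q i - Qb, P i - P j⟫) (by simp)]
  refine Finset.sum_congr rfl fun i _ => Finset.sum_congr rfl fun j _ => ?_
  rw [hsym j i]
  simp only [inner_sub_left, inner_sub_right]
  ring

theorem stmt_7
    {n k : ℕ} (hn : 1 ≤ n) (hk : 2 ≤ k)
    (K σ β d0 d1 : ℝ) (θ : ℕ)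
    (hK : 0 < K) (hσ : 0 < σ) (hβ0 : 0 < β) (hβ : β ≤ 1 / 2)
    (hd0 : 0 < d0) (hd01 : d0 < d1) (hθ2 : 2 ≤ θ) (hθeven : Even θ)
    (x v : Fin k → ℝ → EuclideanSpace ℝ (Fin n))
    (f0 f1 : ℝ → ℝ)
    (hf0 : ∀ r, f0 r = ((r - d0) ^ θ)⁻¹)
    (hf1 : ∀ r, f1 r = ((r - d1) ^ θ)⁻¹)
    (a : Fin k → Fin k → ℝ → ℝ)
    (ha : ∀ i j t, a i j t = K / (σ ^ 2 + ‖x i t - x j t‖ ^ 2) ^ β)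
    (Λ : ℝ → ℝ)
    (hΛ : ∀ t, Λ t = Real.sqrt ((1 / (k : ℝ)) *
      ∑ i : Fin k, ∑ j ∈ Finset.univ.filter (fun j => j < i), ‖v i t - v j t‖ ^ 2))
    (hx : ∀ i, ∀ t : ℝ, 0 ≤ t → HasDerivAt (x i) (v i t) t)
    (hv : ∀ i, ∀ t : ℝ, 0 ≤ t → HasDerivAt (v i)
      ((∑ j : Fin k, a i j t • (v j t - v i t)) +
        Λ t • (∑ j ∈ Finset.univ.filter (fun j => j ≠ i),
          f0 (‖x i t - x j t‖ ^ 2) • (x i t - x j t)) +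
        Λ t • (∑ j ∈ Finset.univ.filter (fun j => j ≠ i),
          f1 (‖x i t - x j t‖ ^ 2) • (x j t - x i t))) t)
    (hinit : ∀ i j : Fin k, i ≠ j →
      d0 < ‖x i 0 - x j 0‖ ^ 2 ∧ ‖x i 0 - x j 0‖ ^ 2 < d1)
    (vbar : ℝ → EuclideanSpace ℝ (Fin n))
    (hvbar : ∀ t, vbar t = (k : ℝ)⁻¹ • ∑ i : Fin k, v i t)
    (V : ℝ → ℝ)
    (hV : ∀ t, V t = Real.sqrt (∑ i : Fin k, ‖v i t - vbar t‖ ^ 2))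
    (δ : ℝ) (hδ : 0 < δ) (hδ' : δ < d1 - d0)
    (En : ℝ → ℝ)
    (hEn : ∀ t, En t = V t + (1 / 2) *
      ∑ i : Fin k, ∑ j ∈ Finset.univ.filter (fun j => j < i),
        ∫ r in (‖x i t - x j t‖ ^ 2)..(d1 - δ), (f0 r - f1 r))
    :
    ∀ t : ℝ, 0 ≤ t →
      (∀ s ∈ Set.Icc (0 : ℝ) t, 0 < V s ∧
        ∀ i j : Fin k, i ≠ j →
          d0 < ‖x i s - x j s‖ ^ 2 ∧ ‖x i s - x j s‖ ^ 2 < d1) →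
      En t ≤ En 0 := by
  intro t ht H
  have hkpos : (0:ℝ) < (k:ℝ) := by exact_mod_cast Nat.lt_of_lt_of_le (by norm_num) hk
  have hk0 : (k:ℝ) ≠ 0 := ne_of_gt hkpos
  have hcIoo : d1 - δ ∈ Set.Ioo d0 d1 := ⟨by linarith, by linarith⟩
  have hconth : ContinuousOn (fun r => f0 r - f1 r) (Set.Ioo d0 d1) := by
    have hrepr : (fun r => f0 r - f1 r) = fun r => ((r - d0)^θ)⁻¹ - ((r - d1)^θ)⁻¹ :=
      funext fun r => by rw [hf0, hf1]
    rw [hrepr]; exact hContOn d0 d1 θ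
  have claim : ∀ s ∈ Set.Icc (0:ℝ) t, ∃ D, HasDerivAt En D s ∧ D ≤ 0 := by
    intro s hs
    obtain ⟨hVs, hxs⟩ := H s hs
    have hs0 : 0 ≤ s := hs.1
    set A : Fin k → EuclideanSpace ℝ (Fin n) := fun i =>
      (∑ j : Fin k, a i j s • (v j s - v i s)) +
        Λ s • (∑ j ∈ Finset.univ.filter (fun j => j ≠ i),
          f0 (‖x i s - x j s‖ ^ 2) • (x i s - x j s)) +
        Λ s • (∑ j ∈ Finset.univ.filter (fun j => j ≠ i),
          f1 (‖x i s - x j s‖ ^ 2) • (x j s - x i s)) with hAdef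
    have hvd : ∀ i, HasDerivAt (v i) (A i) s := fun i => hv i s hs0
    set Ab : EuclideanSpace ℝ (Fin n) := (k:ℝ)⁻¹ • ∑ i, A i with hAbdef
    have hvbarD : HasDerivAt vbar Ab s := by
      have hrepr : vbar = fun u => (k:ℝ)⁻¹ • ∑ i, v i u := funext hvbar
      rw [hrepr, hAbdef]
      exact (HasDerivAt.fun_sum fun i _ => hvd i).const_smul ((k:ℝ)⁻¹)
    set w : Fin k → EuclideanSpace ℝ (Fin n) := fun i => v i s - vbar s with hwdef
    have hwD : ∀ i, HasDerivAt (fun u => v i u - vbar u) (A i - Ab) s :=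
      fun i => (hvd i).sub hvbarD
    set W' : ℝ := ∑ i : Fin k, (⟪w i, A i - Ab⟫ + ⟪A i - Ab, w i⟫) with hW'def
    have hWD : HasDerivAt (fun u => ∑ i : Fin k, ‖v i u - vbar u‖^2) W' s := by
      have hrepr : (fun u => ∑ i : Fin k, ‖v i u - vbar u‖^2)
          = fun u => ∑ i : Fin k, ⟪v i u - vbar u, v i u - vbar u⟫ :=
        funext fun u => Finset.sum_congr rfl fun i _ => (real_inner_self_eq_norm_sq _).symm
      rw [hrepr, hW'def]
      exact HasDerivAt.fun_sum fun i _ => (hwD i).inner ℝ (hwD i)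
    have hVW : V s = Real.sqrt (∑ i : Fin k, ‖v i s - vbar s‖^2) := hV s
    have hWpos : 0 < ∑ i : Fin k, ‖v i s - vbar s‖^2 := by
      have := hVs
      rw [hVW] at this
      exact Real.sqrt_pos.1 this
    have hVD : HasDerivAt V (1 / (2 * V s) * W') s := by
      have hrepr : V = fun u => Real.sqrt (∑ i : Fin k, ‖v i u - vbar u‖^2) := funext hV
      have hcomp := (Real.hasDerivAt_sqrt (ne_of_gt hWpos)).comp s hWD
      rw [hVW, hrepr]
      simpa [Function.comp_def] using hcomp
    -- pair derivatives
    have hgd : ∀ i j : Fin k, i ≠ j → HasDerivAt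
        (fun u => ∫ r in (‖x i u - x j u‖^2)..(d1 - δ), (f0 r - f1 r))
        (-((f0 (‖x i s - x j s‖^2) - f1 (‖x i s - x j s‖^2)) *
          (⟪x i s - x j s, v i s - v j s⟫ + ⟪v i s - v j s, x i s - x j s⟫))) s := by
      intro i j hij
      have hX : HasDerivAt (fun u => x i u - x j u) (v i s - v j s) s :=
        (hx i s hs0).sub (hx j s hs0)
      have hg : HasDerivAt (fun u => ‖x i u - x j u‖^2)
          (⟪x i s - x j s, v i s - v j s⟫ + ⟪v i s - v j s, x i s - x j s⟫) s := by
        have hrepr : (fun u => ‖x i u - x j u‖^2)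
            = fun u => ⟪x i u - x j u, x i u - x j u⟫ :=
          funext fun u => (real_inner_self_eq_norm_sq _).symm
        rw [hrepr]
        exact hX.inner ℝ hX
      have hmem : ‖x i s - x j s‖^2 ∈ Set.Ioo d0 d1 := ⟨(hxs i j hij).1, (hxs i j hij).2⟩
      exact intDeriv hconth hcIoo hg hmem
    have hsumD : HasDerivAt (fun u => ∑ i : Fin k, ∑ j ∈ Finset.univ.filter (fun j => j < i),
        ∫ r in (‖x i u - x j u‖^2)..(d1 - δ), (f0 r - f1 r))
        (∑ i : Fin k, ∑ j ∈ Finset.univ.filter (fun j => j < i),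
          -((f0 (‖x i s - x j s‖^2) - f1 (‖x i s - x j s‖^2)) *
            (⟪x i s - x j s, v i s - v j s⟫ + ⟪v i s - v j s, x i s - x j s⟫))) s := by
      refine HasDerivAt.fun_sum fun i _ => HasDerivAt.fun_sum fun j hj => ?_
      exact hgd i j (ne_of_gt (Finset.mem_filter.1 hj).2)
    set Dval : ℝ := 1 / (2 * V s) * W' + (1/2) *
        (∑ i : Fin k, ∑ j ∈ Finset.univ.filter (fun j => j < i),
          -((f0 (‖x i s - x j s‖^2) - f1 (‖x i s - x j s‖^2)) *
            (⟪x i s - x j s, v i s - v j s⟫ + ⟪v i s - v j s, x i s - x j s⟫))) with hDdef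
    have hEnD : HasDerivAt En Dval s := by
      have hrepr : En = fun u => V u + (1/2) *
          ∑ i : Fin k, ∑ j ∈ Finset.univ.filter (fun j => j < i),
            ∫ r in (‖x i u - x j u‖^2)..(d1 - δ), (f0 r - f1 r) := funext hEn
      rw [hrepr, hDdef]
      exact hVD.add (hsumD.const_mul (1/2))
    refine ⟨Dval, hEnD, ?_⟩
    -- notation
    set Sa : ℝ := ∑ i : Fin k, ∑ j ∈ Finset.univ.filter (fun j => j < i),
      a i j s * ‖v i s - v j s‖^2 with hSadef
    set Th : ℝ := ∑ i : Fin k, ∑ j ∈ Finset.univ.filter (fun j => j < i),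
      (f0 (‖x i s - x j s‖^2) - f1 (‖x i s - x j s‖^2)) *
        ⟪v i s - v j s, x i s - x j s⟫ with hThdef
    have hwsum : ∑ i : Fin k, w i = 0 := by
      simp only [hwdef, Finset.sum_sub_distrib, Finset.sum_const, Finset.card_univ,
        Fintype.card_fin, hvbar s, smul_smul]
      rw [← Nat.cast_smul_eq_nsmul ℝ, smul_smul, mul_inv_cancel₀ hk0, one_smul, sub_self]
    have hW'2 : W' = 2 * ∑ i : Fin k, ⟪w i, A i - Ab⟫ := by
      rw [hW'def, Finset.mul_sum]
      exact Finset.sum_congr rfl fun i _ => by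
        rw [real_inner_comm (A i - Ab) (w i)]; ring
    have hAbzero : ∑ i : Fin k, ⟪w i, Ab⟫ = (0:ℝ) := by
      rw [← sum_inner, hwsum, inner_zero_left]
    have hsplit : ∑ i : Fin k, ⟪w i, A i - Ab⟫ = ∑ i : Fin k, ⟪w i, A i⟫ := by
      simp only [inner_sub_right, Finset.sum_sub_distrib, hAbzero, sub_zero]
    have hasym : ∀ i j : Fin k, a i j s = a j i s := fun i j => by
      rw [ha, ha, norm_sub_rev]
    have hf0sym : ∀ i j : Fin k, f0 (‖x i s - x j s‖^2) = f0 (‖x j s - x i s‖^2) :=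
      fun i j => by rw [norm_sub_rev]
    have hf1sym : ∀ i j : Fin k, f1 (‖x i s - x j s‖^2) = f1 (‖x j s - x i s‖^2) :=
      fun i j => by rw [norm_sub_rev]
    have hS1 : ∑ i : Fin k, ⟪w i, ∑ j : Fin k, a i j s • (v j s - v i s)⟫ = -Sa := by
      rw [hSadef]
      exact T1lem (fun i => v i s) (vbar s) (fun i j => a i j s) hasym
    have hS2 : ∑ i : Fin k, ⟪w i, ∑ j ∈ Finset.univ.filter (fun j => j ≠ i),
        f0 (‖x i s - x j s‖^2) • (x i s - x j s)⟫
        = ∑ i : Fin k, ∑ j ∈ Finset.univ.filter (fun j => j < i),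
            f0 (‖x i s - x j s‖^2) * ⟪v i s - v j s, x i s - x j s⟫ := by
      exact T2lem (fun i => v i s) (fun i => x i s) (vbar s)
        (fun i j => f0 (‖x i s - x j s‖^2)) hf0sym
    have hS3 : ∑ i : Fin k, ⟪w i, ∑ j ∈ Finset.univ.filter (fun j => j ≠ i),
        f1 (‖x i s - x j s‖^2) • (x j s - x i s)⟫
        = ∑ i : Fin k, ∑ j ∈ Finset.univ.filter (fun j => j < i),
            (-(f1 (‖x i s - x j s‖^2))) * ⟪v i s - v j s, x i s - x j s⟫ := by
      have hflip : ∀ i : Fin k, (∑ j ∈ Finset.univ.filter (fun j => j ≠ i),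
          f1 (‖x i s - x j s‖^2) • (x j s - x i s))
          = ∑ j ∈ Finset.univ.filter (fun j => j ≠ i),
            (-(f1 (‖x i s - x j s‖^2))) • (x i s - x j s) := by
        intro i
        refine Finset.sum_congr rfl fun j _ => ?_
        rw [neg_smul, ← smul_neg, neg_sub]
      simp only [hflip]
      exact T2lem (fun i => v i s) (fun i => x i s) (vbar s)
        (fun i j => -(f1 (‖x i s - x j s‖^2))) (fun i j => by simp only [norm_sub_rev (x i s) (x j s)])
    have hAin : ∑ i : Fin k, ⟪w i, A i⟫ = -Sa + Λ s * Th := by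
      have hexp : ∀ i : Fin k, ⟪w i, A i⟫ =
          ⟪w i, ∑ j : Fin k, a i j s • (v j s - v i s)⟫
          + Λ s * ⟪w i, ∑ j ∈ Finset.univ.filter (fun j => j ≠ i),
              f0 (‖x i s - x j s‖^2) • (x i s - x j s)⟫
          + Λ s * ⟪w i, ∑ j ∈ Finset.univ.filter (fun j => j ≠ i),
              f1 (‖x i s - x j s‖^2) • (x j s - x i s)⟫ := by
        intro i
        rw [hAdef]
        simp only [inner_add_right, real_inner_smul_right]
      rw [Finset.sum_congr rfl fun i _ => hexp i]
      rw [Finset.sum_add_distrib, Finset.sum_add_distrib, ← Finset.mul_sum, ← Finset.mul_sum,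
        hS1, hS2, hS3]
      rw [add_assoc, ← mul_add, hThdef, ← Finset.sum_add_distrib]
      congr 1
      congr 1
      refine Finset.sum_congr rfl fun i _ => ?_
      rw [← Finset.sum_add_distrib]
      refine Finset.sum_congr rfl fun j _ => by ring
    have hLamV : Λ s = V s := by
      have hvw : ∀ i j : Fin k, v i s - v j s = w i - w j := fun i j => by
        simp only [hwdef]
        abel
      rw [hΛ s, hVW]
      congr 1
      rw [Finset.sum_congr rfl fun i _ => Finset.sum_congr rfl fun j _ => by
        rw [hvw i j]]
      rw [sumPairNormSq w hwsum]
      simp only [hwdef]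
      field_simp
    have hIntEq : (∑ i : Fin k, ∑ j ∈ Finset.univ.filter (fun j => j < i),
        -((f0 (‖x i s - x j s‖^2) - f1 (‖x i s - x j s‖^2)) *
          (⟪x i s - x j s, v i s - v j s⟫ + ⟪v i s - v j s, x i s - x j s⟫)))
        = -2 * Th := by
      rw [hThdef, Finset.mul_sum]
      refine Finset.sum_congr rfl fun i _ => ?_
      rw [Finset.mul_sum]
      refine Finset.sum_congr rfl fun j _ => ?_
      rw [real_inner_comm (x i s - x j s) (v i s - v j s)]
      ring
    have hSann : 0 ≤ Sa := by
      rw [hSadef]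
      refine Finset.sum_nonneg fun i _ => Finset.sum_nonneg fun j _ => mul_nonneg ?_ (by positivity)
      rw [ha]
      exact div_nonneg hK.le (Real.rpow_nonneg (by positivity) β)
    have hDeq : Dval = -(Sa / V s) := by
      rw [hDdef, hW'2, hsplit, hAin, hLamV, hIntEq]
      field_simp
      ring
    rw [hDeq]
    exact neg_nonpos.2 (div_nonneg hSann hVs.le)
  have hIcc : Set.OrdConnected (Set.Icc (0:ℝ) t) := Set.ordConnected_Icc
  have hanti : AntitoneOn En (Set.Icc 0 t) := by
    apply antitoneOn_of_deriv_nonpos (convex_Icc 0 t)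
    · intro s hs
      exact ((claim s hs).choose_spec.1).continuousAt.continuousWithinAt
    · intro s hs
      rw [interior_Icc] at hs
      exact ((claim s (Set.mem_Icc_of_Ioo hs)).choose_spec.1).differentiableAt.differentiableWithinAt
    · intro s hs
      rw [interior_Icc] at hs
      obtain ⟨D, hD, hD0⟩ := claim s (Set.mem_Icc_of_Ioo hs)
      rw [hD.deriv]
      exact hD0
  exact hanti (Set.left_mem_Icc.2 ht) (Set.right_mem_Icc.2 ht) ht
end

section
/- Collision avoidance and cohesion: under the flocking dynamics with initial condition d0 < ‖x_i(0) − x_j(0)‖² < d1 for all i ≠ j, one has d0 < ‖x_i(t) − x_j(t)‖² < d1 for all t ≥ 0 and all i ≠ j; in particular no two agents ever collide and the squared inter-agent distances remain bounded by d1. -/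
open Finset

variable {k : ℕ}

lemma mySwapLT {M : Type*} [AddCommMonoid M] (F : Fin k → Fin k → M) :
    ∑ i, ∑ j ∈ univ.filter (fun j => j < i), F i j
      = ∑ j, ∑ i ∈ univ.filter (fun i => j < i), F i j := by
  rw [← Finset.sum_finset_product' ((univ ×ˢ univ).filter (fun p : Fin k × Fin k => p.2 < p.1))
      _ _ (by simp)]
  rw [← Finset.sum_finset_product_right' ((univ ×ˢ univ).filter (fun p : Fin k × Fin k => p.2 < p.1))
      _ _ (by simp)]

lemma myTrisplit {M : Type*} [AddCommMonoid M] (i : Fin k) (G : Fin k → M) :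
    ∑ j, G j = (∑ j ∈ univ.filter (fun j => j < i), G j) + G i
      + ∑ j ∈ univ.filter (fun j => i < j), G j := by
  rw [← Finset.sum_filter_add_sum_filter_not univ (fun j => j < i) G]
  have h : univ.filter (fun j => ¬ j < i) = insert i (univ.filter (fun j => i < j)) := by
    ext j
    simp only [mem_filter, mem_univ, true_and, mem_insert, not_lt]
    constructor
    · intro h; rcases eq_or_lt_of_le h with h | h
      · exact Or.inl h.symm
      · exact Or.inr h
    · rintro (rfl | h); · exact le_refl _
      · exact le_of_lt h
  rw [h, Finset.sum_insert (by simp), add_assoc]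

lemma mySumPairs {M : Type*} [AddCommMonoid M] (F : Fin k → Fin k → M) (hdiag : ∀ i, F i i = 0) :
    ∑ i, ∑ j, F i j = ∑ i, ∑ j ∈ univ.filter (fun j => j < i), (F i j + F j i) := by
  have h1 : ∀ i, ∑ j, F i j = (∑ j ∈ univ.filter (fun j => j < i), F i j)
      + ∑ j ∈ univ.filter (fun j => i < j), F i j := by
    intro i
    rw [myTrisplit i (F i), hdiag i, add_zero]
  calc ∑ i, ∑ j, F i j
      = ∑ i, ((∑ j ∈ univ.filter (fun j => j < i), F i j)
          + ∑ j ∈ univ.filter (fun j => i < j), F i j) := by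
        exact Finset.sum_congr rfl fun i _ => h1 i
    _ = (∑ i, ∑ j ∈ univ.filter (fun j => j < i), F i j)
          + ∑ i, ∑ j ∈ univ.filter (fun j => i < j), F i j := Finset.sum_add_distrib
    _ = ∑ i, ∑ j ∈ univ.filter (fun j => j < i), (F i j + F j i) := by
        have hswap : (∑ i, ∑ j ∈ univ.filter (fun j => i < j), F i j)
            = ∑ i, ∑ j ∈ univ.filter (fun j => j < i), F j i :=
          (mySwapLT (fun i j => F j i)).symm
        rw [hswap, ← Finset.sum_add_distrib]
        exact Finset.sum_congr rfl fun i _ => Finset.sum_add_distrib.symm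

lemma mySumAntisym {M : Type*} [AddCommGroup M] [Module ℝ M] (F : Fin k → Fin k → M)
    (h : ∀ i j, F i j = - F j i) : ∑ i : Fin k, ∑ j : Fin k, F i j = 0 := by
  have h2 : ∑ i : Fin k, ∑ j : Fin k, F i j = - ∑ i : Fin k, ∑ j : Fin k, F i j := by
    calc ∑ i : Fin k, ∑ j : Fin k, F i j = ∑ j : Fin k, ∑ i : Fin k, F i j := Finset.sum_comm
      _ = ∑ j : Fin k, ∑ i : Fin k, - F j i := by
          exact Finset.sum_congr rfl fun j _ => Finset.sum_congr rfl fun i _ => h i j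
      _ = - ∑ j : Fin k, ∑ i : Fin k, F j i := by simp [Finset.sum_neg_distrib]
  have := add_eq_zero_iff_eq_neg.mpr h2
  have h3 : (2:ℝ) • (∑ i : Fin k, ∑ j : Fin k, F i j) = 0 := by
    rw [two_smul]; exact this
  simpa using (smul_eq_zero.mp h3).resolve_left (by norm_num)

noncomputable def myU (d0 d1 : ℝ) (θ : ℕ) (r : ℝ) : ℝ :=
  ((θ:ℝ)-1)⁻¹ * (((r-d0)^(θ-1))⁻¹ + ((d1-r)^(θ-1))⁻¹)

lemma myU_pos {d0 d1 r : ℝ} {θ : ℕ} (hθ : 2 ≤ θ) (h0 : d0 < r) (h1 : r < d1) :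
    0 < myU d0 d1 θ r := by
  have h2 : (0:ℝ) < (θ:ℝ) - 1 := by
    have : (2:ℝ) ≤ (θ:ℝ) := by exact_mod_cast hθ
    linarith
  have hp0 : (0:ℝ) < r - d0 := sub_pos.mpr h0
  have hp1 : (0:ℝ) < d1 - r := sub_pos.mpr h1
  have ha : (0:ℝ) < ((r-d0)^(θ-1))⁻¹ := by positivity
  have hb : (0:ℝ) < ((d1-r)^(θ-1))⁻¹ := by positivity
  apply mul_pos (by positivity)
  positivity

lemma myU_deriv {d0 d1 r : ℝ} {θ : ℕ} (hθ : 2 ≤ θ) (hθeven : Even θ)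
    (h0 : r ≠ d0) (h1 : r ≠ d1) :
    HasDerivAt (myU d0 d1 θ) (((r-d1)^θ)⁻¹ - ((r-d0)^θ)⁻¹) r := by
  have hθ1 : (0:ℝ) < (θ:ℝ) - 1 := by
    have : (2:ℝ) ≤ (θ:ℝ) := by exact_mod_cast hθ
    linarith
  have hsub0 : r - d0 ≠ 0 := sub_ne_zero.mpr h0
  have hsub1 : d1 - r ≠ 0 := sub_ne_zero.mpr (Ne.symm h1)
  -- derivative of (r-d0)^(-(θ-1))
  have hd0 : HasDerivAt (fun y : ℝ => y - d0) 1 r := (hasDerivAt_id r).sub_const d0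
  have hd1 : HasDerivAt (fun y : ℝ => d1 - y) (-1) r := by
    simpa using (hasDerivAt_id r).const_sub d1
  have hz0 : HasDerivAt (fun y : ℝ => (y - d0) ^ (-((θ:ℤ)-1)))
      ((-((θ:ℤ)-1)) * (r - d0) ^ (-((θ:ℤ)-1) - 1) * 1) r := by
    simpa [Function.comp_def] using (hasDerivAt_zpow (-((θ:ℤ)-1)) (r - d0) (Or.inl hsub0)).comp r hd0
  have hz1 : HasDerivAt (fun y : ℝ => (d1 - y) ^ (-((θ:ℤ)-1)))
      ((-((θ:ℤ)-1)) * (d1 - r) ^ (-((θ:ℤ)-1) - 1) * (-1)) r := by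
    simpa [Function.comp_def] using (hasDerivAt_zpow (-((θ:ℤ)-1)) (d1 - r) (Or.inl hsub1)).comp r hd1
  have hsum := (hz0.fun_add hz1).const_mul (((θ:ℝ)-1)⁻¹)
  have hfun : (fun y : ℝ => ((θ:ℝ)-1)⁻¹ *
      ((y - d0) ^ (-((θ:ℤ)-1)) + (d1 - y) ^ (-((θ:ℤ)-1)))) = myU d0 d1 θ := by
    funext y
    have e0 : (y - d0) ^ (-((θ:ℤ)-1)) = ((y-d0)^(θ-1))⁻¹ := by
      rw [zpow_neg]
      congr 1
      rw [show (θ:ℤ) - 1 = ((θ - 1 : ℕ) : ℤ) by omega, zpow_natCast]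
    have e1 : (d1 - y) ^ (-((θ:ℤ)-1)) = ((d1-y)^(θ-1))⁻¹ := by
      rw [zpow_neg]
      congr 1
      rw [show (θ:ℤ) - 1 = ((θ - 1 : ℕ) : ℤ) by omega, zpow_natCast]
    rw [e0, e1]; rfl
  rw [hfun] at hsum
  refine hsum.congr_deriv (Eq.symm ?_)
  have eθ : -((θ:ℤ)-1) - 1 = -(θ:ℤ) := by ring
  rw [eθ]
  have e0 : (r - d0) ^ (-(θ:ℤ)) = ((r-d0)^θ)⁻¹ := by
    rw [zpow_neg, zpow_natCast]
  have e1 : (d1 - r) ^ (-(θ:ℤ)) = ((r-d1)^θ)⁻¹ := by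
    rw [zpow_neg, zpow_natCast]
    congr 1
    rw [show r - d1 = -(d1 - r) by ring, hθeven.neg_pow]
  rw [e0, e1]
  have hθne : ((θ:ℝ)-1) ≠ 0 := ne_of_gt hθ1
  field_simp
  push_cast
  ring

lemma pow_inv_barrier {s B : ℝ} {θ : ℕ} (hθ : 2 ≤ θ) (hB : 0 < B) (hs : 0 < s)
    (h : ((θ:ℝ)-1)⁻¹ * (s^(θ-1))⁻¹ ≤ B) :
    min 1 ((((θ:ℝ)-1)*B + 1)⁻¹) ≤ s := by
  have hθ1 : (0:ℝ) < (θ:ℝ) - 1 := by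
    have : (2:ℝ) ≤ (θ:ℝ) := by exact_mod_cast hθ
    linarith
  by_contra hcon
  push_neg at hcon
  set δ := min 1 ((((θ:ℝ)-1)*B + 1)⁻¹) with hδ
  have hδpos : 0 < δ := lt_min one_pos (by positivity)
  have hs1 : s ≤ 1 := le_of_lt (lt_of_lt_of_le hcon (min_le_left _ _))
  have hpow : s^(θ-1) ≤ s := by
    calc s^(θ-1) ≤ s^1 := pow_le_pow_of_le_one (le_of_lt hs) hs1 (by omega)
    _ = s := pow_one s
  have hinv : s⁻¹ ≤ (s^(θ-1))⁻¹ := by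
    apply inv_anti₀ (by positivity) hpow
  have hA : ((θ:ℝ)-1)⁻¹ * s⁻¹ ≤ B :=
    le_trans (mul_le_mul_of_nonneg_left hinv (by positivity)) h
  have hδle : δ ≤ ((((θ:ℝ)-1)*B + 1))⁻¹ := min_le_right _ _
  have hδinv : (((θ:ℝ)-1)*B + 1) ≤ δ⁻¹ := by
    rw [← inv_inv ((((θ:ℝ)-1)*B + 1))]
    exact inv_anti₀ hδpos hδle
  have hsδ : δ⁻¹ < s⁻¹ := inv_strictAnti₀ hs hcon
  have hbig : (((θ:ℝ)-1)*B + 1) < s⁻¹ := lt_of_le_of_lt hδinv hsδ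
  have hmul : ((θ:ℝ)-1)⁻¹ * (((θ:ℝ)-1)*B + 1) < ((θ:ℝ)-1)⁻¹ * s⁻¹ :=
    mul_lt_mul_of_pos_left hbig (by positivity)
  have heq : ((θ:ℝ)-1)⁻¹ * (((θ:ℝ)-1)*B + 1) = B + ((θ:ℝ)-1)⁻¹ := by
    field_simp
  rw [heq] at hmul
  have : (0:ℝ) < ((θ:ℝ)-1)⁻¹ := by positivity
  linarith

open scoped RealInnerProductSpace

section InnerLemmas
variable {E : Type*} [NormedAddCommGroup E] [InnerProductSpace ℝ E]

lemma myNormSqDeriv {u1 u2 : ℝ → E} {w1 w2 : E} {t : ℝ}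
    (h1 : HasDerivAt u1 w1 t) (h2 : HasDerivAt u2 w2 t) :
    HasDerivAt (fun s => ‖u1 s - u2 s‖^2) (2 * ⟪u1 t - u2 t, w1 - w2⟫) t := by
  have hd := h1.fun_sub h2
  have hi := hd.inner ℝ hd
  have hfun : (fun s => (⟪u1 s - u2 s, u1 s - u2 s⟫ : ℝ)) = fun s => ‖u1 s - u2 s‖^2 := by
    funext s; rw [real_inner_self_eq_norm_sq]
  rw [hfun] at hi
  refine hi.congr_deriv (Eq.symm ?_)
  rw [real_inner_comm]
  ring

lemma myPairIdent {k : ℕ} (V W : Fin k → E) (hW : ∑ i, W i = 0) :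
    ∑ i, ∑ j ∈ univ.filter (fun j => j < i), (2:ℝ) * (2 * ⟪V i - V j, W i - W j⟫)
      = 2 * (2 * k * ∑ i, ⟪V i, W i⟫) := by
  have hdiag : ∀ i : Fin k, (2:ℝ) * ⟪V i - V i, W i - W i⟫ = 0 := by
    intro i; simp
  have h1 := mySumPairs (fun i j => (2:ℝ) * ⟪V i - V j, W i - W j⟫) hdiag
  have h2 : ∀ i j : Fin k, (2:ℝ) * ⟪V i - V j, W i - W j⟫ + (2:ℝ) * ⟪V j - V i, W j - W i⟫
      = (2:ℝ) * (2 * ⟪V i - V j, W i - W j⟫) := by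
    intro i j
    rw [show V j - V i = -(V i - V j) from (neg_sub _ _).symm,
      show W j - W i = -(W i - W j) from (neg_sub _ _).symm, inner_neg_neg]
    ring
  have h3 : ∑ i : Fin k, ∑ j : Fin k, (2:ℝ) * ⟪V i - V j, W i - W j⟫
      = 2 * (2 * k * ∑ i, ⟪V i, W i⟫) := by
    have expand : ∀ i : Fin k, ∑ j : Fin k, (2:ℝ) * ⟪V i - V j, W i - W j⟫
        = 2 * ((k:ℝ) * ⟪V i, W i⟫ - ⟪V i, ∑ j, W j⟫ - ⟪∑ j, V j, W i⟫ + ∑ j, ⟪V j, W j⟫) := by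
      intro i
      rw [← Finset.mul_sum]
      congr 1
      rw [show ((k:ℝ) * ⟪V i, W i⟫ - ⟪V i, ∑ j, W j⟫ - ⟪∑ j, V j, W i⟫ + ∑ j, ⟪V j, W j⟫)
          = ∑ j : Fin k, (⟪V i, W i⟫ - ⟪V i, W j⟫ - ⟪V j, W i⟫ + ⟪V j, W j⟫) from ?_]
      · exact Finset.sum_congr rfl fun j _ => by
          simp [inner_sub_left, inner_sub_right]; ring
      · rw [Finset.sum_add_distrib, Finset.sum_sub_distrib, Finset.sum_sub_distrib,
          Finset.sum_const, Finset.card_univ, Fintype.card_fin, nsmul_eq_mul,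
          inner_sum, sum_inner]
    calc ∑ i : Fin k, ∑ j : Fin k, (2:ℝ) * ⟪V i - V j, W i - W j⟫
        = ∑ i : Fin k, 2 * ((k:ℝ) * ⟪V i, W i⟫ - ⟪V i, ∑ j, W j⟫ - ⟪∑ j, V j, W i⟫
            + ∑ j, ⟪V j, W j⟫) := Finset.sum_congr rfl fun i _ => expand i
      _ = ∑ i : Fin k, 2 * ((k:ℝ) * ⟪V i, W i⟫ - ⟪∑ j, V j, W i⟫ + ∑ j, ⟪V j, W j⟫) := by
          refine Finset.sum_congr rfl fun i _ => ?_
          rw [hW, inner_zero_right, sub_zero]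
      _ = 2 * (((k:ℝ) * ∑ i, ⟪V i, W i⟫) - ⟪∑ j, V j, ∑ i, W i⟫
            + (k:ℝ) * ∑ j, ⟪V j, W j⟫) := by
          rw [← Finset.mul_sum, Finset.sum_add_distrib, Finset.sum_sub_distrib,
            ← Finset.mul_sum, ← inner_sum, Finset.sum_const, Finset.card_univ,
            Fintype.card_fin, nsmul_eq_mul]
      _ = 2 * (2 * k * ∑ i, ⟪V i, W i⟫) := by
          rw [hW, inner_zero_right]; ring
  rw [← h3, h1]
  exact Finset.sum_congr rfl fun i _ => Finset.sum_congr rfl fun j _ => (h2 i j).symm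

end InnerLemmas

lemma mySqrtEpsBound {l G ε : ℝ} (hl : 0 ≤ l) (hG : 0 < G) (hε : 0 < ε)
    (hG2 : G^2 = l^2 + ε) : l * (1 - l / G) ≤ Real.sqrt ε / 2 := by
  have hs : 0 < Real.sqrt ε := Real.sqrt_pos.mpr hε
  have hs2 : Real.sqrt ε ^ 2 = ε := Real.sq_sqrt hε.le
  have hlG : l ≤ G := by nlinarith
  have hGl : 0 < G + l := by linarith
  have h1 : (G - l) * (G + l) = ε := by linear_combination hG2
  have h2 : 2*l*ε ≤ Real.sqrt ε * G^2 := by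
    nlinarith [mul_nonneg (sq_nonneg (l - Real.sqrt ε)) hs.le]
  have key : l * (G - l) * 2 ≤ Real.sqrt ε * G := by
    have h3 : (l * (G - l) * 2) * (G + l) ≤ (Real.sqrt ε * G) * (G + l) := by
      nlinarith [mul_nonneg hs.le (mul_nonneg hG.le hl)]
    exact le_of_mul_le_mul_right h3 hGl
  have : l * (1 - l / G) = l * (G - l) / G := by field_simp
  rw [this, div_le_div_iff₀ hG (by norm_num : (0:ℝ) < 2)]
  linarith [key]

set_option maxHeartbeats 2000000 in
theorem stmt_8
    {n k : ℕ} (hn : 1 ≤ n) (hk : 2 ≤ k)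
    (K σ β d0 d1 : ℝ) (θ : ℕ)
    (hK : 0 < K) (hσ : 0 < σ) (hβ0 : 0 < β) (hβ : β ≤ 1 / 2)
    (hd0 : 0 < d0) (hd01 : d0 < d1) (hθ2 : 2 ≤ θ) (hθeven : Even θ)
    (x v : Fin k → ℝ → EuclideanSpace ℝ (Fin n))
    (f0 f1 : ℝ → ℝ)
    (hf0 : ∀ r, f0 r = ((r - d0) ^ θ)⁻¹)
    (hf1 : ∀ r, f1 r = ((r - d1) ^ θ)⁻¹)
    (a : Fin k → Fin k → ℝ → ℝ)
    (ha : ∀ i j t, a i j t = K / (σ ^ 2 + ‖x i t - x j t‖ ^ 2) ^ β)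
    (Λ : ℝ → ℝ)
    (hΛ : ∀ t, Λ t = Real.sqrt ((1 / (k : ℝ)) *
      ∑ i : Fin k, ∑ j ∈ Finset.univ.filter (fun j => j < i), ‖v i t - v j t‖ ^ 2))
    (hx : ∀ i, ∀ t : ℝ, 0 ≤ t → HasDerivAt (x i) (v i t) t)
    (hv : ∀ i, ∀ t : ℝ, 0 ≤ t → HasDerivAt (v i)
      ((∑ j : Fin k, a i j t • (v j t - v i t)) +
        Λ t • (∑ j ∈ Finset.univ.filter (fun j => j ≠ i),
          f0 (‖x i t - x j t‖ ^ 2) • (x i t - x j t)) +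
        Λ t • (∑ j ∈ Finset.univ.filter (fun j => j ≠ i),
          f1 (‖x i t - x j t‖ ^ 2) • (x j t - x i t))) t)
    (hinit : ∀ i j : Fin k, i ≠ j →
      d0 < ‖x i 0 - x j 0‖ ^ 2 ∧ ‖x i 0 - x j 0‖ ^ 2 < d1)
    :
    ∀ t : ℝ, 0 ≤ t → ∀ i j : Fin k, i ≠ j →
      d0 < ‖x i t - x j t‖ ^ 2 ∧ ‖x i t - x j t‖ ^ 2 < d1 := by
  classical
  have hk0 : (0:ℝ) < (k:ℝ) := by exact_mod_cast Nat.lt_of_lt_of_le Nat.zero_lt_two hk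
  have hθ1 : (0:ℝ) < (θ:ℝ) - 1 := by
    have : (2:ℝ) ≤ (θ:ℝ) := by exact_mod_cast hθ2
    linarith
  -- abbreviations
  set w : Fin k → ℝ → EuclideanSpace ℝ (Fin n) := fun i t =>
    ((∑ j : Fin k, a i j t • (v j t - v i t)) +
      Λ t • (∑ j ∈ Finset.univ.filter (fun j => j ≠ i),
        f0 (‖x i t - x j t‖ ^ 2) • (x i t - x j t)) +
      Λ t • (∑ j ∈ Finset.univ.filter (fun j => j ≠ i),
        f1 (‖x i t - x j t‖ ^ 2) • (x j t - x i t))) with hw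
  have hv' : ∀ i, ∀ t : ℝ, 0 ≤ t → HasDerivAt (v i) (w i t) t := fun i t ht => hv i t ht
  set W : ℝ → ℝ := fun t => ∑ i : Fin k,
    ∑ j ∈ Finset.univ.filter (fun j => j < i), ‖v i t - v j t‖ ^ 2 with hWdef
  have hWnn : ∀ t, 0 ≤ W t := by
    intro t
    apply Finset.sum_nonneg; intro i _
    apply Finset.sum_nonneg; intro j _
    positivity
  have hΛ' : ∀ t, Λ t = Real.sqrt (W t / k) := by
    intro t; rw [hΛ t]; congr 1; rw [hWdef]; ring
  have hΛnn : ∀ t, 0 ≤ Λ t := by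
    intro t; rw [hΛ']; exact Real.sqrt_nonneg _
  have hΛsq : ∀ t, Λ t ^ 2 = W t / k := by
    intro t; rw [hΛ']; exact Real.sq_sqrt (by positivity)
  -- velocity pair bound
  have hvels : ∀ t, ∀ p q : Fin k, q < p →
      ‖v p t - v q t‖ ≤ Real.sqrt k * Λ t := by
    intro t p q hqp
    have h1 : ‖v p t - v q t‖ ^ 2 ≤ W t := by
      rw [hWdef]
      calc ‖v p t - v q t‖ ^ 2
          ≤ ∑ j ∈ Finset.univ.filter (fun j => j < p), ‖v p t - v j t‖ ^ 2 := by
            apply Finset.single_le_sum (f := fun j => ‖v p t - v j t‖ ^ 2)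
              (fun j _ => by positivity)
            simp [hqp]
        _ ≤ ∑ i : Fin k, ∑ j ∈ Finset.univ.filter (fun j => j < i), ‖v i t - v j t‖ ^ 2 := by
            apply Finset.single_le_sum (f := fun i => ∑ j ∈ Finset.univ.filter (fun j => j < i),
              ‖v i t - v j t‖ ^ 2) (fun i _ => Finset.sum_nonneg fun j _ => by positivity)
            exact Finset.mem_univ p
    have h2 : Real.sqrt k * Λ t = Real.sqrt (W t) := by
      rw [hΛ', ← Real.sqrt_mul (by positivity) , mul_div_cancel₀]
      exact ne_of_gt hk0
    rw [h2]
    rw [show ‖v p t - v q t‖ = Real.sqrt (‖v p t - v q t‖ ^ 2) by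
      rw [Real.sqrt_sq (norm_nonneg _)]]
    exact Real.sqrt_le_sqrt h1
  -- total force is zero
  have hsumw : ∀ t, ∑ i : Fin k, w i t = 0 := by
    intro t
    have e1 : ∑ i : Fin k, ∑ j : Fin k, a i j t • (v j t - v i t) = 0 := by
      apply mySumAntisym
      intro i j
      have hsym : a i j t = a j i t := by rw [ha, ha, norm_sub_rev]
      rw [hsym, show v i t - v j t = -(v j t - v i t) from (neg_sub _ _).symm,
        smul_neg, neg_neg]
    have ext0 : ∀ (g : ℝ → ℝ) (i : Fin k),
        ∑ j ∈ Finset.univ.filter (fun j => j ≠ i), g (‖x i t - x j t‖ ^ 2) • (x i t - x j t)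
        = ∑ j : Fin k, g (‖x i t - x j t‖ ^ 2) • (x i t - x j t) := by
      intro g i
      rw [Finset.filter_ne']
      apply Finset.sum_erase
      simp
    have ext1 : ∀ (g : ℝ → ℝ) (i : Fin k),
        ∑ j ∈ Finset.univ.filter (fun j => j ≠ i), g (‖x i t - x j t‖ ^ 2) • (x j t - x i t)
        = ∑ j : Fin k, g (‖x i t - x j t‖ ^ 2) • (x j t - x i t) := by
      intro g i
      rw [Finset.filter_ne']
      apply Finset.sum_erase
      simp
    have e2 : ∑ i : Fin k, ∑ j : Fin k,
        f0 (‖x i t - x j t‖ ^ 2) • (x i t - x j t) = 0 := by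
      apply mySumAntisym
      intro i j
      have hnorm : ‖x i t - x j t‖ = ‖x j t - x i t‖ := norm_sub_rev _ _
      rw [hnorm, show x i t - x j t = -(x j t - x i t) from (neg_sub _ _).symm, smul_neg]
    have e3 : ∑ i : Fin k, ∑ j : Fin k,
        f1 (‖x i t - x j t‖ ^ 2) • (x j t - x i t) = 0 := by
      apply mySumAntisym
      intro i j
      have hnorm : ‖x i t - x j t‖ = ‖x j t - x i t‖ := norm_sub_rev _ _
      rw [hnorm, show x i t - x j t = -(x j t - x i t) from (neg_sub _ _).symm, smul_neg,
        neg_neg]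
    calc ∑ i : Fin k, w i t
        = (∑ i : Fin k, ∑ j : Fin k, a i j t • (v j t - v i t))
          + Λ t • (∑ i : Fin k, ∑ j : Fin k, f0 (‖x i t - x j t‖ ^ 2) • (x i t - x j t))
          + Λ t • (∑ i : Fin k, ∑ j : Fin k, f1 (‖x i t - x j t‖ ^ 2) • (x j t - x i t)) := by
          rw [hw]
          rw [Finset.sum_add_distrib, Finset.sum_add_distrib, Finset.smul_sum, Finset.smul_sum]
          congr 1
          · congr 1
            exact Finset.sum_congr rfl fun i _ => by rw [ext0 f0 i]
          · exact Finset.sum_congr rfl fun i _ => by rw [ext1 f1 i]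
      _ = 0 := by rw [e1, e2, e3, smul_zero]; simp
  have hWD : ∀ t : ℝ, 0 ≤ t →
      HasDerivAt W (2 * k * ∑ i : Fin k, ⟪v i t, w i t⟫) t := by
    intro t ht
    have h1 : HasDerivAt W (∑ i : Fin k, ∑ j ∈ Finset.univ.filter (fun j => j < i),
        2 * ⟪v i t - v j t, w i t - w j t⟫) t := by
      rw [hWdef]
      exact HasDerivAt.fun_sum fun i _ =>
        HasDerivAt.fun_sum fun j _ => myNormSqDeriv (hv' i t ht) (hv' j t ht)
    have h2 := myPairIdent (fun i => v i t) (fun i => w i t) (hsumw t)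
    have hid : (∑ i : Fin k, ∑ j ∈ Finset.univ.filter (fun j => j < i),
        2 * ⟪v i t - v j t, w i t - w j t⟫) = 2 * k * ∑ i : Fin k, ⟪v i t, w i t⟫ := by
      apply mul_left_cancel₀ (two_ne_zero (α := ℝ))
      rw [← h2, Finset.mul_sum]
      exact Finset.sum_congr rfl fun i _ => by rw [Finset.mul_sum]
    rw [← hid]
    exact h1
  -- decomposition of the power
  set A : ℝ → ℝ := fun t => ∑ i : Fin k, ∑ j : Fin k,
    a i j t * ⟪v i t, v j t - v i t⟫ with hAdef
  set Pd : ℝ → ℝ := fun t => ∑ i : Fin k, ∑ j ∈ Finset.univ.filter (fun j => j < i),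
    (f1 (‖x i t - x j t‖ ^ 2) - f0 (‖x i t - x j t‖ ^ 2)) *
      (2 * ⟪x i t - x j t, v i t - v j t⟫) with hPddef
  have hdecomp : ∀ t, ∑ i : Fin k, ⟪v i t, w i t⟫ = A t - Λ t * Pd t / 2 := by
    intro t
    have ext0 : ∀ i : Fin k,
        ∑ j ∈ Finset.univ.filter (fun j => j ≠ i),
          f0 (‖x i t - x j t‖ ^ 2) * ⟪v i t, x i t - x j t⟫
        = ∑ j : Fin k, f0 (‖x i t - x j t‖ ^ 2) * ⟪v i t, x i t - x j t⟫ := by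
      intro i
      rw [Finset.filter_ne']
      apply Finset.sum_erase
      simp
    have ext1 : ∀ i : Fin k,
        ∑ j ∈ Finset.univ.filter (fun j => j ≠ i),
          f1 (‖x i t - x j t‖ ^ 2) * ⟪v i t, x j t - x i t⟫
        = ∑ j : Fin k, f1 (‖x i t - x j t‖ ^ 2) * ⟪v i t, x j t - x i t⟫ := by
      intro i
      rw [Finset.filter_ne']
      apply Finset.sum_erase
      simp
    have key : ∀ i : Fin k, ⟪v i t, w i t⟫
        = (∑ j : Fin k, a i j t * ⟪v i t, v j t - v i t⟫)
          + Λ t * (∑ j : Fin k, (f0 (‖x i t - x j t‖ ^ 2) * ⟪v i t, x i t - x j t⟫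
            + f1 (‖x i t - x j t‖ ^ 2) * ⟪v i t, x j t - x i t⟫)) := by
      intro i
      rw [hw]
      rw [inner_add_right, inner_add_right, inner_sum, real_inner_smul_right,
        real_inner_smul_right, inner_sum, inner_sum]
      simp only [real_inner_smul_right]
      rw [ext0 i, ext1 i, Finset.sum_add_distrib]
      ring
    rw [Finset.sum_congr rfl fun i _ => key i, Finset.sum_add_distrib, ← Finset.mul_sum]
    have hΦdiag : ∀ i : Fin k,
        (f0 (‖x i t - x i t‖ ^ 2) * ⟪v i t, x i t - x i t⟫
          + f1 (‖x i t - x i t‖ ^ 2) * ⟪v i t, x i t - x i t⟫) = 0 := by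
      intro i; simp
    have hpairs := mySumPairs (fun i j => f0 (‖x i t - x j t‖ ^ 2) * ⟪v i t, x i t - x j t⟫
      + f1 (‖x i t - x j t‖ ^ 2) * ⟪v i t, x j t - x i t⟫) hΦdiag
    have hpair : ∀ i j : Fin k,
        ((f0 (‖x i t - x j t‖ ^ 2) * ⟪v i t, x i t - x j t⟫
          + f1 (‖x i t - x j t‖ ^ 2) * ⟪v i t, x j t - x i t⟫)
        + (f0 (‖x j t - x i t‖ ^ 2) * ⟪v j t, x j t - x i t⟫
          + f1 (‖x j t - x i t‖ ^ 2) * ⟪v j t, x i t - x j t⟫))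
        = -(1/2) * ((f1 (‖x i t - x j t‖ ^ 2) - f0 (‖x i t - x j t‖ ^ 2)) *
            (2 * ⟪x i t - x j t, v i t - v j t⟫)) := by
      intro i j
      have hnorm : ‖x j t - x i t‖ = ‖x i t - x j t‖ := norm_sub_rev _ _
      have h1 : ⟪v i t, x j t - x i t⟫ = -⟪v i t, x i t - x j t⟫ := by
        rw [show x j t - x i t = -(x i t - x j t) from (neg_sub _ _).symm, inner_neg_right]
      have h2 : ⟪v j t, x j t - x i t⟫ = -⟪v j t, x i t - x j t⟫ := by
        rw [show x j t - x i t = -(x i t - x j t) from (neg_sub _ _).symm, inner_neg_right]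
      have h3 : ⟪x i t - x j t, v i t - v j t⟫
          = ⟪v i t, x i t - x j t⟫ - ⟪v j t, x i t - x j t⟫ := by
        rw [real_inner_comm, inner_sub_left]
      rw [hnorm, h1, h2, h3]
      ring
    rw [hpairs, Finset.sum_congr rfl fun i _ => Finset.sum_congr rfl fun j _ => hpair i j]
    rw [hAdef, hPddef]
    simp only [← Finset.mul_sum]
    ring
  have hAnp : ∀ t, A t ≤ 0 := by
    intro t
    have hann : ∀ i j : Fin k, 0 ≤ a i j t := by
      intro i j
      rw [ha]
      apply div_nonneg hK.le
      exact Real.rpow_nonneg (by positivity) β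
    have hswap : A t = ∑ i : Fin k, ∑ j : Fin k, a j i t * ⟪v j t, v i t - v j t⟫ := by
      rw [hAdef]; exact Finset.sum_comm
    have hinnerpair : ∀ i j : Fin k,
        ⟪v i t, v j t - v i t⟫ + ⟪v j t, v i t - v j t⟫ = -‖v i t - v j t‖ ^ 2 := by
      intro i j
      rw [← real_inner_self_eq_norm_sq]
      simp only [inner_sub_left, inner_sub_right]
      rw [real_inner_comm (v j t) (v i t)]
      ring
    have hAA : A t + A t = ∑ i : Fin k, ∑ j : Fin k,
        -(a i j t * ‖v i t - v j t‖ ^ 2) := by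
      nth_rewrite 2 [hswap]
      rw [hAdef, ← Finset.sum_add_distrib]
      refine Finset.sum_congr rfl fun i _ => ?_
      rw [← Finset.sum_add_distrib]
      refine Finset.sum_congr rfl fun j _ => ?_
      have hsym : a j i t = a i j t := by rw [ha, ha, norm_sub_rev]
      rw [hsym, ← mul_add, hinnerpair i j]
      ring
    have hnp : ∑ i : Fin k, ∑ j : Fin k, -(a i j t * ‖v i t - v j t‖ ^ 2) ≤ 0 := by
      apply Finset.sum_nonpos
      intro i _
      apply Finset.sum_nonpos
      intro j _
      simp only [neg_nonpos]
      exact mul_nonneg (hann i j) (by positivity)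
    linarith [hAA, hnp]
  -- potential
  set P : ℝ → ℝ := fun t => ∑ i : Fin k, ∑ j ∈ Finset.univ.filter (fun j => j < i),
    myU d0 d1 θ (‖x i t - x j t‖ ^ 2) with hPdef
  have hPderiv : ∀ t : ℝ, 0 ≤ t →
      (∀ i j : Fin k, i ≠ j → ‖x i t - x j t‖ ^ 2 ∈ Set.Ioo d0 d1) →
      HasDerivAt P (Pd t) t := by
    intro t ht hgood
    rw [hPdef]
    have : HasDerivAt (fun s => ∑ i : Fin k, ∑ j ∈ Finset.univ.filter (fun j => j < i),
        myU d0 d1 θ (‖x i s - x j s‖ ^ 2))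
        (∑ i : Fin k, ∑ j ∈ Finset.univ.filter (fun j => j < i),
          (f1 (‖x i t - x j t‖ ^ 2) - f0 (‖x i t - x j t‖ ^ 2)) *
            (2 * ⟪x i t - x j t, v i t - v j t⟫)) t := by
      apply HasDerivAt.fun_sum
      intro i _
      apply HasDerivAt.fun_sum
      intro j hj
      have hji : j < i := by simpa using hj
      have hij : i ≠ j := ne_of_gt hji
      have hr := hgood i j hij
      have hderiv_r : HasDerivAt (fun s => ‖x i s - x j s‖ ^ 2)
          (2 * ⟪x i t - x j t, v i t - v j t⟫) t :=
        myNormSqDeriv (hx i t ht) (hx j t ht)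
      have hU := myU_deriv hθ2 hθeven (ne_of_gt hr.1) (ne_of_lt hr.2)
      have hcomp := hU.comp t hderiv_r
      have : HasDerivAt (fun s => myU d0 d1 θ (‖x i s - x j s‖ ^ 2))
          (((((‖x i t - x j t‖ ^ 2) - d1) ^ θ)⁻¹ - (((‖x i t - x j t‖ ^ 2) - d0) ^ θ)⁻¹) *
            (2 * ⟪x i t - x j t, v i t - v j t⟫)) t := hcomp
      rw [hf1, hf0]
      exact this
    exact this
  set C : ℝ → ℝ := fun t => ∑ i : Fin k, ∑ j ∈ Finset.univ.filter (fun j => j < i),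
    |f1 (‖x i t - x j t‖ ^ 2) - f0 (‖x i t - x j t‖ ^ 2)| * (2 * ‖x i t - x j t‖) with hCdef
  have hCnn : ∀ t, 0 ≤ C t := by
    intro t
    apply Finset.sum_nonneg; intro i _
    apply Finset.sum_nonneg; intro j _
    positivity
  have hPdBound : ∀ t, |Pd t| ≤ C t * (Real.sqrt k * Λ t) := by
    intro t
    rw [hPddef, hCdef]
    calc |∑ i : Fin k, ∑ j ∈ Finset.univ.filter (fun j => j < i),
          (f1 (‖x i t - x j t‖ ^ 2) - f0 (‖x i t - x j t‖ ^ 2)) *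
            (2 * ⟪x i t - x j t, v i t - v j t⟫)|
        ≤ ∑ i : Fin k, |∑ j ∈ Finset.univ.filter (fun j => j < i),
            (f1 (‖x i t - x j t‖ ^ 2) - f0 (‖x i t - x j t‖ ^ 2)) *
              (2 * ⟪x i t - x j t, v i t - v j t⟫)| := Finset.abs_sum_le_sum_abs _ _
      _ ≤ ∑ i : Fin k, ∑ j ∈ Finset.univ.filter (fun j => j < i),
            |(f1 (‖x i t - x j t‖ ^ 2) - f0 (‖x i t - x j t‖ ^ 2)) *
              (2 * ⟪x i t - x j t, v i t - v j t⟫)| :=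
          Finset.sum_le_sum fun i _ => Finset.abs_sum_le_sum_abs _ _
      _ ≤ ∑ i : Fin k, ∑ j ∈ Finset.univ.filter (fun j => j < i),
            (|f1 (‖x i t - x j t‖ ^ 2) - f0 (‖x i t - x j t‖ ^ 2)| * (2 * ‖x i t - x j t‖))
              * (Real.sqrt k * Λ t) := by
          refine Finset.sum_le_sum fun i _ => Finset.sum_le_sum fun j hj => ?_
          have hji : j < i := by simpa using hj
          have hvb := hvels t i j hji
          have h1 : |⟪x i t - x j t, v i t - v j t⟫|
              ≤ ‖x i t - x j t‖ * ‖v i t - v j t‖ := abs_real_inner_le_norm _ _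
          have h2 : |⟪x i t - x j t, v i t - v j t⟫|
              ≤ ‖x i t - x j t‖ * (Real.sqrt k * Λ t) :=
            h1.trans (mul_le_mul_of_nonneg_left hvb (norm_nonneg _))
          have h3 : |f1 (‖x i t - x j t‖ ^ 2) - f0 (‖x i t - x j t‖ ^ 2)|
              * |⟪x i t - x j t, v i t - v j t⟫|
              ≤ |f1 (‖x i t - x j t‖ ^ 2) - f0 (‖x i t - x j t‖ ^ 2)|
                * (‖x i t - x j t‖ * (Real.sqrt k * Λ t)) :=
            mul_le_mul_of_nonneg_left h2 (abs_nonneg _)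
          calc |(f1 (‖x i t - x j t‖ ^ 2) - f0 (‖x i t - x j t‖ ^ 2)) *
                (2 * ⟪x i t - x j t, v i t - v j t⟫)|
              = 2 * (|f1 (‖x i t - x j t‖ ^ 2) - f0 (‖x i t - x j t‖ ^ 2)|
                  * |⟪x i t - x j t, v i t - v j t⟫|) := by
                rw [abs_mul, abs_mul, abs_two]
                ring
            _ ≤ 2 * (|f1 (‖x i t - x j t‖ ^ 2) - f0 (‖x i t - x j t‖ ^ 2)|
                  * (‖x i t - x j t‖ * (Real.sqrt k * Λ t))) := by linarith
            _ = (|f1 (‖x i t - x j t‖ ^ 2) - f0 (‖x i t - x j t‖ ^ 2)|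
                  * (2 * ‖x i t - x j t‖)) * (Real.sqrt k * Λ t) := by ring
      _ = (∑ i : Fin k, ∑ j ∈ Finset.univ.filter (fun j => j < i),
            |f1 (‖x i t - x j t‖ ^ 2) - f0 (‖x i t - x j t‖ ^ 2)| * (2 * ‖x i t - x j t‖))
              * (Real.sqrt k * Λ t) := by
          rw [Finset.sum_mul]
          exact Finset.sum_congr rfl fun i _ => by rw [Finset.sum_mul]
  -- continuity
  have hrcont : ∀ (i j : Fin k) (t : ℝ), 0 ≤ t →
      ContinuousAt (fun s => ‖x i s - x j s‖ ^ 2) t := by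
    intro i j t ht
    exact (((hx i t ht).continuousAt.sub (hx j t ht).continuousAt).norm).pow 2
  -- KEY energy estimate
  have hkey : ∀ T : ℝ, 0 ≤ T →
      (∀ s ∈ Set.Icc 0 T, ∀ i j : Fin k, i ≠ j → ‖x i s - x j s‖ ^ 2 ∈ Set.Ioo d0 d1) →
      P T ≤ 2 * Λ 0 + P 0 := by
    intro T hT hgood
    -- continuity and boundedness of C on [0,T]
    have hCcont : ContinuousOn C (Set.Icc 0 T) := by
      rw [hCdef]
      apply continuousOn_finset_sum
      intro i _
      apply continuousOn_finset_sum
      intro j hj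
      have hji : j < i := by simpa using hj
      have hij : i ≠ j := ne_of_gt hji
      have hrc : ContinuousOn (fun s => ‖x i s - x j s‖ ^ 2) (Set.Icc 0 T) :=
        fun s hs => (hrcont i j s hs.1).continuousWithinAt
      have hc1 : ContinuousOn (fun s => f1 (‖x i s - x j s‖ ^ 2)) (Set.Icc 0 T) := by
        have : ∀ s ∈ Set.Icc (0:ℝ) T, f1 (‖x i s - x j s‖ ^ 2)
            = (((‖x i s - x j s‖ ^ 2) - d1) ^ θ)⁻¹ := fun s _ => hf1 _
        apply ContinuousOn.congr _ this
        apply ContinuousOn.inv₀ (((hrc.sub continuousOn_const).pow θ))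
        intro s hs
        have hmem := hgood s hs i j hij
        exact pow_ne_zero θ (sub_ne_zero.mpr (ne_of_lt hmem.2))
      have hc0 : ContinuousOn (fun s => f0 (‖x i s - x j s‖ ^ 2)) (Set.Icc 0 T) := by
        have : ∀ s ∈ Set.Icc (0:ℝ) T, f0 (‖x i s - x j s‖ ^ 2)
            = (((‖x i s - x j s‖ ^ 2) - d0) ^ θ)⁻¹ := fun s _ => hf0 _
        apply ContinuousOn.congr _ this
        apply ContinuousOn.inv₀ (((hrc.sub continuousOn_const).pow θ))
        intro s hs
        have hmem := hgood s hs i j hij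
        exact pow_ne_zero θ (sub_ne_zero.mpr (ne_of_gt hmem.1))
      have hxc : ContinuousOn (fun s => (2:ℝ) * ‖x i s - x j s‖) (Set.Icc 0 T) := by
        apply ContinuousOn.mul continuousOn_const
        exact fun s hs => (((hx i s hs.1).continuousAt.sub
          (hx j s hs.1).continuousAt).norm).continuousWithinAt
      exact ((hc1.sub hc0).abs).mul hxc
    obtain ⟨M0, hM0⟩ := IsCompact.exists_bound_of_continuousOn isCompact_Icc hCcont
    set M : ℝ := max M0 0 with hMdef
    have hM : ∀ s ∈ Set.Icc (0:ℝ) T, C s ≤ M := fun s hs =>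
      (le_abs_self _).trans (((Real.norm_eq_abs _) ▸ hM0 s hs).trans (le_max_left _ _))
    have hMnn : 0 ≤ M := le_max_right _ _
    -- the ε-regularized estimate
    have step : ∀ ε : ℝ, 0 < ε → P T / 2 ≤ Real.sqrt (W 0 / k + ε) + P 0 / 2
        + Real.sqrt k * M * Real.sqrt ε / 4 * T := by
      intro ε hε
      set Me : ℝ := Real.sqrt k * M * Real.sqrt ε / 4 with hMe
      set φ : ℝ → ℝ := fun s => Real.sqrt (W s / k + ε) + P s / 2 - Me * s with hφ
      have hders : ∀ s ∈ Set.Icc (0:ℝ) T, HasDerivAt φ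
          (((2 * k * ∑ i : Fin k, ⟪v i s, w i s⟫) / k) / (2 * Real.sqrt (W s / k + ε))
            + Pd s / 2 - Me) s := by
        intro s hs
        have hs0 : 0 ≤ s := hs.1
        have h1 : HasDerivAt (fun u => W u / k + ε)
            ((2 * k * ∑ i : Fin k, ⟪v i s, w i s⟫) / k) s :=
          ((hWD s hs0).div_const k).add_const ε
        have h2 : HasDerivAt (fun u => Real.sqrt (W u / k + ε))
            (((2 * k * ∑ i : Fin k, ⟪v i s, w i s⟫) / k) / (2 * Real.sqrt (W s / k + ε))) s :=
          h1.sqrt (by positivity)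
        have hp : HasDerivAt (fun u => P u / 2) (Pd s / 2) s :=
          (hPderiv s hs0 (hgood s hs)).div_const 2
        have hl : HasDerivAt (fun u => Me * u) Me s := by
          simpa using (hasDerivAt_id s).const_mul Me
        rw [hφ]
        exact (h2.add hp).sub hl
      have hdnp : ∀ s ∈ Set.Icc (0:ℝ) T,
          ((2 * k * ∑ i : Fin k, ⟪v i s, w i s⟫) / k) / (2 * Real.sqrt (W s / k + ε))
            + Pd s / 2 - Me ≤ 0 := by
        intro s hs
        set G : ℝ := Real.sqrt (W s / k + ε) with hG
        have hGpos : 0 < G := Real.sqrt_pos.mpr (by positivity)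
        have hG2 : G ^ 2 = Λ s ^ 2 + ε := by
          rw [hG, Real.sq_sqrt (by positivity), hΛsq]
        have hΛG : Λ s ≤ G := by nlinarith [hΛnn s, hGpos]
        have hnum : (2 * k * ∑ i : Fin k, ⟪v i s, w i s⟫) / k
            = 2 * A s - Λ s * Pd s := by
          rw [hdecomp s]
          field_simp
        rw [hnum]
        have e1 : (2 * A s - Λ s * Pd s) / (2 * G) + Pd s / 2
            = A s / G + (Pd s / 2) * (1 - Λ s / G) := by
          field_simp
          ring
        rw [e1]
        have t1 : A s / G ≤ 0 := div_nonpos_of_nonpos_of_nonneg (hAnp s) hGpos.le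
        have hfrac0 : 0 ≤ 1 - Λ s / G := by
          rw [sub_nonneg]
          exact (div_le_one hGpos).mpr hΛG
        have t2 : (Pd s / 2) * (1 - Λ s / G) ≤ (|Pd s| / 2) * (1 - Λ s / G) := by
          apply mul_le_mul_of_nonneg_right _ hfrac0
          have := le_abs_self (Pd s); linarith
        have t3 : (|Pd s| / 2) * (1 - Λ s / G)
            ≤ (C s * (Real.sqrt k * Λ s) / 2) * (1 - Λ s / G) := by
          apply mul_le_mul_of_nonneg_right _ hfrac0
          linarith [hPdBound s]
        have hlb : Λ s * (1 - Λ s / G) ≤ Real.sqrt ε / 2 :=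
          mySqrtEpsBound (hΛnn s) hGpos hε hG2
        have t4 : (C s * (Real.sqrt k * Λ s) / 2) * (1 - Λ s / G)
            ≤ (C s * Real.sqrt k / 2) * (Real.sqrt ε / 2) := by
          have h0 : (C s * Real.sqrt k / 2) * (Λ s * (1 - Λ s / G))
              ≤ (C s * Real.sqrt k / 2) * (Real.sqrt ε / 2) :=
            mul_le_mul_of_nonneg_left hlb
              (by positivity)
          calc (C s * (Real.sqrt k * Λ s) / 2) * (1 - Λ s / G)
              = (C s * Real.sqrt k / 2) * (Λ s * (1 - Λ s / G)) := by ring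
            _ ≤ (C s * Real.sqrt k / 2) * (Real.sqrt ε / 2) := h0
        have t5 : (C s * Real.sqrt k / 2) * (Real.sqrt ε / 2) ≤ Me := by
          have h1 : C s * Real.sqrt k ≤ M * Real.sqrt k :=
            mul_le_mul_of_nonneg_right (hM s hs) (Real.sqrt_nonneg _)
          have h2 : (C s * Real.sqrt k) * (Real.sqrt ε / 4)
              ≤ (M * Real.sqrt k) * (Real.sqrt ε / 4) :=
            mul_le_mul_of_nonneg_right h1 (by positivity)
          rw [hMe]
          calc (C s * Real.sqrt k / 2) * (Real.sqrt ε / 2)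
              = (C s * Real.sqrt k) * (Real.sqrt ε / 4) := by ring
            _ ≤ (M * Real.sqrt k) * (Real.sqrt ε / 4) := h2
            _ = Real.sqrt k * M * Real.sqrt ε / 4 := by ring
        linarith [t2.trans (t3.trans (t4.trans t5))]
      have hanti : AntitoneOn φ (Set.Icc 0 T) := by
        apply antitoneOn_of_hasDerivWithinAt_nonpos (convex_Icc 0 T)
          (f' := fun s => ((2 * k * ∑ i : Fin k, ⟪v i s, w i s⟫) / k)
            / (2 * Real.sqrt (W s / k + ε)) + Pd s / 2 - Me)
          (fun s hs => ((hders s hs).continuousAt).continuousWithinAt)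
        · intro s hs
          exact ((hders s (interior_subset hs)).hasDerivWithinAt)
        · intro s hs
          exact hdnp s (interior_subset hs)
      have hφT : φ T ≤ φ 0 :=
        hanti (Set.left_mem_Icc.mpr hT) (Set.right_mem_Icc.mpr hT) hT
      have h0 : 0 ≤ Real.sqrt (W T / k + ε) := Real.sqrt_nonneg _
      rw [hφ] at hφT
      simp only [mul_zero] at hφT
      have hMeT : Me * T = Real.sqrt k * M * Real.sqrt ε / 4 * T := by rw [hMe]
      linarith [hφT, h0, hMeT]
    -- take ε → 0
    have hlim : Filter.Tendsto
        (fun ε => Real.sqrt (W 0 / k + ε) + P 0 / 2 + Real.sqrt k * M * Real.sqrt ε / 4 * T)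
        (nhdsWithin 0 (Set.Ioi 0)) (nhds (Real.sqrt (W 0 / k) + P 0 / 2 + 0)) := by
      apply Filter.Tendsto.mono_left _ nhdsWithin_le_nhds
      have hc : Continuous (fun ε : ℝ =>
          Real.sqrt (W 0 / k + ε) + P 0 / 2 + Real.sqrt k * M * Real.sqrt ε / 4 * T) := by
        apply Continuous.add
        apply Continuous.add
        · exact Real.continuous_sqrt.comp (continuous_const.add continuous_id)
        · exact continuous_const
        · exact ((continuous_const.mul Real.continuous_sqrt).div_const 4).mul continuous_const
      have := hc.tendsto 0
      simpa using this
    have hfinal : P T / 2 ≤ Real.sqrt (W 0 / k) + P 0 / 2 + 0 := by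
      apply ge_of_tendsto hlim
      apply Filter.eventually_of_mem self_mem_nhdsWithin
      intro ε hε
      exact step ε hε
    rw [← hΛ' 0] at hfinal
    linarith [hfinal]
  -- positivity of initial energy bound
  set B : ℝ := 2 * Λ 0 + P 0 with hBdef
  have hBpos : 0 < B := by
    have hp : (0:ℕ) < k := lt_of_lt_of_le Nat.zero_lt_two hk
    have h1k : (1:ℕ) < k := lt_of_lt_of_le Nat.one_lt_two hk
    set p : Fin k := ⟨1, h1k⟩ with hpdef
    set q : Fin k := ⟨0, hp⟩ with hqdef
    have hqp : q < p := by simp [hpdef, hqdef, Fin.lt_def]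
    have hP0pos : 0 < P 0 := by
      rw [hPdef]
      apply Finset.sum_pos'
      · intro i _
        apply Finset.sum_nonneg
        intro j hj
        have hji : j < i := by simpa using hj
        have hr := hinit i j (ne_of_gt hji)
        exact (myU_pos hθ2 hr.1 hr.2).le
      · refine ⟨p, Finset.mem_univ p, ?_⟩
        apply Finset.sum_pos'
        · intro j hj
          have hji : j < p := by simpa using hj
          have hr := hinit p j (ne_of_gt hji)
          exact (myU_pos hθ2 hr.1 hr.2).le
        · refine ⟨q, by simpa using hqp, ?_⟩
          have hr := hinit p q (ne_of_gt hqp)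
          exact myU_pos hθ2 hr.1 hr.2
    rw [hBdef]
    have := hΛnn 0
    linarith
  set δ : ℝ := min 1 ((((θ:ℝ)-1)*B + 1)⁻¹) with hδdef
  have hδpos : 0 < δ := lt_min one_pos (by positivity)
  -- barrier conclusion
  have hbarrier : ∀ T : ℝ, 0 ≤ T →
      (∀ s ∈ Set.Icc 0 T, ∀ i j : Fin k, i ≠ j → ‖x i s - x j s‖ ^ 2 ∈ Set.Ioo d0 d1) →
      ∀ i j : Fin k, i ≠ j →
        ‖x i T - x j T‖ ^ 2 ∈ Set.Icc (d0 + δ) (d1 - δ) := by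
    intro T hT hgood
    have hPT : P T ≤ B := hkey T hT hgood
    have hgT : ∀ i j : Fin k, i ≠ j → ‖x i T - x j T‖ ^ 2 ∈ Set.Ioo d0 d1 :=
      hgood T (Set.right_mem_Icc.mpr hT)
    have hord : ∀ p q : Fin k, q < p →
        ‖x p T - x q T‖ ^ 2 ∈ Set.Icc (d0 + δ) (d1 - δ) := by
      intro p q hqp
      have hUnn : ∀ i j : Fin k, j < i →
          0 ≤ myU d0 d1 θ (‖x i T - x j T‖ ^ 2) := by
        intro i j hji
        have hr := hgT i j (ne_of_gt hji)
        exact (myU_pos hθ2 hr.1 hr.2).le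
      have hUle : myU d0 d1 θ (‖x p T - x q T‖ ^ 2) ≤ P T := by
        rw [hPdef]
        calc myU d0 d1 θ (‖x p T - x q T‖ ^ 2)
            ≤ ∑ j ∈ Finset.univ.filter (fun j => j < p),
                myU d0 d1 θ (‖x p T - x j T‖ ^ 2) := by
              apply Finset.single_le_sum (f := fun j => myU d0 d1 θ (‖x p T - x j T‖ ^ 2))
                (fun j hj => hUnn p j (by simpa using hj))
              simpa using hqp
          _ ≤ ∑ i : Fin k, ∑ j ∈ Finset.univ.filter (fun j => j < i),
                myU d0 d1 θ (‖x i T - x j T‖ ^ 2) := by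
              apply Finset.single_le_sum (f := fun i =>
                ∑ j ∈ Finset.univ.filter (fun j => j < i), myU d0 d1 θ (‖x i T - x j T‖ ^ 2))
                (fun i _ => Finset.sum_nonneg fun j hj => hUnn i j (by simpa using hj))
              exact Finset.mem_univ p
      have hUB : myU d0 d1 θ (‖x p T - x q T‖ ^ 2) ≤ B := hUle.trans hPT
      have hr := hgT p q (ne_of_gt hqp)
      have hs0 : 0 < ‖x p T - x q T‖ ^ 2 - d0 := sub_pos.mpr hr.1
      have hs1 : 0 < d1 - ‖x p T - x q T‖ ^ 2 := sub_pos.mpr hr.2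
      have hinv0 : (0:ℝ) ≤ ((‖x p T - x q T‖ ^ 2 - d0) ^ (θ-1))⁻¹ := by positivity
      have hinv1 : (0:ℝ) ≤ ((d1 - ‖x p T - x q T‖ ^ 2) ^ (θ-1))⁻¹ := by positivity
      have hU0 : ((θ:ℝ)-1)⁻¹ * ((‖x p T - x q T‖ ^ 2 - d0) ^ (θ-1))⁻¹ ≤ B := by
        calc ((θ:ℝ)-1)⁻¹ * ((‖x p T - x q T‖ ^ 2 - d0) ^ (θ-1))⁻¹
            ≤ myU d0 d1 θ (‖x p T - x q T‖ ^ 2) := by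
              rw [myU]
              have : (0:ℝ) ≤ ((θ:ℝ)-1)⁻¹ := by positivity
              nlinarith [hinv1]
          _ ≤ B := hUB
      have hU1 : ((θ:ℝ)-1)⁻¹ * ((d1 - ‖x p T - x q T‖ ^ 2) ^ (θ-1))⁻¹ ≤ B := by
        calc ((θ:ℝ)-1)⁻¹ * ((d1 - ‖x p T - x q T‖ ^ 2) ^ (θ-1))⁻¹
            ≤ myU d0 d1 θ (‖x p T - x q T‖ ^ 2) := by
              rw [myU]
              have : (0:ℝ) ≤ ((θ:ℝ)-1)⁻¹ := by positivity
              nlinarith [hinv0]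
          _ ≤ B := hUB
      have hb0 := pow_inv_barrier hθ2 hBpos hs0 hU0
      have hb1 := pow_inv_barrier hθ2 hBpos hs1 hU1
      rw [← hδdef] at hb0 hb1
      constructor
      · linarith
      · linarith
    intro i j hij
    rcases lt_trichotomy j i with h | h | h
    · exact hord i j h
    · exact absurd h.symm hij
    · have := hord j i h
      rwa [norm_sub_rev] at this
  -- bootstrap
  by_contra hcon
  push_neg at hcon
  obtain ⟨t0, ht0, i0, j0, hij0, hbad0⟩ := hcon
  set Bad : Set ℝ := {t : ℝ | 0 ≤ t ∧
    ¬ (∀ i j : Fin k, i ≠ j → ‖x i t - x j t‖ ^ 2 ∈ Set.Ioo d0 d1)} with hBad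
  have ht0Bad : t0 ∈ Bad := by
    refine ⟨ht0, fun hg => ?_⟩
    have := hg i0 j0 hij0
    exact absurd (hbad0 this.1) (not_le.mpr this.2)
  have hne : Bad.Nonempty := ⟨t0, ht0Bad⟩
  have hbdd : BddBelow Bad := ⟨0, fun b hb => hb.1⟩
  set Ts : ℝ := sInf Bad with hTs
  have hTs0 : 0 ≤ Ts := le_csInf hne fun b hb => hb.1
  have hgoodlt : ∀ s : ℝ, 0 ≤ s → s < Ts →
      ∀ i j : Fin k, i ≠ j → ‖x i s - x j s‖ ^ 2 ∈ Set.Ioo d0 d1 := by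
    intro s hs0 hsT
    by_contra hbad
    have : Ts ≤ s := csInf_le hbdd ⟨hs0, hbad⟩
    linarith
  have hgoodIcc : ∀ T' : ℝ, 0 ≤ T' → T' < Ts →
      ∀ s ∈ Set.Icc (0:ℝ) T', ∀ i j : Fin k, i ≠ j →
        ‖x i s - x j s‖ ^ 2 ∈ Set.Ioo d0 d1 :=
    fun T' _ hlt s hs => hgoodlt s hs.1 (lt_of_le_of_lt hs.2 hlt)
  have hgoodTs : ∀ i j : Fin k, i ≠ j → ‖x i Ts - x j Ts‖ ^ 2 ∈ Set.Ioo d0 d1 := by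
    rcases eq_or_lt_of_le hTs0 with heq | hpos
    · intro i j hij
      rw [← heq]
      exact ⟨(hinit i j hij).1, (hinit i j hij).2⟩
    · intro i j hij
      have hseq : ∀ m : ℕ, ‖x i (Ts - Ts/(m+1)) - x j (Ts - Ts/(m+1))‖ ^ 2
          ∈ Set.Icc (d0 + δ) (d1 - δ) := by
        intro m
        have hm1 : (0:ℝ) < (m:ℝ) + 1 := by positivity
        have hq : 0 < Ts/((m:ℝ)+1) := by positivity
        have hqle : Ts/((m:ℝ)+1) ≤ Ts := by
          apply div_le_self hpos.le
          have : (0:ℝ) ≤ (m:ℝ) := Nat.cast_nonneg m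
          linarith
        have hge : 0 ≤ Ts - Ts/((m:ℝ)+1) := by linarith
        have hlt : Ts - Ts/((m:ℝ)+1) < Ts := by linarith
        exact hbarrier _ hge (hgoodIcc _ hge hlt) i j hij
      have htend : Filter.Tendsto (fun m : ℕ => Ts - Ts/((m:ℝ)+1))
          Filter.atTop (nhds Ts) := by
        have h1 : Filter.Tendsto (fun m : ℕ => Ts/((m:ℝ)+1)) Filter.atTop (nhds 0) := by
          have h2 := tendsto_one_div_add_atTop_nhds_zero_nat (𝕜 := ℝ)
          have h3 := h2.const_mul Ts
          simpa [div_eq_mul_inv, mul_comm, one_div] using h3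
        have h4 := Filter.Tendsto.sub (tendsto_const_nhds (x := Ts)) h1
        simpa using h4
      have hct : Filter.Tendsto (fun m : ℕ =>
          ‖x i (Ts - Ts/((m:ℝ)+1)) - x j (Ts - Ts/((m:ℝ)+1))‖ ^ 2)
          Filter.atTop (nhds (‖x i Ts - x j Ts‖ ^ 2)) :=
        (hrcont i j Ts hTs0).tendsto.comp htend
      have hmem : ‖x i Ts - x j Ts‖ ^ 2 ∈ Set.Icc (d0 + δ) (d1 - δ) :=
        isClosed_Icc.mem_of_tendsto hct (Filter.Eventually.of_forall hseq)
      exact ⟨lt_of_lt_of_le (by linarith) hmem.1, lt_of_le_of_lt hmem.2 (by linarith)⟩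
  have hev : ∀ᶠ s in nhds Ts, ∀ i j : Fin k, i ≠ j →
      ‖x i s - x j s‖ ^ 2 ∈ Set.Ioo d0 d1 := by
    rw [Filter.eventually_all]
    intro i
    rw [Filter.eventually_all]
    intro j
    by_cases hij : i = j
    · exact Filter.Eventually.of_forall fun s h => absurd hij h
    · have hc := hrcont i j Ts hTs0
      have hmem := isOpen_Ioo.mem_nhds (hgoodTs i j hij)
      exact (hc.eventually_mem hmem).mono fun s hs _ => hs
  obtain ⟨η, hη, hball⟩ := Metric.eventually_nhds_iff.mp hev
  have hlower : ∀ b ∈ Bad, Ts + η/2 ≤ b := by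
    intro b hb
    by_contra hcb
    push_neg at hcb
    have hbT : Ts ≤ b := csInf_le hbdd hb
    have hd : dist b Ts < η := by
      rw [Real.dist_eq, abs_lt]
      constructor <;> linarith
    exact hb.2 (hball hd)
  have : Ts + η/2 ≤ Ts := le_csInf hne hlower
  linarith
end

section
/- Under the flocking dynamics with 0 < β ≤ 1/2, the velocity fluctuation is integrable: ∫₀^∞ V(t) dt < ∞. -/
set_option maxHeartbeats 16000000

open scoped RealInnerProductSpace
open Finset Set

section Aux

variable {F : Type*} [NormedAddCommGroup F] [InnerProductSpace ℝ F] {m : ℕ}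

lemma aux_sum_antisym (f : Fin m → Fin m → F) (h : ∀ i j, f i j = - f j i) :
    ∑ i, ∑ j, f i j = 0 := by
  have h2 : (∑ i, ∑ j, f i j) = - ∑ i, ∑ j, f i j := by
    calc ∑ i, ∑ j, f i j = ∑ j, ∑ i, f i j := Finset.sum_comm
    _ = ∑ j, ∑ i, - f j i := by
        exact Finset.sum_congr rfl fun j _ => Finset.sum_congr rfl fun i _ => by rw [← h i j]
    _ = - ∑ j, ∑ i, f j i := by simp [Finset.sum_neg_distrib]
  have h2' := add_eq_zero_iff_eq_neg.2 h2
  have h3 : (2:ℝ) • (∑ i, ∑ j, f i j) = 0 := by rw [two_smul]; exact h2'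
  simpa using (smul_eq_zero.1 h3).resolve_left (by norm_num)

lemma aux_half (f : Fin m → Fin m → ℝ) (hsym : ∀ i j, f i j = f j i) (hdiag : ∀ i, f i i = 0) :
    ∑ i, ∑ j, f i j = 2 * ∑ i, ∑ j ∈ Finset.univ.filter (fun j => j < i), f i j := by
  have hsplit : ∀ i : Fin m, (∑ j, f i j) =
      (∑ j ∈ Finset.univ.filter (fun j => j < i), f i j)
      + (∑ j ∈ Finset.univ.filter (fun j => ¬ j < i), f i j) := by
    intro i; rw [Finset.sum_filter_add_sum_filter_not]
  have hsub : ∀ i : Fin m, (∑ j ∈ Finset.univ.filter (fun j => ¬ j < i), f i j)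
      = ∑ j ∈ Finset.univ.filter (fun j => i < j), f i j := by
    intro i
    refine (Finset.sum_subset ?_ ?_).symm
    · intro j hj
      simp only [Finset.mem_filter, Finset.mem_univ, true_and] at hj ⊢
      exact not_lt_of_gt hj
    · intro j _ hj
      simp only [Finset.mem_filter, Finset.mem_univ, true_and, not_lt] at *
      have : j = i := le_antisymm (by simpa using hj) (by assumption)
      rw [this, hdiag]
  have hswap : (∑ i, ∑ j ∈ Finset.univ.filter (fun j => i < j), f i j)
      = ∑ i, ∑ j ∈ Finset.univ.filter (fun j => j < i), f i j := by
    rw [Finset.sum_comm' (s' := fun j => Finset.univ.filter (fun i => i < j)) (t' := Finset.univ)]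
    · exact Finset.sum_congr rfl fun j _ => Finset.sum_congr rfl fun i _ => hsym _ _
    · intro i j; simp
  calc ∑ i, ∑ j, f i j
      = (∑ i, ∑ j ∈ Finset.univ.filter (fun j => j < i), f i j)
        + ∑ i, ∑ j ∈ Finset.univ.filter (fun j => i < j), f i j := by
        rw [← Finset.sum_add_distrib]
        exact Finset.sum_congr rfl fun i _ => by rw [hsplit i, hsub i]
    _ = 2 * ∑ i, ∑ j ∈ Finset.univ.filter (fun j => j < i), f i j := by
        rw [hswap]; ring

lemma aux_norm_sum (u : Fin m → F) (hu : ∑ i, u i = 0) :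
    ∑ i, ∑ j, ‖u i - u j‖^2 = 2 * m * ∑ i, ‖u i‖^2 := by
  have hexp : ∀ i j : Fin m, ‖u i - u j‖^2 = ‖u i‖^2 - 2 * ⟪u i, u j⟫ + ‖u j‖^2 :=
    fun i j => norm_sub_sq_real _ _
  have hinner : ∑ i, ∑ j, ⟪u i, u j⟫ = 0 := by
    have h' : ∑ i, ∑ j, ⟪u i, u j⟫ = ⟪∑ i, u i, ∑ j, u j⟫ := by
      rw [sum_inner]; exact Finset.sum_congr rfl fun i _ => by rw [inner_sum]
    rw [h', hu, inner_zero_left]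
  calc ∑ i, ∑ j, ‖u i - u j‖^2
      = ∑ i, ∑ j, (‖u i‖^2 - 2 * ⟪u i, u j⟫ + ‖u j‖^2) := by
        exact Finset.sum_congr rfl fun i _ => Finset.sum_congr rfl fun j _ => hexp i j
    _ = ∑ i, ((m : ℝ) * ‖u i‖^2 - 2 * ∑ j, ⟪u i, u j⟫ + ∑ j, ‖u j‖^2) := by
        refine Finset.sum_congr rfl fun i _ => ?_
        rw [Finset.sum_add_distrib, Finset.sum_sub_distrib, Finset.sum_const, Finset.card_univ,
          Fintype.card_fin, ← Finset.mul_sum, nsmul_eq_mul]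
    _ = (m:ℝ) * ∑ i, ‖u i‖^2 - 2 * ∑ i, ∑ j, ⟪u i, u j⟫ + (m:ℝ) * ∑ j, ‖u j‖^2 := by
        rw [Finset.sum_add_distrib, Finset.sum_sub_distrib, ← Finset.mul_sum, ← Finset.mul_sum,
          Finset.sum_const, Finset.card_univ, Fintype.card_fin, nsmul_eq_mul]
    _ = 2 * m * ∑ i, ‖u i‖^2 := by rw [hinner]; ring

lemma aux_sym_pair (φ : Fin m → Fin m → ℝ) (hφ : ∀ i j, φ i j = φ j i)
    (q : Fin m → Fin m → F) (hq : ∀ i j, q i j = - q j i) (u : Fin m → F) :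
    2 * ∑ i, ∑ j, φ i j * ⟪q i j, u i⟫ = ∑ i, ∑ j, φ i j * ⟪q i j, u i - u j⟫ := by
  have hswap : ∑ i, ∑ j, φ i j * ⟪q i j, u i⟫ = ∑ i, ∑ j, φ i j * ⟪- q i j, u j⟫ := by
    calc ∑ i, ∑ j, φ i j * ⟪q i j, u i⟫ = ∑ j, ∑ i, φ i j * ⟪q i j, u i⟫ := Finset.sum_comm
    _ = ∑ i, ∑ j, φ j i * ⟪q j i, u j⟫ := rfl
    _ = ∑ i, ∑ j, φ i j * ⟪- q i j, u j⟫ := by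
        refine Finset.sum_congr rfl fun i _ => Finset.sum_congr rfl fun j _ => ?_
        rw [hφ j i, hq j i]
  have key : 2 * ∑ i, ∑ j, φ i j * ⟪q i j, u i⟫
      = ∑ i, ∑ j, (φ i j * ⟪q i j, u i⟫ + φ i j * ⟪- q i j, u j⟫) := by
    rw [two_mul]; nth_rewrite 2 [hswap]
    rw [← Finset.sum_add_distrib]
    exact Finset.sum_congr rfl fun i _ => (Finset.sum_add_distrib).symm
  rw [key]
  refine Finset.sum_congr rfl fun i _ => Finset.sum_congr rfl fun j _ => ?_
  rw [inner_neg_left, inner_sub_right]; ring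

lemma aux_key_alg (A G : Fin m → Fin m → ℝ) (hA : ∀ i j, A i j = A j i)
    (hG : ∀ i j, G i j = G j i) (w X : Fin m → F) (c : F) (l : ℝ) :
    ∑ i, (2 * ⟪(∑ j, A i j • (w j - w i)) + l • (∑ j, G i j • (X i - X j)), w i - c⟫)
      = -(∑ i, ∑ j, A i j * ‖w i - w j‖^2)
        + l * ∑ i, ∑ j, G i j * ⟪X i - X j, w i - w j⟫ := by
  have expand : ∀ i, ⟪(∑ j, A i j • (w j - w i)) + l • (∑ j, G i j • (X i - X j)), w i - c⟫
      = (∑ j, A i j * ⟪w j - w i, w i - c⟫) + l * ∑ j, G i j * ⟪X i - X j, w i - c⟫ := by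
    intro i
    rw [inner_add_left, inner_smul_left, sum_inner, sum_inner]
    simp only [inner_smul_left, RCLike.inner_apply, conj_trivial]
  have step1 : ∑ i, (2 * ⟪(∑ j, A i j • (w j - w i)) + l • (∑ j, G i j • (X i - X j)), w i - c⟫)
      = 2 * (∑ i, ∑ j, A i j * ⟪w j - w i, (w i - c)⟫)
        + l * (2 * ∑ i, ∑ j, G i j * ⟪X i - X j, (w i - c)⟫) := by
    simp only [expand, mul_add, Finset.mul_sum, Finset.sum_add_distrib, mul_left_comm,
      mul_assoc]
  rw [step1]
  rw [aux_sym_pair A hA (fun i j => w j - w i) (fun i j => by abel) (fun i => w i - c)]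
  rw [aux_sym_pair G hG (fun i j => X i - X j) (fun i j => by abel) (fun i => w i - c)]
  congr 1
  · rw [← Finset.sum_neg_distrib]
    refine Finset.sum_congr rfl fun i _ => ?_
    rw [← Finset.sum_neg_distrib]
    refine Finset.sum_congr rfl fun j _ => ?_
    have h1 : (w i - c) - (w j - c) = w i - w j := by abel
    rw [h1]
    have h2 : ⟪w j - w i, w i - w j⟫ = - ‖w i - w j‖^2 := by
      rw [show w j - w i = -(w i - w j) by abel, inner_neg_left, real_inner_self_eq_norm_sq]
    rw [h2]; ring
  · congr 1
    refine Finset.sum_congr rfl fun i _ => Finset.sum_congr rfl fun j _ => ?_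
    congr 2
    abel

lemma aux_sum_nonpos_le {α : Type*} [DecidableEq α] {s : Finset α} {f : α → ℝ} {i : α}
    (hi : i ∈ s) (h : ∀ j ∈ s, f j ≤ 0) : ∑ j ∈ s, f j ≤ f i := by
  rw [← Finset.add_sum_erase s f hi]
  have h' : ∑ j ∈ s.erase i, f j ≤ 0 :=
    Finset.sum_nonpos fun j hj => h j (Finset.mem_of_mem_erase hj)
  linarith

end Aux

section Psi
variable {θ : ℕ} {d0 d1 : ℝ}

noncomputable def psiF (θ : ℕ) (d0 d1 : ℝ) : ℝ → ℝ :=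
  fun s => (((θ:ℝ) - 1))⁻¹ * ((((s - d1)^(θ-1))⁻¹) - (((s - d0)^(θ-1))⁻¹))

lemma aux_inv_pow_deriv (hθ : 2 ≤ θ) (d r : ℝ) (hr : r ≠ d) :
    HasDerivAt (fun s => ((s - d)^(θ-1))⁻¹) (-(((θ:ℝ) - 1) * ((r - d)^θ)⁻¹)) r := by
  have hp : r - d ≠ 0 := sub_ne_zero.2 hr
  have h1 : HasDerivAt (fun s : ℝ => (s - d)^(θ-1))
      ((θ - 1 : ℕ) * (r - d)^(θ-1-1) * 1) r :=
    ((hasDerivAt_id r).sub_const d).pow (θ-1)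
  have h2 := h1.inv (pow_ne_zero _ hp)
  refine h2.congr_deriv ?_
  have hkey : ((r - d)^(θ-1))^2 = (r - d)^(θ-1-1) * (r - d)^θ := by
    rw [← pow_mul, ← pow_add]; congr 1; omega
  have hc : ((θ - 1 : ℕ) : ℝ) = (θ:ℝ) - 1 := by
    have h1' : (1:ℕ) ≤ θ := by omega
    push_cast [Nat.cast_sub h1']; ring
  rw [hkey, hc]
  field_simp

lemma psiF_hasDerivAt (hθ : 2 ≤ θ) (r : ℝ) (h0 : r ≠ d0) (h1 : r ≠ d1) :
    HasDerivAt (psiF θ d0 d1) (((r - d0)^θ)⁻¹ - ((r - d1)^θ)⁻¹) r := by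
  have hc : ((θ:ℝ) - 1) ≠ 0 := by
    have h2' : (2:ℝ) ≤ (θ:ℝ) := by exact_mod_cast hθ
    linarith
  have h := ((aux_inv_pow_deriv hθ d1 r h1).sub (aux_inv_pow_deriv hθ d0 r h0)).const_mul
    (((θ:ℝ) - 1))⁻¹
  refine h.congr_deriv ?_
  field_simp
  ring

lemma psiF_le (hθ2 : 2 ≤ θ) (hθe : Even θ) {r : ℝ} (h0 : d0 < r) (h1 : r < d1) :
    psiF θ d0 d1 r ≤ -(((θ:ℝ) - 1))⁻¹ * max (((r - d0)^(θ-1))⁻¹) (((d1 - r)^(θ-1))⁻¹) := by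
  have hodd : Odd (θ - 1) := Nat.Even.sub_odd (by omega) hθe odd_one
  have hc : (0:ℝ) < ((θ:ℝ) - 1) := by
    have h2' : (2:ℝ) ≤ (θ:ℝ) := by exact_mod_cast hθ2
    linarith
  have hA : (0:ℝ) < ((r - d0)^(θ-1))⁻¹ := inv_pos.2 (pow_pos (by linarith) _)
  have hBeq : ((r - d1)^(θ-1)) = -((d1 - r)^(θ-1)) := by
    rw [show r - d1 = -(d1 - r) by ring, hodd.neg_pow]
  have hB : (0:ℝ) < ((d1 - r)^(θ-1))⁻¹ := inv_pos.2 (pow_pos (by linarith) _)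
  have hval : psiF θ d0 d1 r
      = (((θ:ℝ) - 1))⁻¹ * (-(((d1 - r)^(θ-1))⁻¹) - (((r - d0)^(θ-1))⁻¹)) := by
    unfold psiF; rw [hBeq, inv_neg]
  rw [hval]
  rcases max_cases (((r - d0)^(θ-1))⁻¹) (((d1 - r)^(θ-1))⁻¹) with ⟨hm, _⟩ | ⟨hm, _⟩ <;>
    rw [hm] <;> nlinarith [inv_pos.2 hc]

lemma psiF_nonpos (hθ2 : 2 ≤ θ) (hθe : Even θ) {r : ℝ} (h0 : d0 < r) (h1 : r < d1) :
    psiF θ d0 d1 r ≤ 0 := by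
  have h := psiF_le hθ2 hθe h0 h1 (d0 := d0)
  have hc : (0:ℝ) < ((θ:ℝ) - 1) := by
    have h2' : (2:ℝ) ≤ (θ:ℝ) := by exact_mod_cast hθ2
    linarith
  have hA : (0:ℝ) < ((r - d0)^(θ-1))⁻¹ := inv_pos.2 (pow_pos (by linarith) _)
  refine le_trans h ?_
  have hmax : (0:ℝ) ≤ max (((r - d0)^(θ-1))⁻¹) (((d1 - r)^(θ-1))⁻¹) :=
    le_trans hA.le (le_max_left _ _)
  nlinarith [inv_pos.2 hc]

end Psi

lemma aux_arith (S Q c0k C ε s z : ℝ) (hε : 0 < ε) (hs : 0 ≤ s) (hsz : s ≤ z)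
    (hz2 : z^2 = s^2 + ε^2) (hzε : ε ≤ z) (hS : 2*c0k*s^2 ≤ S) (hQ : |Q| ≤ C * s)
    (hc0k : 0 ≤ c0k) (hC : 0 ≤ C) :
    (-S + s * Q) / (2*z) ≤ -(c0k * z) + (c0k + C/2)*ε + Q/2 := by
  have hz : 0 < z := lt_of_lt_of_le hε hzε
  rw [div_le_iff₀ (by positivity)]
  have h9 : c0k * z^2 = c0k * (s^2 + ε^2) := by rw [hz2]
  have hQ1 : -(C*s) ≤ Q := (abs_le.1 hQ).1
  have hQ2 : Q ≤ C*s := (abs_le.1 hQ).2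
  have h5 : (z - s) * s ≤ ε^2 := by nlinarith
  have h6 : -(C*ε^2) ≤ (z - s) * Q := by
    nlinarith [mul_le_mul_of_nonneg_left hQ1 (sub_nonneg.2 hsz),
      mul_le_mul_of_nonneg_right h5 hC]
  have h7 : 0 ≤ c0k * (ε * (z - ε)) := by
    have : 0 ≤ z - ε := by linarith
    positivity
  have h8 : 0 ≤ C * (ε * (z - ε)) := by
    have : 0 ≤ z - ε := by linarith
    positivity
  nlinarith [h6, h7, h8, hS, h9]

theorem stmt_11
    {n k : ℕ} (hn : 1 ≤ n) (hk : 2 ≤ k)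
    (K σ β d0 d1 : ℝ) (θ : ℕ)
    (hK : 0 < K) (hσ : 0 < σ) (hβ0 : 0 < β) (hβ : β ≤ 1 / 2)
    (hd0 : 0 < d0) (hd01 : d0 < d1) (hθ2 : 2 ≤ θ) (hθeven : Even θ)
    (x v : Fin k → ℝ → EuclideanSpace ℝ (Fin n))
    (f0 f1 : ℝ → ℝ)
    (hf0 : ∀ r, f0 r = ((r - d0) ^ θ)⁻¹)
    (hf1 : ∀ r, f1 r = ((r - d1) ^ θ)⁻¹)
    (a : Fin k → Fin k → ℝ → ℝ)
    (ha : ∀ i j t, a i j t = K / (σ ^ 2 + ‖x i t - x j t‖ ^ 2) ^ β)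
    (Λ : ℝ → ℝ)
    (hΛ : ∀ t, Λ t = Real.sqrt ((1 / (k : ℝ)) *
      ∑ i : Fin k, ∑ j ∈ Finset.univ.filter (fun j => j < i), ‖v i t - v j t‖ ^ 2))
    (hx : ∀ i, ∀ t : ℝ, 0 ≤ t → HasDerivAt (x i) (v i t) t)
    (hv : ∀ i, ∀ t : ℝ, 0 ≤ t → HasDerivAt (v i)
      ((∑ j : Fin k, a i j t • (v j t - v i t)) +
        Λ t • (∑ j ∈ Finset.univ.filter (fun j => j ≠ i),
          f0 (‖x i t - x j t‖ ^ 2) • (x i t - x j t)) +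
        Λ t • (∑ j ∈ Finset.univ.filter (fun j => j ≠ i),
          f1 (‖x i t - x j t‖ ^ 2) • (x j t - x i t))) t)
    (hinit : ∀ i j : Fin k, i ≠ j →
      d0 < ‖x i 0 - x j 0‖ ^ 2 ∧ ‖x i 0 - x j 0‖ ^ 2 < d1)
    (vbar : ℝ → EuclideanSpace ℝ (Fin n))
    (hvbar : ∀ t, vbar t = (k : ℝ)⁻¹ • ∑ i : Fin k, v i t)
    (V : ℝ → ℝ)
    (hV : ∀ t, V t = Real.sqrt (∑ i : Fin k, ‖v i t - vbar t‖ ^ 2))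
    :
    MeasureTheory.IntegrableOn V (Set.Ici (0 : ℝ)) := by
  classical
  have hk0 : (0:ℝ) < k := by
    have h : 0 < k := by omega
    exact_mod_cast h
  have hkne : (k:ℝ) ≠ 0 := ne_of_gt hk0
  have hvc : ∀ (i : Fin k) (t:ℝ), 0 ≤ t → ContinuousAt (v i) t :=
    fun i t ht => (hv i t ht).continuousAt
  have hxc : ∀ (i : Fin k) (t:ℝ), 0 ≤ t → ContinuousAt (x i) t :=
    fun i t ht => (hx i t ht).continuousAt
  set Gf : Fin k → Fin k → ℝ → ℝ :=
    fun i j t => f0 (‖x i t - x j t‖^2) - f1 (‖x i t - x j t‖^2) with hGf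
  have hGsym : ∀ i j t, Gf i j t = Gf j i t := by
    intro i j t; simp only [hGf]; rw [norm_sub_rev]
  have hasym : ∀ i j t, a i j t = a j i t := by
    intro i j t; rw [ha, ha, norm_sub_rev]
  have hv' : ∀ (i : Fin k) (t:ℝ), 0 ≤ t → HasDerivAt (v i)
      ((∑ j, a i j t • (v j t - v i t)) + Λ t • (∑ j, Gf i j t • (x i t - x j t))) t := by
    intro i t ht
    have e0 : (∑ j ∈ Finset.univ.filter (fun j => j ≠ i),
        f0 (‖x i t - x j t‖^2) • (x i t - x j t))
        = ∑ j, f0 (‖x i t - x j t‖^2) • (x i t - x j t) := by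
      refine Finset.sum_subset (Finset.subset_univ _) ?_
      intro j _ hj
      simp only [Finset.mem_filter, Finset.mem_univ, true_and, not_not] at hj
      rw [hj]; simp
    have e1 : (∑ j ∈ Finset.univ.filter (fun j => j ≠ i),
        f1 (‖x i t - x j t‖^2) • (x j t - x i t))
        = ∑ j, f1 (‖x i t - x j t‖^2) • (x j t - x i t) := by
      refine Finset.sum_subset (Finset.subset_univ _) ?_
      intro j _ hj
      simp only [Finset.mem_filter, Finset.mem_univ, true_and, not_not] at hj
      rw [hj]; simp
    have hval : (∑ j : Fin k, a i j t • (v j t - v i t)) +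
        Λ t • (∑ j ∈ Finset.univ.filter (fun j => j ≠ i),
          f0 (‖x i t - x j t‖ ^ 2) • (x i t - x j t)) +
        Λ t • (∑ j ∈ Finset.univ.filter (fun j => j ≠ i),
          f1 (‖x i t - x j t‖ ^ 2) • (x j t - x i t))
        = (∑ j, a i j t • (v j t - v i t)) + Λ t • (∑ j, Gf i j t • (x i t - x j t)) := by
      rw [e0, e1, add_assoc, ← smul_add, ← Finset.sum_add_distrib]
      congr 2
      refine Finset.sum_congr rfl fun j _ => ?_
      simp only [hGf]
      rw [sub_smul, show x j t - x i t = -(x i t - x j t) by abel, smul_neg]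
      abel
    have h := hv i t ht
    rwa [hval] at h
  have hr_deriv : ∀ (i j : Fin k) (t:ℝ), 0 ≤ t → HasDerivAt (fun s => ‖x i s - x j s‖^2)
      (2 * ⟪x i t - x j t, v i t - v j t⟫) t := by
    intro i j t ht
    have h1 := HasDerivAt.inner ℝ ((hx i t ht).sub (hx j t ht)) ((hx i t ht).sub (hx j t ht))
    have h2 : (fun s => ⟪x i s - x j s, x i s - x j s⟫) = fun s => ‖x i s - x j s‖^2 := by
      funext s; rw [real_inner_self_eq_norm_sq]
    simp only [Pi.sub_apply] at h1
    rw [h2] at h1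
    refine h1.congr_deriv ?_
    rw [real_inner_comm]
    ring
  have hvbar_deriv : ∀ (t:ℝ), 0 ≤ t → HasDerivAt vbar 0 t := by
    intro t ht
    have hsum : HasDerivAt (fun s => ∑ i, v i s)
        (∑ i, ((∑ j, a i j t • (v j t - v i t)) + Λ t • (∑ j, Gf i j t • (x i t - x j t)))) t :=
      HasDerivAt.fun_sum (fun i _ => hv' i t ht)
    have hzero : (∑ i, ((∑ j, a i j t • (v j t - v i t))
        + Λ t • (∑ j, Gf i j t • (x i t - x j t)))) = 0 := by
      rw [Finset.sum_add_distrib]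
      have hA0 : (∑ i, ∑ j, a i j t • (v j t - v i t)) = 0 := by
        apply aux_sum_antisym
        intro i j
        rw [hasym i j, show v j t - v i t = -(v i t - v j t) by abel, smul_neg]
      have hG0 : (∑ i : Fin k, Λ t • (∑ j, Gf i j t • (x i t - x j t))) = 0 := by
        have h0 : (∑ i, ∑ j, Gf i j t • (x i t - x j t)) = 0 := by
          apply aux_sum_antisym
          intro i j
          rw [hGsym i j, show x i t - x j t = -(x j t - x i t) by abel, smul_neg]
        rw [← Finset.smul_sum, h0, smul_zero]
      rw [hA0, hG0, add_zero]
    rw [hzero] at hsum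
    have h := hsum.const_smul ((k:ℝ)⁻¹)
    simp only [smul_zero] at h
    have hfun : (fun s => (k:ℝ)⁻¹ • ∑ i, v i s) = vbar := by
      funext s; rw [hvbar]
    rw [← hfun]; exact h
  have vbar_const : ∀ (t:ℝ), 0 ≤ t → vbar t = vbar 0 := by
    intro t ht
    rcases eq_or_lt_of_le ht with h0 | h0
    · rw [← h0]
    exact constant_of_has_deriv_right_zero (f := vbar) (a := 0) (b := t)
      (fun s hs => ((hvbar_deriv s hs.1).continuousAt).continuousWithinAt)
      (fun s hs => (hvbar_deriv s hs.1).hasDerivWithinAt)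
      t (Set.mem_Icc.2 ⟨ht, le_refl t⟩)
  set cc := vbar 0 with hcc
  set vt : Fin k → ℝ → EuclideanSpace ℝ (Fin n) := fun i s => v i (max s 0) with hvt
  set xt : Fin k → ℝ → EuclideanSpace ℝ (Fin n) := fun i s => x i (max s 0) with hxt
  have vt_eq : ∀ (i : Fin k) (s:ℝ), 0 ≤ s → vt i s = v i s := by
    intro i s hs; simp only [hvt]; rw [max_eq_left hs]
  have xt_eq : ∀ (i : Fin k) (s:ℝ), 0 ≤ s → xt i s = x i s := by
    intro i s hs; simp only [hxt]; rw [max_eq_left hs]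
  have hmaxc : Continuous (fun s : ℝ => max s 0) := continuous_id.max continuous_const
  have hvtc : ∀ i, Continuous (vt i) := by
    intro i
    rw [continuous_iff_continuousAt]
    intro s
    exact ContinuousAt.comp (hvc i (max s 0) (le_max_right s 0)) hmaxc.continuousAt
  have hxtc : ∀ i, Continuous (xt i) := by
    intro i
    rw [continuous_iff_continuousAt]
    intro s
    exact ContinuousAt.comp (hxc i (max s 0) (le_max_right s 0)) hmaxc.continuousAt
  have hEvq : ∀ (t:ℝ), 0 < t → ∀ u ∈ Set.Ioi (0:ℝ), max u 0 = u := by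
    intro t ht u hu
    exact max_eq_left (le_of_lt hu)
  set y : ℝ → ℝ := fun s => ∑ i, ‖vt i s - cc‖^2 with hy
  set P : ℝ → ℝ := fun s => ∑ i, ∑ j ∈ Finset.univ.filter (fun j => j < i),
    psiF θ d0 d1 (‖xt i s - xt j s‖^2) with hPd
  set SS : ℝ → ℝ := fun s => ∑ i, ∑ j, a i j s * ‖v i s - v j s‖^2 with hSS
  set QQ : ℝ → ℝ := fun s => ∑ i, ∑ j ∈ Finset.univ.filter (fun j => j < i),
    Gf i j s * (2 * ⟪x i s - x j s, v i s - v j s⟫) with hQQ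
  have hyc : Continuous y := by
    apply continuous_finset_sum
    intro i _
    exact ((hvtc i).sub continuous_const).norm.pow 2
  have hynn : ∀ s, 0 ≤ y s := by
    intro s
    exact Finset.sum_nonneg fun i _ => by positivity
  have hy_eq : ∀ (t:ℝ), 0 ≤ t → y t = ∑ i, ‖v i t - cc‖^2 := by
    intro t ht
    simp only [hy]
    exact Finset.sum_congr rfl fun i _ => by rw [vt_eq i t ht]
  have husum0 : ∀ (t:ℝ), 0 ≤ t → (∑ i, (v i t - cc)) = 0 := by
    intro t ht
    have h1 : vbar t = cc := vbar_const t ht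
    rw [hvbar] at h1
    have h2 : (∑ i, v i t) = (k:ℝ) • cc := by
      rw [← h1, smul_smul, mul_inv_cancel₀ hkne, one_smul]
    rw [Finset.sum_sub_distrib, h2, Finset.sum_const, Finset.card_univ, Fintype.card_fin,
      ← Nat.cast_smul_eq_nsmul ℝ, sub_self]
  have hpairs : ∀ (t:ℝ), 0 ≤ t →
      (∑ i, ∑ j, ‖v i t - v j t‖^2) = 2 * k * y t := by
    intro t ht
    have h := aux_norm_sum (fun i => v i t - cc) (husum0 t ht)
    have h2 : (∑ i, ∑ j, ‖v i t - v j t‖^2)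
        = ∑ i, ∑ j, ‖(v i t - cc) - (v j t - cc)‖^2 := by
      exact Finset.sum_congr rfl fun i _ => Finset.sum_congr rfl fun j _ => by
        rw [sub_sub_sub_cancel_right]
    rw [h2, h, hy_eq t ht]
  have hΛy : ∀ (t:ℝ), 0 ≤ t → Λ t = Real.sqrt (y t) := by
    intro t ht
    rw [hΛ]
    congr 1
    have hhalf := aux_half (fun i j => ‖v i t - v j t‖^2)
      (fun i j => congrArg (· ^ 2) (norm_sub_rev _ _)) (fun i => by simp)
    have h2 : (∑ i, ∑ j ∈ Finset.univ.filter (fun j => j < i), ‖v i t - v j t‖^2)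
        = k * y t := by
      have h3 := hpairs t ht
      rw [hhalf] at h3
      linarith
    rw [h2]
    field_simp
  have hy_deriv : ∀ (t:ℝ), 0 < t →
      HasDerivAt y (-(SS t) + Real.sqrt (y t) * QQ t) t := by
    intro t ht
    have ht' : (0:ℝ) ≤ t := le_of_lt ht
    have hyev : y =ᶠ[nhds t] (fun s => ∑ i, ‖v i s - cc‖^2) := by
      filter_upwards [isOpen_Ioi.mem_nhds ht] with u hu
      exact hy_eq u (le_of_lt hu)
    have hterm : ∀ i : Fin k, HasDerivAt (fun s => ‖v i s - cc‖^2)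
        (2 * ⟪(∑ j, a i j t • (v j t - v i t))
          + Λ t • (∑ j, Gf i j t • (x i t - x j t)), v i t - cc⟫) t := by
      intro i
      have h1 := HasDerivAt.inner ℝ ((hv' i t ht').sub_const cc) ((hv' i t ht').sub_const cc)
      have h2 : (fun s => ⟪v i s - cc, v i s - cc⟫) = fun s => ‖v i s - cc‖^2 := by
        funext s; rw [real_inner_self_eq_norm_sq]
      rw [h2] at h1
      refine h1.congr_deriv ?_
      rw [real_inner_comm]; ring
    have hsum := HasDerivAt.fun_sum (fun (i : Fin k) (_ : i ∈ Finset.univ) => hterm i)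
    have hkey := aux_key_alg (fun i j => a i j t) (fun i j => Gf i j t)
      (fun i j => hasym i j t) (fun i j => hGsym i j t)
      (fun i => v i t) (fun i => x i t) cc (Λ t)
    rw [hkey] at hsum
    have hhalfG := aux_half (fun i j => Gf i j t * ⟪x i t - x j t, v i t - v j t⟫)
      (fun i j => by
        show Gf i j t * ⟪x i t - x j t, v i t - v j t⟫
          = Gf j i t * ⟪x j t - x i t, v j t - v i t⟫
        rw [hGsym i j t, show x i t - x j t = -(x j t - x i t) by abel,
          show v i t - v j t = -(v j t - v i t) by abel, inner_neg_neg])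
      (fun i => by simp)
    have hQval : Λ t * (∑ i, ∑ j, Gf i j t * ⟪x i t - x j t, v i t - v j t⟫)
        = Real.sqrt (y t) * QQ t := by
      rw [hΛy t ht', hhalfG]
      congr 1
      simp only [hQQ]
      rw [Finset.mul_sum]
      refine Finset.sum_congr rfl fun i _ => ?_
      rw [Finset.mul_sum]
      refine Finset.sum_congr rfl fun j _ => ?_
      ring
    rw [hQval] at hsum
    have hSval : (∑ i, ∑ j, a i j t * ‖v i t - v j t‖^2) = SS t := by rw [hSS]
    rw [hSval] at hsum
    exact hsum.congr_of_eventuallyEq hyev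
  have hP_deriv : ∀ (t:ℝ), 0 < t →
      (∀ i j : Fin k, i ≠ j → ‖x i t - x j t‖^2 ≠ d0 ∧ ‖x i t - x j t‖^2 ≠ d1) →
      HasDerivAt P (QQ t) t := by
    intro t ht hne
    have ht' : (0:ℝ) ≤ t := le_of_lt ht
    have hPev : P =ᶠ[nhds t] (fun s => ∑ i, ∑ j ∈ Finset.univ.filter (fun j => j < i),
        psiF θ d0 d1 (‖x i s - x j s‖^2)) := by
      filter_upwards [isOpen_Ioi.mem_nhds ht] with u hu
      simp only [hPd]
      exact Finset.sum_congr rfl fun i _ => Finset.sum_congr rfl fun j _ => by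
        rw [xt_eq i u (le_of_lt hu), xt_eq j u (le_of_lt hu)]
    have hterm : ∀ i j : Fin k, j < i →
        HasDerivAt (fun s => psiF θ d0 d1 (‖x i s - x j s‖^2))
          (Gf i j t * (2 * ⟪x i t - x j t, v i t - v j t⟫)) t := by
      intro i j hji
      have hij : i ≠ j := Ne.symm (ne_of_lt hji)
      have h1 := HasDerivAt.comp t
        (psiF_hasDerivAt hθ2 _ (hne i j hij).1 (hne i j hij).2)
        (hr_deriv i j t ht')
      have h2 : (psiF θ d0 d1 ∘ fun s => ‖x i s - x j s‖^2)
          = fun s => psiF θ d0 d1 (‖x i s - x j s‖^2) := rfl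
      rw [h2] at h1
      refine h1.congr_deriv ?_
      simp only [hGf]
      rw [hf0, hf1]
    have hsum := HasDerivAt.fun_sum (u := Finset.univ)
      (fun (i : Fin k) (_ : i ∈ Finset.univ) =>
        HasDerivAt.fun_sum (u := Finset.univ.filter (fun j => j < i))
          (fun (j : Fin k) (hj : j ∈ Finset.univ.filter (fun j => j < i)) =>
            hterm i j (by simpa using (Finset.mem_filter.1 hj).2)))
    have hval : (∑ i, ∑ j ∈ Finset.univ.filter (fun j => j < i),
        Gf i j t * (2 * ⟪x i t - x j t, v i t - v j t⟫)) = QQ t := by rw [hQQ]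
    rw [hval] at hsum
    exact hsum.congr_of_eventuallyEq hPev
  have hPcont : ∀ (s:ℝ),
      (∀ i j : Fin k, i ≠ j → ‖xt i s - xt j s‖^2 ≠ d0 ∧ ‖xt i s - xt j s‖^2 ≠ d1) →
      ContinuousAt P s := by
    intro s hne
    simp only [hPd]
    apply tendsto_finset_sum
    intro i _
    apply tendsto_finset_sum
    intro j hj
    have hij : i ≠ j := Ne.symm (ne_of_lt (by simpa using (Finset.mem_filter.1 hj).2))
    have hrc : ContinuousAt (fun u => ‖xt i u - xt j u‖^2) s :=
      (((hxtc i).sub (hxtc j)).norm.pow 2).continuousAt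
    have h1' : ((‖xt i s - xt j s‖^2 - d1)^(θ-1)) ≠ 0 :=
      pow_ne_zero _ (sub_ne_zero.2 (hne i j hij).2)
    have h0' : ((‖xt i s - xt j s‖^2 - d0)^(θ-1)) ≠ 0 :=
      pow_ne_zero _ (sub_ne_zero.2 (hne i j hij).1)
    have hg1 : ContinuousAt (fun u => ((‖xt i u - xt j u‖^2 - d1)^(θ-1))⁻¹) s :=
      ((hrc.sub continuousAt_const).pow _).inv₀ h1'
    have hg0 : ContinuousAt (fun u => ((‖xt i u - xt j u‖^2 - d0)^(θ-1))⁻¹) s :=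
      ((hrc.sub continuousAt_const).pow _).inv₀ h0'
    have hcomp : ContinuousAt (fun u => psiF θ d0 d1 (‖xt i u - xt j u‖^2)) s :=
      continuousAt_const.mul (hg1.sub hg0)
    exact hcomp
  have energy : ∀ aa bb : ℝ, d0 < aa → aa ≤ bb → bb < d1 → ∀ T:ℝ, 0 ≤ T →
      (∀ t ∈ Set.Icc (0:ℝ) T, ∀ i j : Fin k, i ≠ j → ‖xt i t - xt j t‖^2 ∈ Set.Icc aa bb) →
      ∀ t ∈ Set.Icc (0:ℝ) T,
        Real.sqrt (y t) + ((K/(σ^2+bb)^β) * k) * (∫ s in (0:ℝ)..t, Real.sqrt (y s))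
          ≤ Real.sqrt (y 0) - P 0 / 2 + P t / 2 := by
    intro aa bb haa hab hbb T hT hconf t htmem
    have haa0 : 0 < aa - d0 := by linarith
    have hbb1 : 0 < d1 - bb := by linarith
    have hbb0 : (0:ℝ) < bb := by linarith
    set c0 : ℝ := K/(σ^2+bb)^β with hc0d
    have hc0 : 0 < c0 := div_pos hK (Real.rpow_pos_of_pos (by positivity) β)
    set Cg : ℝ := ((aa-d0)^θ)⁻¹ + ((d1-bb)^θ)⁻¹ with hCgd
    have hCgpos : 0 < Cg := add_pos (inv_pos.2 (pow_pos haa0 _)) (inv_pos.2 (pow_pos hbb1 _))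
    set CC : ℝ := (k:ℝ)^2 * (4 * Cg * Real.sqrt bb) with hCCd
    have hCC : 0 ≤ CC :=
      mul_nonneg (by positivity)
        (mul_nonneg (mul_nonneg (by norm_num) hCgpos.le) (Real.sqrt_nonneg _))
    have hne' : ∀ s ∈ Set.Icc (0:ℝ) T, ∀ i j : Fin k, i ≠ j →
        ‖x i s - x j s‖^2 ≠ d0 ∧ ‖x i s - x j s‖^2 ≠ d1 := by
      intro s hs i j hij
      have h := hconf s hs i j hij
      rw [xt_eq i s hs.1, xt_eq j s hs.1] at h
      constructor
      · exact ne_of_gt (by have := h.1; linarith)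
      · exact ne_of_lt (by have := h.2; linarith)
    have hnet : ∀ s ∈ Set.Icc (0:ℝ) T, ∀ i j : Fin k, i ≠ j →
        ‖xt i s - xt j s‖^2 ≠ d0 ∧ ‖xt i s - xt j s‖^2 ≠ d1 := by
      intro s hs i j hij
      have h := hne' s hs i j hij
      rwa [← xt_eq i s hs.1, ← xt_eq j s hs.1] at h
    have hrle : ∀ s ∈ Set.Icc (0:ℝ) T, ∀ i j : Fin k, ‖x i s - x j s‖^2 ≤ bb := by
      intro s hs i j
      by_cases hij : i = j
      · subst hij; simp [hbb0.le]
      · have h := (hconf s hs i j hij).2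
        rwa [xt_eq i s hs.1, xt_eq j s hs.1] at h
    have hrge : ∀ s ∈ Set.Icc (0:ℝ) T, ∀ i j : Fin k, i ≠ j → aa ≤ ‖x i s - x j s‖^2 := by
      intro s hs i j hij
      have h := (hconf s hs i j hij).1
      rwa [xt_eq i s hs.1, xt_eq j s hs.1] at h
    have hnx : ∀ s ∈ Set.Icc (0:ℝ) T, ∀ i j : Fin k, ‖x i s - x j s‖ ≤ Real.sqrt bb := by
      intro s hs i j
      have h2 : ‖x i s - x j s‖ = Real.sqrt (‖x i s - x j s‖^2) :=
        (Real.sqrt_sq (norm_nonneg _)).symm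
      rw [h2]; exact Real.sqrt_le_sqrt (hrle s hs i j)
    have hnv : ∀ s:ℝ, 0 ≤ s → ∀ i : Fin k, ‖v i s - cc‖ ≤ Real.sqrt (y s) := by
      intro s hs i
      have h1 : ‖v i s - cc‖^2 ≤ y s := by
        rw [hy_eq s hs]
        exact Finset.single_le_sum (f := fun i => ‖v i s - cc‖^2)
          (fun i _ => by positivity) (Finset.mem_univ i)
      have h2 : ‖v i s - cc‖ = Real.sqrt (‖v i s - cc‖^2) :=
        (Real.sqrt_sq (norm_nonneg _)).symm
      rw [h2]; exact Real.sqrt_le_sqrt h1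
    have hGb : ∀ s ∈ Set.Icc (0:ℝ) T, ∀ i j : Fin k, i ≠ j → |Gf i j s| ≤ Cg := by
      intro s hs i j hij
      have hr0 : aa ≤ ‖x i s - x j s‖^2 := hrge s hs i j hij
      have hr1 : ‖x i s - x j s‖^2 ≤ bb := hrle s hs i j
      have hf0b : f0 (‖x i s - x j s‖^2) ≤ ((aa-d0)^θ)⁻¹ := by
        rw [hf0]
        exact inv_anti₀ (pow_pos haa0 _)
          (pow_le_pow_left₀ haa0.le (by linarith) _)
      have hf0p : 0 < f0 (‖x i s - x j s‖^2) := by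
        rw [hf0]; exact inv_pos.2 (pow_pos (by linarith) _)
      have hf1eq : f1 (‖x i s - x j s‖^2) = ((d1 - ‖x i s - x j s‖^2)^θ)⁻¹ := by
        rw [hf1, show ‖x i s - x j s‖^2 - d1 = -(d1 - ‖x i s - x j s‖^2) by ring,
          hθeven.neg_pow]
      have hf1b : f1 (‖x i s - x j s‖^2) ≤ ((d1-bb)^θ)⁻¹ := by
        rw [hf1eq]
        exact inv_anti₀ (pow_pos hbb1 _)
          (pow_le_pow_left₀ hbb1.le (by linarith) _)
      have hf1p : 0 < f1 (‖x i s - x j s‖^2) := by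
        rw [hf1eq]; exact inv_pos.2 (pow_pos (by linarith) _)
      simp only [hGf]
      calc |f0 (‖x i s - x j s‖^2) - f1 (‖x i s - x j s‖^2)|
          ≤ |f0 (‖x i s - x j s‖^2)| + |f1 (‖x i s - x j s‖^2)| := abs_sub _ _
        _ ≤ Cg := by
            rw [abs_of_pos hf0p, abs_of_pos hf1p, hCgd]
            exact add_le_add hf0b hf1b
    have hQb : ∀ s ∈ Set.Icc (0:ℝ) T, |QQ s| ≤ CC * Real.sqrt (y s) := by
      intro s hs
      have hterm : ∀ i j : Fin k, j < i →
          |Gf i j s * (2 * ⟪x i s - x j s, v i s - v j s⟫)|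
            ≤ Cg * (4 * Real.sqrt bb * Real.sqrt (y s)) := by
        intro i j hji
        have hij : i ≠ j := Ne.symm (ne_of_lt hji)
        rw [abs_mul]
        have h1 : |2 * ⟪x i s - x j s, v i s - v j s⟫|
            ≤ 4 * Real.sqrt bb * Real.sqrt (y s) := by
          rw [abs_mul, abs_two]
          have h2 : |⟪x i s - x j s, v i s - v j s⟫|
              ≤ ‖x i s - x j s‖ * ‖v i s - v j s‖ := abs_real_inner_le_norm _ _
          have h3 : ‖v i s - v j s‖ ≤ 2 * Real.sqrt (y s) := by
            have h4 := norm_sub_le (v i s - cc) (v j s - cc)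
            rw [sub_sub_sub_cancel_right] at h4
            have h5 := hnv s hs.1 i
            have h6 := hnv s hs.1 j
            linarith
          have h6 : ‖x i s - x j s‖ * ‖v i s - v j s‖
              ≤ Real.sqrt bb * (2*Real.sqrt (y s)) :=
            mul_le_mul (hnx s hs i j) h3 (norm_nonneg _) (Real.sqrt_nonneg _)
          nlinarith [abs_nonneg ⟪x i s - x j s, v i s - v j s⟫]
        exact mul_le_mul (hGb s hs i j hij) h1 (abs_nonneg _) hCgpos.le
      have hM : (0:ℝ) ≤ Cg * (4 * Real.sqrt bb * Real.sqrt (y s)) :=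
        mul_nonneg hCgpos.le (by positivity)
      calc |QQ s| ≤ ∑ i, |∑ j ∈ Finset.univ.filter (fun j => j < i),
            Gf i j s * (2 * ⟪x i s - x j s, v i s - v j s⟫)| := by
            simp only [hQQ]; exact Finset.abs_sum_le_sum_abs _ _
        _ ≤ ∑ _i : Fin k, (k:ℝ) * (Cg * (4 * Real.sqrt bb * Real.sqrt (y s))) := by
            refine Finset.sum_le_sum fun i _ => ?_
            calc |∑ j ∈ Finset.univ.filter (fun j => j < i),
                  Gf i j s * (2 * ⟪x i s - x j s, v i s - v j s⟫)|
                ≤ ∑ j ∈ Finset.univ.filter (fun j => j < i),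
                  |Gf i j s * (2 * ⟪x i s - x j s, v i s - v j s⟫)| :=
                  Finset.abs_sum_le_sum_abs _ _
              _ ≤ ∑ _j ∈ Finset.univ.filter (fun j => j < i),
                  (Cg * (4 * Real.sqrt bb * Real.sqrt (y s))) :=
                  Finset.sum_le_sum fun j hj =>
                    hterm i j (by simpa using (Finset.mem_filter.1 hj).2)
              _ = ((Finset.univ.filter (fun j : Fin k => j < i)).card : ℝ)
                    * (Cg * (4 * Real.sqrt bb * Real.sqrt (y s))) := by
                  rw [Finset.sum_const, nsmul_eq_mul]
              _ ≤ (k:ℝ) * (Cg * (4 * Real.sqrt bb * Real.sqrt (y s))) := by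
                  refine mul_le_mul_of_nonneg_right ?_ hM
                  have hcard : (Finset.univ.filter (fun j : Fin k => j < i)).card ≤ k := by
                    calc (Finset.univ.filter (fun j : Fin k => j < i)).card
                        ≤ (Finset.univ : Finset (Fin k)).card := Finset.card_filter_le _ _
                      _ = k := by simp
                  exact_mod_cast hcard
        _ = CC * Real.sqrt (y s) := by
            rw [Finset.sum_const, Finset.card_univ, Fintype.card_fin, nsmul_eq_mul, hCCd]
            ring
    have hSb : ∀ s ∈ Set.Icc (0:ℝ) T, 2*(c0*(k:ℝ))*(y s) ≤ SS s := by
      intro s hs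
      have hterm : ∀ i j : Fin k, c0 * ‖v i s - v j s‖^2 ≤ a i j s * ‖v i s - v j s‖^2 := by
        intro i j
        have hrpos : (0:ℝ) < (σ^2 + ‖x i s - x j s‖^2)^β :=
          Real.rpow_pos_of_pos (by positivity) β
        have hbpos : (0:ℝ) < (σ^2 + bb)^β := Real.rpow_pos_of_pos (by positivity) β
        have hrpow : (σ^2 + ‖x i s - x j s‖^2)^β ≤ (σ^2+bb)^β :=
          Real.rpow_le_rpow (by positivity) (by linarith [hrle s hs i j]) hβ0.le
        have hale : c0 ≤ a i j s := by
          rw [ha, hc0d, div_le_div_iff₀ hbpos hrpos]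
          exact mul_le_mul_of_nonneg_left hrpow hK.le
        exact mul_le_mul_of_nonneg_right hale (by positivity)
      have h1 : (∑ i, ∑ j, c0 * ‖v i s - v j s‖^2) ≤ SS s := by
        simp only [hSS]
        exact Finset.sum_le_sum fun i _ => Finset.sum_le_sum fun j _ => hterm i j
      have h2 : (∑ i, ∑ j, c0 * ‖v i s - v j s‖^2) = 2*(c0*(k:ℝ))*(y s) := by
        have h3 : (∑ i, ∑ j, c0 * ‖v i s - v j s‖^2)
            = c0 * ∑ i, ∑ j, ‖v i s - v j s‖^2 := by
          rw [Finset.mul_sum]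
          exact Finset.sum_congr rfl fun i _ => by rw [Finset.mul_sum]
        rw [h3, hpairs s hs.1]
        ring
      linarith
    have hmain : ∀ ε:ℝ, 0 < ε →
        Real.sqrt (y t) + (c0*(k:ℝ))*(∫ s in (0:ℝ)..t, Real.sqrt (y s))
          ≤ Real.sqrt (y 0) - P 0/2 + P t/2 + ε*(1+(c0*(k:ℝ)+CC/2)*t) := by
      intro ε hε
      set z : ℝ → ℝ := fun u => Real.sqrt (y u + ε^2) with hzdef
      have hzc : Continuous z := Real.continuous_sqrt.comp (hyc.add continuous_const)
      set I : ℝ → ℝ := fun u => ∫ s in (0:ℝ)..u, z s with hIdef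
      have hI : ∀ u : ℝ, HasDerivAt I (z u) u := by
        intro u
        exact intervalIntegral.integral_hasDerivAt_right
          (hzc.intervalIntegrable _ _)
          (hzc.stronglyMeasurableAtFilter _ _)
          hzc.continuousAt
      have hIc : Continuous I := by
        have hd : Differentiable ℝ I := fun u => (hI u).differentiableAt
        exact hd.continuous
      have hderiv : ∀ u ∈ Set.Ioo (0:ℝ) T, HasDerivAt
          (fun u => z u + (c0*(k:ℝ))*(I u) - P u/2 - ((c0*(k:ℝ)+CC/2)*ε)*u)
          ((-(SS u) + Real.sqrt (y u) * QQ u)/(2 * z u)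
            + (c0*(k:ℝ))*(z u) - QQ u/2 - (c0*(k:ℝ)+CC/2)*ε) u := by
        intro u hu
        have hu0 : (0:ℝ) < u := hu.1
        have huIcc : u ∈ Set.Icc (0:ℝ) T := ⟨hu.1.le, hu.2.le⟩
        have hypos : 0 < y u + ε^2 := by
          have := hynn u; positivity
        have hz1 : HasDerivAt z
            ((-(SS u) + Real.sqrt (y u) * QQ u)/(2 * Real.sqrt (y u + ε^2))) u :=
          ((hy_deriv u hu0).add_const (ε^2)).sqrt (ne_of_gt hypos)
        have hP1 : HasDerivAt P (QQ u) u := hP_deriv u hu0 (hne' u huIcc)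
        have hlin : HasDerivAt (fun w : ℝ => ((c0*(k:ℝ)+CC/2)*ε)*w)
            ((c0*(k:ℝ)+CC/2)*ε) u := by
          simpa using (hasDerivAt_id u).const_mul ((c0*(k:ℝ)+CC/2)*ε)
        exact ((hz1.add ((hI u).const_mul (c0*(k:ℝ)))).sub (hP1.div_const 2)).sub hlin
      have hanti : AntitoneOn
          (fun u => z u + (c0*(k:ℝ))*(I u) - P u/2 - ((c0*(k:ℝ)+CC/2)*ε)*u)
          (Set.Icc 0 T) := by
        apply antitoneOn_of_deriv_nonpos (convex_Icc 0 T)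
        · apply ContinuousOn.sub
          apply ContinuousOn.sub
          · exact (hzc.continuousOn.add ((continuous_const.mul hIc).continuousOn))
          · intro u hu
            exact ((hPcont u (hnet u hu)).div_const 2).continuousWithinAt
          · exact (continuous_const.mul continuous_id).continuousOn
        · intro u hu
          rw [interior_Icc] at hu
          exact ((hderiv u hu).differentiableAt).differentiableWithinAt
        · intro u hu
          rw [interior_Icc] at hu
          rw [(hderiv u hu).deriv]
          have huIcc : u ∈ Set.Icc (0:ℝ) T := ⟨hu.1.le, hu.2.le⟩
          have hynn' : 0 ≤ y u := hynn u
          have hyeps : (0:ℝ) ≤ y u + ε^2 := by positivity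
          have hsq : Real.sqrt (y u)^2 = y u := Real.sq_sqrt hynn'
          have hz2 : (z u)^2 = Real.sqrt (y u)^2 + ε^2 := by
            simp only [hzdef]
            rw [Real.sq_sqrt hyeps, hsq]
          have hsz : Real.sqrt (y u) ≤ z u :=
            Real.sqrt_le_sqrt (by nlinarith [sq_nonneg ε])
          have hzε : ε ≤ z u := by
            have h0 : ε = Real.sqrt (ε^2) := (Real.sqrt_sq hε.le).symm
            rw [h0]
            exact Real.sqrt_le_sqrt (by linarith)
          have harith := aux_arith (SS u) (QQ u) (c0*(k:ℝ)) CC ε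
            (Real.sqrt (y u)) (z u) hε (Real.sqrt_nonneg _) hsz hz2 hzε
            (by rw [hsq]; exact hSb u huIcc)
            (hQb u huIcc)
            (mul_nonneg hc0.le hk0.le) hCC
          linarith [harith]
      have hht := hanti (Set.left_mem_Icc.2 hT) htmem htmem.1
      simp only at hht
      have hI0 : I 0 = 0 := intervalIntegral.integral_same
      rw [hI0] at hht
      have hz0 : z 0 ≤ Real.sqrt (y 0) + ε := by
        have h2 : y 0 + ε^2 ≤ (Real.sqrt (y 0) + ε)^2 := by
          nlinarith [Real.sq_sqrt (hynn 0), Real.sqrt_nonneg (y 0)]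
        calc z 0 ≤ Real.sqrt ((Real.sqrt (y 0) + ε)^2) := Real.sqrt_le_sqrt h2
          _ = Real.sqrt (y 0) + ε := Real.sqrt_sq (by positivity)
      have hsyz : Real.sqrt (y t) ≤ z t :=
        Real.sqrt_le_sqrt (by nlinarith [sq_nonneg ε, hynn t])
      have hIz : (∫ s in (0:ℝ)..t, Real.sqrt (y s)) ≤ I t := by
        simp only [hIdef]
        apply intervalIntegral.integral_mono_on htmem.1
          ((Real.continuous_sqrt.comp hyc).intervalIntegrable _ _)
          (hzc.intervalIntegrable _ _)
        intro u hu
        exact Real.sqrt_le_sqrt (by nlinarith [sq_nonneg ε, hynn u])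
      have hIz' : (c0*(k:ℝ))*(∫ s in (0:ℝ)..t, Real.sqrt (y s)) ≤ (c0*(k:ℝ))*(I t) :=
        mul_le_mul_of_nonneg_left hIz (mul_nonneg hc0.le hk0.le)
      have hεt : ((c0*(k:ℝ)+CC/2)*ε)*t = ε*((c0*(k:ℝ)+CC/2)*t) := by ring
      linarith [hht, hz0, hsyz, hIz']
    apply le_of_forall_pos_le_add
    intro ε' hε'
    have hKp : (0:ℝ) ≤ c0*(k:ℝ)+CC/2 := by
      have := mul_nonneg hc0.le hk0.le
      linarith
    have hden : (0:ℝ) < 1 + (c0*(k:ℝ)+CC/2)*t := by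
      nlinarith [mul_nonneg hKp htmem.1]
    have hfin := hmain (ε'/(1+(c0*(k:ℝ)+CC/2)*t)) (div_pos hε' hden)
    rw [div_mul_cancel₀ _ (ne_of_gt hden)] at hfin
    linarith
  have hθ1 : (0:ℝ) < (θ:ℝ) - 1 := by
    have h2' : (2:ℝ) ≤ (θ:ℝ) := by exact_mod_cast hθ2
    linarith
  have hinit' : ∀ i j : Fin k, i ≠ j →
      d0 < ‖xt i 0 - xt j 0‖^2 ∧ ‖xt i 0 - xt j 0‖^2 < d1 := by
    intro i j hij
    rw [xt_eq i 0 le_rfl, xt_eq j 0 le_rfl]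
    exact hinit i j hij
  set B0 : ℝ := P 0 - 2*Real.sqrt (y 0) with hB0d
  set Po : Finset (Fin k × Fin k) := Finset.univ.filter (fun p => p.1 ≠ p.2) with hPo
  have hPone : Po.Nonempty := by
    refine ⟨(⟨1, by omega⟩, ⟨0, by omega⟩), ?_⟩
    simp [hPo, Fin.ext_iff]
  set rmin : ℝ := Po.inf' hPone (fun p => ‖x p.1 0 - x p.2 0‖^2) with hrmind
  set rmax : ℝ := Po.sup' hPone (fun p => ‖x p.1 0 - x p.2 0‖^2) with hrmaxd
  have hPomem : ∀ p : Fin k × Fin k, p ∈ Po ↔ p.1 ≠ p.2 := by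
    intro p; simp [hPo]
  have hrminpos : d0 < rmin := by
    rw [hrmind, Finset.lt_inf'_iff]
    intro p hp
    exact (hinit p.1 p.2 ((hPomem p).1 hp)).1
  have hrmaxlt : rmax < d1 := by
    rw [hrmaxd, Finset.sup'_lt_iff]
    intro p hp
    exact (hinit p.1 p.2 ((hPomem p).1 hp)).2
  have hminmax : rmin ≤ rmax := by
    obtain ⟨p, hp⟩ := hPone
    exact le_trans (Finset.inf'_le _ hp)
      (Finset.le_sup' (fun p : Fin k × Fin k => ‖x p.1 0 - x p.2 0‖^2) hp)
  have hrmin_le : ∀ i j : Fin k, i ≠ j → rmin ≤ ‖x i 0 - x j 0‖^2 := by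
    intro i j hij
    exact Finset.inf'_le (f := fun p : Fin k × Fin k => ‖x p.1 0 - x p.2 0‖^2)
      (b := (i,j)) ((hPomem (i,j)).2 hij)
  have hrmax_ge : ∀ i j : Fin k, i ≠ j → ‖x i 0 - x j 0‖^2 ≤ rmax := by
    intro i j hij
    exact Finset.le_sup' (f := fun p : Fin k × Fin k => ‖x p.1 0 - x p.2 0‖^2)
      (b := (i,j)) ((hPomem (i,j)).2 hij)
  set δ : ℝ := min ((rmin - d0)/2) (min ((d1 - rmax)/2)
    (min 1 ((((θ:ℝ)-1)*(1+|B0|))⁻¹))) with hδd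
  have habs : (0:ℝ) < ((θ:ℝ)-1)*(1+|B0|) := mul_pos hθ1 (by positivity)
  have hδpos : 0 < δ :=
    lt_min (by linarith) (lt_min (by linarith) (lt_min one_pos (inv_pos.2 habs)))
  set aa : ℝ := d0 + δ with haad
  set bb : ℝ := d1 - δ with hbbd
  have haa : d0 < aa := by simp only [haad]; linarith
  have hbb : bb < d1 := by simp only [hbbd]; linarith
  have hδ1 : δ ≤ (rmin - d0)/2 := min_le_left _ _
  have hδ2 : δ ≤ (d1 - rmax)/2 := (min_le_right _ _).trans (min_le_left _ _)
  have hδ3 : δ ≤ 1 := (min_le_right _ _).trans ((min_le_right _ _).trans (min_le_left _ _))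
  have hδ4 : δ ≤ ((((θ:ℝ)-1))*(1+|B0|))⁻¹ :=
    (min_le_right _ _).trans ((min_le_right _ _).trans (min_le_right _ _))
  have haarmin : aa < rmin := by simp only [haad]; linarith
  have hbbrmax : rmax < bb := by simp only [hbbd]; linarith
  have hab : aa ≤ bb := by simp only [haad, hbbd]; linarith
  have hψbound : ∀ r : ℝ, d0 < r → r < d1 → ((r - d0 ≤ δ) ∨ (d1 - r ≤ δ)) →
      psiF θ d0 d1 r < B0 := by
    intro r h0 h1 hcase
    have hle := psiF_le hθ2 hθeven h0 h1
    have hMb : ((θ:ℝ)-1)*(1+|B0|)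
        ≤ max (((r - d0)^(θ-1))⁻¹) (((d1 - r)^(θ-1))⁻¹) := by
      rcases hcase with hc | hc
      · have hw : (0:ℝ) < r - d0 := by linarith
        have h2 : (r - d0)^(θ-1) ≤ δ^(θ-1) := pow_le_pow_left₀ hw.le hc _
        have h3 : δ^(θ-1) ≤ δ := by
          calc δ^(θ-1) ≤ δ^1 := pow_le_pow_of_le_one hδpos.le hδ3 (by omega)
            _ = δ := pow_one δ
        have h4 : (r-d0)^(θ-1) ≤ ((((θ:ℝ)-1))*(1+|B0|))⁻¹ :=
          le_trans h2 (le_trans h3 hδ4)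
        have h5 : ((θ:ℝ)-1)*(1+|B0|) ≤ ((r - d0)^(θ-1))⁻¹ := by
          rw [show ((θ:ℝ)-1)*(1+|B0|) = (((((θ:ℝ)-1))*(1+|B0|))⁻¹)⁻¹ from (inv_inv _).symm]
          exact inv_anti₀ (pow_pos hw _) h4
        exact le_trans h5 (le_max_left _ _)
      · have hw : (0:ℝ) < d1 - r := by linarith
        have h2 : (d1 - r)^(θ-1) ≤ δ^(θ-1) := pow_le_pow_left₀ hw.le hc _
        have h3 : δ^(θ-1) ≤ δ := by
          calc δ^(θ-1) ≤ δ^1 := pow_le_pow_of_le_one hδpos.le hδ3 (by omega)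
            _ = δ := pow_one δ
        have h4 : (d1 - r)^(θ-1) ≤ ((((θ:ℝ)-1))*(1+|B0|))⁻¹ :=
          le_trans h2 (le_trans h3 hδ4)
        have h5 : ((θ:ℝ)-1)*(1+|B0|) ≤ ((d1 - r)^(θ-1))⁻¹ := by
          rw [show ((θ:ℝ)-1)*(1+|B0|) = (((((θ:ℝ)-1))*(1+|B0|))⁻¹)⁻¹ from (inv_inv _).symm]
          exact inv_anti₀ (pow_pos hw _) h4
        exact le_trans h5 (le_max_right _ _)
    have hinv : (0:ℝ) < (((θ:ℝ)-1))⁻¹ := inv_pos.2 hθ1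
    have h6 : psiF θ d0 d1 r ≤ -((((θ:ℝ)-1))⁻¹ * (((θ:ℝ)-1)*(1+|B0|))) := by
      refine le_trans hle ?_
      rw [neg_mul]
      exact neg_le_neg (mul_le_mul_of_nonneg_left hMb hinv.le)
    have h7 : ((((θ:ℝ)-1))⁻¹ * (((θ:ℝ)-1)*(1+|B0|))) = (1+|B0|) :=
      inv_mul_cancel_left₀ (ne_of_gt hθ1) _
    rw [h7] at h6
    have h8 := neg_abs_le B0
    linarith
  set Bad : Set ℝ := {s : ℝ | 0 ≤ s ∧ ∃ p : Fin k × Fin k, p.1 ≠ p.2 ∧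
    ‖xt p.1 s - xt p.2 s‖^2 ∉ Set.Ioo aa bb} with hBadd
  have hBadclosed : IsClosed Bad := by
    have hBeq : Bad = Set.Ici (0:ℝ) ∩ ⋃ p ∈ Po,
        ((fun s => ‖xt p.1 s - xt p.2 s‖^2) ⁻¹' (Set.Ioo aa bb)ᶜ) := by
      ext s
      simp only [hBadd, Set.mem_setOf_eq, Set.mem_inter_iff, Set.mem_Ici]
      constructor
      · rintro ⟨hs, p, hp1, hp2⟩
        refine ⟨hs, Set.mem_iUnion₂.2 ⟨p, (hPomem p).2 hp1, ?_⟩⟩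
        simpa using hp2
      · rintro ⟨hs, hU⟩
        obtain ⟨p, hpPo, hp2⟩ := Set.mem_iUnion₂.1 hU
        simp only [Set.mem_preimage, Set.mem_compl_iff] at hp2
        exact ⟨hs, p, (hPomem p).1 hpPo, hp2⟩
    rw [hBeq]
    refine isClosed_Ici.inter (isClosed_biUnion_finset ?_)
    intro p _
    exact IsClosed.preimage (((hxtc p.1).sub (hxtc p.2)).norm.pow 2)
      (isOpen_Ioo.isClosed_compl)
  have hgoodt : ∀ s:ℝ, 0 ≤ s → s ∉ Bad → ∀ i j : Fin k, i ≠ j →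
      ‖xt i s - xt j s‖^2 ∈ Set.Ioo aa bb := by
    intro s hs hnb i j hij
    by_contra hc
    exact hnb ⟨hs, ⟨(i,j), hij, hc⟩⟩
  have hBadempty : Bad = ∅ := by
    by_contra hne
    have hBadne : Bad.Nonempty := Set.nonempty_iff_ne_empty.2 hne
    have hbdd : BddBelow Bad := ⟨0, fun s hs => hs.1⟩
    set T0 := sInf Bad with hT0d
    have hT0mem : T0 ∈ Bad := hBadclosed.csInf_mem hBadne hbdd
    have hT0nn : 0 ≤ T0 := hT0mem.1
    have h0good : (0:ℝ) ∉ Bad := by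
      intro h
      obtain ⟨-, p, hp, hmem⟩ := h
      refine hmem ⟨?_, ?_⟩
      · calc aa < rmin := haarmin
          _ ≤ ‖x p.1 0 - x p.2 0‖^2 := hrmin_le p.1 p.2 hp
          _ = ‖xt p.1 0 - xt p.2 0‖^2 := by rw [xt_eq p.1 0 le_rfl, xt_eq p.2 0 le_rfl]
      · calc ‖xt p.1 0 - xt p.2 0‖^2 = ‖x p.1 0 - x p.2 0‖^2 := by
              rw [xt_eq p.1 0 le_rfl, xt_eq p.2 0 le_rfl]
          _ ≤ rmax := hrmax_ge p.1 p.2 hp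
          _ < bb := hbbrmax
    have hT0pos : 0 < T0 :=
      lt_of_le_of_ne hT0nn (fun h => h0good (h ▸ hT0mem))
    have hpre : ∀ s:ℝ, 0 ≤ s → s < T0 → ∀ i j : Fin k, i ≠ j →
        ‖xt i s - xt j s‖^2 ∈ Set.Ioo aa bb := by
      intro s hs hsT
      apply hgoodt s hs
      intro hsBad
      exact absurd (csInf_le hbdd hsBad) (not_le.2 hsT)
    have hIccconf : ∀ s ∈ Set.Icc (0:ℝ) T0, ∀ i j : Fin k, i ≠ j →
        ‖xt i s - xt j s‖^2 ∈ Set.Icc aa bb := by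
      intro s hs i j hij
      rcases lt_or_eq_of_le hs.2 with hlt | heq
      · exact Set.Ioo_subset_Icc_self (hpre s hs.1 hlt i j hij)
      · subst heq
        have hcont2 : Continuous (fun u => ‖xt i u - xt j u‖^2) :=
          ((hxtc i).sub (hxtc j)).norm.pow 2
        have htend : Filter.Tendsto (fun u => ‖xt i u - xt j u‖^2)
            (nhdsWithin T0 (Set.Iio T0)) (nhds (‖xt i T0 - xt j T0‖^2)) :=
          (hcont2.continuousAt.tendsto).mono_left nhdsWithin_le_nhds
        have hev : ∀ᶠ u in nhdsWithin T0 (Set.Iio T0),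
            ‖xt i u - xt j u‖^2 ∈ Set.Ioo aa bb := by
          filter_upwards [mem_nhdsWithin_of_mem_nhds (isOpen_Ioi.mem_nhds hT0pos),
            self_mem_nhdsWithin] with u hu1 hu2
          exact hpre u (le_of_lt hu1) hu2 i j hij
        constructor
        · exact ge_of_tendsto htend (hev.mono fun u hu => hu.1.le)
        · exact le_of_tendsto htend (hev.mono fun u hu => hu.2.le)
    have hE := energy aa bb haa hab hbb T0 hT0nn hIccconf T0 (Set.right_mem_Icc.2 hT0nn)
    have hInn : 0 ≤ ∫ s in (0:ℝ)..T0, Real.sqrt (y s) :=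
      intervalIntegral.integral_nonneg hT0nn (fun u _ => Real.sqrt_nonneg _)
    have hbbpos : (0:ℝ) < bb := by linarith
    have hc0kpos : (0:ℝ) ≤ (K/(σ^2+bb)^β) * k :=
      mul_nonneg (le_of_lt (div_pos hK (Real.rpow_pos_of_pos (by positivity) β))) hk0.le
    have hPT0 : B0 ≤ P T0 := by
      have h1 : (0:ℝ) ≤ Real.sqrt (y T0) := Real.sqrt_nonneg _
      have h2 := mul_nonneg hc0kpos hInn
      simp only [hB0d]
      linarith
    obtain ⟨-, p, hpne, hpnot⟩ := hT0mem
    obtain ⟨i0, j0, hlt0, hr0⟩ : ∃ i0 j0 : Fin k, j0 < i0 ∧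
        ‖xt i0 T0 - xt j0 T0‖^2 ∉ Set.Ioo aa bb := by
      rcases lt_or_gt_of_ne hpne with h | h
      · refine ⟨p.2, p.1, h, ?_⟩
        rwa [norm_sub_rev]
      · exact ⟨p.1, p.2, h, hpnot⟩
    have hmem0 : ‖xt i0 T0 - xt j0 T0‖^2 ∈ Set.Icc aa bb :=
      hIccconf T0 (Set.right_mem_Icc.2 hT0nn) i0 j0 (Ne.symm (ne_of_lt hlt0))
    have hnonpos : ∀ i j : Fin k, i ≠ j →
        psiF θ d0 d1 (‖xt i T0 - xt j T0‖^2) ≤ 0 := by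
      intro i j hij
      have hm := hIccconf T0 (Set.right_mem_Icc.2 hT0nn) i j hij
      exact psiF_nonpos hθ2 hθeven (by have := hm.1; simp only [haad] at this; linarith)
        (by have := hm.2; simp only [hbbd] at this; linarith)
    have htermge : B0 ≤ psiF θ d0 d1 (‖xt i0 T0 - xt j0 T0‖^2) := by
      refine le_trans hPT0 ?_
      have h1 : P T0 ≤ ∑ j ∈ Finset.univ.filter (fun j => j < i0),
          psiF θ d0 d1 (‖xt i0 T0 - xt j T0‖^2) := by
        simp only [hPd]
        apply aux_sum_nonpos_le (Finset.mem_univ i0)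
        intro i _
        apply Finset.sum_nonpos
        intro j hj
        exact hnonpos i j (Ne.symm (ne_of_lt (by simpa using (Finset.mem_filter.1 hj).2)))
      refine le_trans h1 ?_
      apply aux_sum_nonpos_le (i := j0) (s := Finset.univ.filter (fun j : Fin k => j < i0))
        (Finset.mem_filter.2 ⟨Finset.mem_univ _, hlt0⟩)
      intro j hj
      exact hnonpos i0 j (Ne.symm (ne_of_lt (by simpa using (Finset.mem_filter.1 hj).2)))
    have hval : ‖xt i0 T0 - xt j0 T0‖^2 = aa ∨ ‖xt i0 T0 - xt j0 T0‖^2 = bb := by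
      rcases hmem0 with ⟨h1, h2⟩
      by_contra hcon
      push_neg at hcon
      exact hr0 ⟨lt_of_le_of_ne h1 (Ne.symm hcon.1), lt_of_le_of_ne h2 hcon.2⟩
    rcases hval with h | h
    · have hb := hψbound aa haa (by simp only [haad]; linarith [hd01, hδ1, hδ2]) (Or.inl (by simp only [haad]; linarith))
      rw [h] at htermge
      linarith
    · have hb := hψbound bb (by simp only [hbbd]; linarith [hd01, hδ1, hδ2]) hbb (Or.inr (by simp only [hbbd]; linarith))
      rw [h] at htermge
      linarith
  have hallgood : ∀ s:ℝ, 0 ≤ s → ∀ i j : Fin k, i ≠ j →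
      ‖xt i s - xt j s‖^2 ∈ Set.Icc aa bb := by
    intro s hs i j hij
    have h := hgoodt s hs (by rw [hBadempty]; exact Set.notMem_empty s) i j hij
    exact Set.Ioo_subset_Icc_self h
  have hbbpos : (0:ℝ) < bb := by linarith
  have hc0k : (0:ℝ) < (K/(σ^2+bb)^β) * k :=
    mul_pos (div_pos hK (Real.rpow_pos_of_pos (by positivity) β)) hk0
  have hboundInt : ∀ T:ℝ, 0 ≤ T → (∫ s in (0:ℝ)..T, Real.sqrt (y s))
      ≤ (Real.sqrt (y 0) - P 0/2)/((K/(σ^2+bb)^β) * k) := by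
    intro T hT
    have hE := energy aa bb haa hab hbb T hT (fun t ht => hallgood t ht.1) T
      (Set.right_mem_Icc.2 hT)
    have hPT : P T ≤ 0 := by
      simp only [hPd]
      apply Finset.sum_nonpos; intro i _
      apply Finset.sum_nonpos; intro j hj
      have hij : i ≠ j := Ne.symm (ne_of_lt (by simpa using (Finset.mem_filter.1 hj).2))
      have hm := hallgood T hT i j hij
      exact psiF_nonpos hθ2 hθeven (by have := hm.1; simp only [haad] at this; linarith)
        (by have := hm.2; simp only [hbbd] at this; linarith)
    have hy0 : (0:ℝ) ≤ Real.sqrt (y T) := Real.sqrt_nonneg _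
    rw [le_div_iff₀ hc0k]
    nlinarith
  have hVy : ∀ s:ℝ, 0 ≤ s → V s = Real.sqrt (y s) := by
    intro s hs
    rw [hV, hy_eq s hs]
    congr 1
    exact Finset.sum_congr rfl fun i _ => by rw [vbar_const s hs]
  have hVnn : ∀ s, 0 ≤ V s := fun s => by rw [hV]; exact Real.sqrt_nonneg _
  have hIoi : MeasureTheory.IntegrableOn V (Set.Ioi (0:ℝ)) := by
    apply MeasureTheory.integrableOn_Ioi_of_intervalIntegral_norm_bounded
      (((Real.sqrt (y 0) - P 0/2)/((K/(σ^2+bb)^β) * k))) 0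
      (b := fun m:ℕ => (m:ℝ)) (l := Filter.atTop)
    · intro m
      have hcont : Continuous (fun s => Real.sqrt (y s)) := Real.continuous_sqrt.comp hyc
      have h1 : MeasureTheory.IntegrableOn (fun s => Real.sqrt (y s))
          (Set.Ioc (0:ℝ) m) := (hcont.intervalIntegrable 0 m).1
      refine h1.congr_fun ?_ measurableSet_Ioc
      intro u hu
      exact (hVy u (le_of_lt hu.1)).symm
    · exact tendsto_natCast_atTop_atTop
    · apply Filter.Eventually.of_forall
      intro m
      have heq : ∫ u in (0:ℝ)..(m:ℝ), ‖V u‖ = ∫ u in (0:ℝ)..(m:ℝ), Real.sqrt (y u) := by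
        apply intervalIntegral.integral_congr
        intro u hu
        have hu' : u ∈ Set.Icc (0:ℝ) (m:ℝ) := by
          rwa [Set.uIcc_of_le (show (0:ℝ) ≤ (m:ℝ) by positivity)] at hu
        show ‖V u‖ = Real.sqrt (y u)
        rw [Real.norm_eq_abs, abs_of_nonneg (hVnn u), hVy u hu'.1]
      rw [heq]
      exact hboundInt m (by positivity)
  rw [integrableOn_Ici_iff_integrableOn_Ioi]
  exact hIoi
end
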